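/- arXiv:1605.08161 — 9 statements merged into one kernel-verified Lean document; each statement's English description precedes it below -/
import Mathlib

section
/- For every negative real number x and integer d ≥ 2, the quantity f(x) := (x/(d-1)) · (Γ_d(x) − 1)/Γ_d(x) satisfies f(x) > 1, where Γ_d(x) := ∫_x^0 (t/x)^{d-1} e^{-t+x} dt. -/
open MeasureTheory intervalIntegral

noncomputable def Ifun (n : ℕ) (x : ℝ) : ℝ :=
  ∫ t in x..0, (t / x) ^ n * Real.exp (-t + x)

lemma Ifun_cont (n : ℕ) (x : ℝ) (hx : x < 0) :
    Continuous fun t : ℝ => (t / x) ^ n * Real.exp (-t + x) := by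
  fun_prop

lemma Ifun_intble (n : ℕ) (x : ℝ) (hx : x < 0) (a b : ℝ) :
    IntervalIntegrable (fun t : ℝ => (t / x) ^ n * Real.exp (-t + x)) volume a b :=
  (Ifun_cont n x hx).intervalIntegrable a b

lemma Ifun_pos (n : ℕ) (x : ℝ) (hx : x < 0) : 0 < Ifun n x := by
  apply intervalIntegral.intervalIntegral_pos_of_pos_on (Ifun_intble n x hx x 0)
  · intro t ht
    have h1 : 0 < t / x := div_pos_of_neg_of_neg ht.2 hx
    positivity
  · exact hx

lemma Ifun_identity (k : ℕ) (x : ℝ) (hx : x < 0) :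
    Ifun (k + 1) x = 1 + ((k + 1 : ℝ) / x) * Ifun k x := by
  have hx0 : x ≠ 0 := ne_of_lt hx
  have hu : ∀ t ∈ Set.uIcc x 0, HasDerivAt (fun t : ℝ => (t / x) ^ (k + 1))
      ((k + 1 : ℝ) * (t / x) ^ k / x) t := by
    intro t _
    have h1 : HasDerivAt (fun t : ℝ => t / x) (1 / x) t := by
      simpa using (hasDerivAt_id t).div_const x
    have := (h1.pow (k + 1))
    refine this.congr_deriv ?_
    push_cast
    ring
  have hv : ∀ t ∈ Set.uIcc x 0, HasDerivAt (fun t : ℝ => -Real.exp (-t + x))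
      (Real.exp (-t + x)) t := by
    intro t _
    have h1 : HasDerivAt (fun t : ℝ => -t + x) (-1) t := by
      simpa using ((hasDerivAt_id t).neg.add_const x)
    have := (h1.exp).neg
    refine this.congr_deriv ?_
    ring
  have hint1 : IntervalIntegrable
      (fun t : ℝ => (k + 1 : ℝ) * (t / x) ^ k / x) volume x 0 := by
    apply Continuous.intervalIntegrable
    fun_prop
  have hint2 : IntervalIntegrable (fun t : ℝ => Real.exp (-t + x)) volume x 0 := by
    apply Continuous.intervalIntegrable
    fun_prop
  have := intervalIntegral.integral_mul_deriv_eq_deriv_mul hu hv hint1 hint2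
  rw [Ifun, this]
  have h0 : ((0 : ℝ) / x) ^ (k + 1) = 0 := by
    simp
  have hx1 : (x / x) ^ (k + 1) = 1 := by
    rw [div_self hx0]; simp
  rw [h0, hx1]
  have hJ : (∫ t in x..0, (k + 1 : ℝ) * (t / x) ^ k / x * -Real.exp (-t + x))
      = -(((k + 1 : ℝ) / x) * Ifun k x) := by
    rw [Ifun, ← intervalIntegral.integral_const_mul, ← intervalIntegral.integral_neg]
    congr 1
    ext t
    ring
  rw [hJ]
  simp only [zero_mul, one_mul, neg_add_cancel, Real.exp_zero, neg_neg]
  ring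

lemma Ifun_strict (k : ℕ) (x : ℝ) (hx : x < 0) : Ifun (k + 1) x < Ifun k x := by
  rw [← sub_pos, Ifun, Ifun, ← intervalIntegral.integral_sub (Ifun_intble k x hx x 0)
    (Ifun_intble (k + 1) x hx x 0)]
  apply intervalIntegral.intervalIntegral_pos_of_pos_on
  · exact ((Ifun_cont k x hx).sub (Ifun_cont (k + 1) x hx)).intervalIntegrable x 0
  · intro t ht
    have h1 : 0 < t / x := div_pos_of_neg_of_neg ht.2 hx
    have h2 : t / x < 1 := by
      rw [div_lt_one_of_neg hx]
      exact ht.1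
    have h3 : (t / x) ^ (k + 1) < (t / x) ^ k :=
      pow_lt_pow_right_of_lt_one₀ h1 h2 (lt_add_one k)
    have h4 : 0 < Real.exp (-t + x) := Real.exp_pos _
    nlinarith
  · exact hx

noncomputable def GammaFun (d : ℕ) (x : ℝ) : ℝ :=
  ∫ t in x..0, (t / x) ^ (d - 1) * Real.exp (-t + x)

theorem gamma_quotient_gt_one (d : ℕ) (hd : 2 ≤ d) (x : ℝ) (hx : x < 0) :
    x / ((d : ℝ) - 1) * ((GammaFun d x - 1) / GammaFun d x) > 1 := by
  obtain ⟨k, rfl⟩ : ∃ k, d = k + 2 := ⟨d - 2, by omega⟩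
  have hG : GammaFun (k + 2) x = Ifun (k + 1) x := rfl
  have hd1 : ((k + 2 : ℕ) : ℝ) - 1 = (k + 1 : ℝ) := by push_cast; ring
  have hposk : 0 < Ifun k x := Ifun_pos k x hx
  have hposk1 : 0 < Ifun (k + 1) x := Ifun_pos (k + 1) x hx
  have hlt : Ifun (k + 1) x < Ifun k x := Ifun_strict k x hx
  have hx0 : x ≠ 0 := ne_of_lt hx
  have hk1 : (k + 1 : ℝ) ≠ 0 := by positivity
  have key : GammaFun (k + 2) x - 1 = (k + 1 : ℝ) / x * Ifun k x := by
    rw [hG, Ifun_identity k x hx]; ring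
  have heq : x / (((k + 2 : ℕ) : ℝ) - 1) * ((GammaFun (k + 2) x - 1) / GammaFun (k + 2) x)
      = Ifun k x / Ifun (k + 1) x := by
    rw [key, hG, hd1]
    field_simp
  rw [heq]
  exact (one_lt_div hposk1).mpr hlt
end

section
/- Let d ≥ 2, R > 0, α < 0, and let μ = (d−2)/2. If k is the smallest positive root of the equation k·I_{μ+1}(kR) + α·I_μ(kR) = 0 (where I_ν denotes the modified Bessel function of the first kind), then for every r ∈ (0,R) one has k·r·I_{μ+1}(kr) + α·R·I_μ(kr) < 0. -/
/-- The modified Bessel function of the first kind `I_ν`, defined by its power series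
`I_ν(x) = ∑_{m≥0} (x/2)^{2m+ν} / (m! Γ(m+ν+1))` (for `x > 0`, real order `ν`). -/
noncomputable def besselI (ν x : ℝ) : ℝ :=
  ∑' m : ℕ, (x / 2) ^ (2 * (m : ℝ) + ν) / ((Nat.factorial m : ℝ) * Real.Gamma ((m : ℝ) + ν + 1))

/-- The auxiliary entire power series `F_ν(t) = ∑ t^m / (m! Γ(m+ν+1))`. -/
noncomputable def besselF (ν t : ℝ) : ℝ :=
  ∑' m : ℕ, t ^ m / ((Nat.factorial m : ℝ) * Real.Gamma ((m : ℝ) + ν + 1))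

lemma gammaAux_pos {ν : ℝ} (hν : 0 ≤ ν) (m : ℕ) : 0 < Real.Gamma ((m : ℝ) + ν + 1) :=
  Real.Gamma_pos_of_pos (by positivity)

lemma gammaAux_lower {ν : ℝ} (hν : 0 ≤ ν) (m : ℕ) :
    (Nat.factorial m : ℝ) * Real.Gamma (ν + 1) ≤ Real.Gamma ((m : ℝ) + ν + 1) := by
  induction m with
  | zero => simp
  | succ n ih =>
    have h1 : ((n : ℝ) + ν + 1) ≠ 0 := by positivity
    have : Real.Gamma (((n : ℝ) + ν + 1) + 1) = ((n : ℝ) + ν + 1) * Real.Gamma ((n : ℝ) + ν + 1) :=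
      Real.Gamma_add_one h1
    have heq : ((n + 1 : ℕ) : ℝ) + ν + 1 = ((n : ℝ) + ν + 1) + 1 := by push_cast; ring
    rw [heq, this]
    have hfac : (Nat.factorial (n + 1) : ℝ) = ((n : ℝ) + 1) * (Nat.factorial n : ℝ) := by
      rw [Nat.factorial_succ]; push_cast; ring
    rw [hfac]
    have h2 : ((n : ℝ) + 1) * ((Nat.factorial n : ℝ) * Real.Gamma (ν + 1)) ≤
        ((n : ℝ) + 1) * Real.Gamma ((n : ℝ) + ν + 1) := by
      apply mul_le_mul_of_nonneg_left ih (by positivity)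
    calc ((n : ℝ) + 1) * (Nat.factorial n : ℝ) * Real.Gamma (ν + 1)
        = ((n : ℝ) + 1) * ((Nat.factorial n : ℝ) * Real.Gamma (ν + 1)) := by ring
      _ ≤ ((n : ℝ) + 1) * Real.Gamma ((n : ℝ) + ν + 1) := h2
      _ ≤ ((n : ℝ) + ν + 1) * Real.Gamma ((n : ℝ) + ν + 1) := by
          apply mul_le_mul_of_nonneg_right (by linarith) (gammaAux_pos hν n).le

lemma besselF_bound {ν : ℝ} (hν : 0 ≤ ν) (T : ℝ) (m : ℕ) {t : ℝ} (ht : |t| ≤ T) :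
    |t ^ m / ((Nat.factorial m : ℝ) * Real.Gamma ((m : ℝ) + ν + 1))| ≤
      T ^ m / (Nat.factorial m : ℝ) * (Real.Gamma (ν + 1))⁻¹ := by
  have hG := gammaAux_pos hν m
  have hGν : 0 < Real.Gamma (ν + 1) := by
    have := Real.Gamma_pos_of_pos (show (0:ℝ) < ν + 1 by linarith); simpa using this
  have hfac : (1 : ℝ) ≤ (Nat.factorial m : ℝ) := by
    exact_mod_cast Nat.one_le_iff_ne_zero.mpr (Nat.factorial_ne_zero m)
  rw [abs_div, abs_pow]
  rw [abs_of_pos (by positivity : (0:ℝ) < (Nat.factorial m : ℝ) * Real.Gamma ((m : ℝ) + ν + 1))]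
  have hT : 0 ≤ T := le_trans (abs_nonneg t) ht
  have hnum : |t| ^ m ≤ T ^ m := pow_le_pow_left₀ (abs_nonneg t) ht m
  have hden : (Nat.factorial m : ℝ) * Real.Gamma (ν + 1) ≤
      (Nat.factorial m : ℝ) * Real.Gamma ((m : ℝ) + ν + 1) := by
    calc (Nat.factorial m : ℝ) * Real.Gamma (ν + 1)
        ≤ Real.Gamma ((m : ℝ) + ν + 1) := gammaAux_lower hν m
      _ ≤ (Nat.factorial m : ℝ) * Real.Gamma ((m : ℝ) + ν + 1) := by
          nlinarith [hG]
  calc |t| ^ m / ((Nat.factorial m : ℝ) * Real.Gamma ((m : ℝ) + ν + 1))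
      ≤ T ^ m / ((Nat.factorial m : ℝ) * Real.Gamma (ν + 1)) := by
        apply div_le_div₀ (by positivity) hnum (by positivity)
        calc (Nat.factorial m : ℝ) * Real.Gamma (ν + 1)
            ≤ Real.Gamma ((m : ℝ) + ν + 1) := gammaAux_lower hν m
          _ ≤ (Nat.factorial m : ℝ) * Real.Gamma ((m : ℝ) + ν + 1) := by nlinarith [hG]
    _ = T ^ m / (Nat.factorial m : ℝ) * (Real.Gamma (ν + 1))⁻¹ := by
        field_simp

lemma besselF_continuousOn {ν : ℝ} (hν : 0 ≤ ν) (T : ℝ) :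
    ContinuousOn (besselF ν) (Metric.closedBall 0 T) := by
  have hGν : 0 < Real.Gamma (ν + 1) :=
    Real.Gamma_pos_of_pos (by linarith)
  apply continuousOn_tsum
    (u := fun m => |T| ^ m / (Nat.factorial m : ℝ) * (Real.Gamma (ν + 1))⁻¹)
  · intro m
    exact ((continuous_pow m).div_const _).continuousOn
  · exact (Real.summable_pow_div_factorial |T|).mul_right _
  · intro m t ht
    simp only [Metric.mem_closedBall, Real.dist_eq, sub_zero] at ht
    have : |t| ≤ |T| := le_trans ht (le_abs_self T)
    exact besselF_bound hν |T| m this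

lemma besselI_eq {ν x : ℝ} (hx : 0 < x) :
    besselI ν x = (x / 2) ^ ν * besselF ν ((x / 2) ^ 2) := by
  unfold besselI besselF
  rw [← tsum_mul_left]
  apply tsum_congr
  intro m
  have hx2 : (0:ℝ) < x / 2 := by linarith
  have h1 : (x / 2) ^ (2 * (m : ℝ) + ν) = (x / 2) ^ (2 * (m : ℝ)) * (x / 2) ^ ν :=
    Real.rpow_add hx2 _ _
  have h2 : (x / 2) ^ (2 * (m : ℝ)) = ((x / 2) ^ 2) ^ m := by
    rw [show (2 * (m : ℝ)) = ((2 * m : ℕ) : ℝ) by push_cast; ring, Real.rpow_natCast, pow_mul]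
  rw [h1, h2]
  ring

lemma besselF_zero {ν : ℝ} (hν : 0 ≤ ν) : besselF ν 0 = (Real.Gamma (ν + 1))⁻¹ := by
  unfold besselF
  rw [tsum_eq_single 0]
  · simp
  · intro m hm
    simp [zero_pow hm]

theorem bessel_combination_neg (d : ℕ) (hd : 2 ≤ d) (R α k : ℝ) (hR : 0 < R) (hα : α < 0)
    (μ : ℝ) (hμ : μ = ((d : ℝ) - 2) / 2)
    (hk : 0 < k) (hroot : k * besselI (μ + 1) (k * R) + α * besselI μ (k * R) = 0)
    (hmin : ∀ k', 0 < k' → k' < k → k' * besselI (μ + 1) (k' * R) + α * besselI μ (k' * R) ≠ 0) :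
    ∀ r ∈ Set.Ioo (0 : ℝ) R, k * r * besselI (μ + 1) (k * r) + α * R * besselI μ (k * r) < 0 := by
  have hμ0 : 0 ≤ μ := by
    rw [hμ]
    have : (2:ℝ) ≤ (d:ℝ) := by exact_mod_cast hd
    linarith
  have hμ10 : 0 ≤ μ + 1 := by linarith
  -- the auxiliary function h
  set h : ℝ → ℝ := fun y => y ^ 2 * R / 2 * besselF (μ + 1) ((y * R / 2) ^ 2)
    + α * besselF μ ((y * R / 2) ^ 2) with hh
  -- relation between the root function and h
  have key : ∀ y : ℝ, 0 < y →
      y * besselI (μ + 1) (y * R) + α * besselI μ (y * R) = (y * R / 2) ^ μ * h y := by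
    intro y hy
    have hyR : 0 < y * R := mul_pos hy hR
    have hyR2 : 0 < y * R / 2 := by linarith
    rw [besselI_eq hyR, besselI_eq hyR]
    have : (y * R / 2 : ℝ) ^ (μ + 1) = (y * R / 2) ^ μ * (y * R / 2) := by
      rw [Real.rpow_add hyR2, Real.rpow_one]
    rw [this, hh]
    have : y * ((y * R / 2) ^ μ * (y * R / 2)) = (y * R / 2) ^ μ * (y ^ 2 * R / 2) := by ring
    ring
  have hT : ∀ y : ℝ, |y| ≤ k → (y * R / 2) ^ 2 ∈ Metric.closedBall (0:ℝ) ((k * R / 2)^2) := by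
    intro y hy
    simp only [Metric.mem_closedBall, Real.dist_eq, sub_zero]
    rw [abs_of_nonneg (sq_nonneg _)]
    have h1 : |y * R / 2| ≤ k * R / 2 := by
      rw [abs_div, abs_mul, abs_of_pos hR, abs_of_pos (by norm_num : (0:ℝ) < 2)]
      have : |y| * R ≤ k * R := mul_le_mul_of_nonneg_right hy hR.le
      linarith
    calc (y * R / 2) ^ 2 = |y * R / 2| ^ 2 := (sq_abs _).symm
      _ ≤ (k * R / 2) ^ 2 := by
          apply pow_le_pow_left₀ (abs_nonneg _) h1
  -- continuity of h on [0, k]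
  have hcont : ContinuousOn h (Set.Icc 0 k) := by
    have hmap : Set.MapsTo (fun y : ℝ => (y * R / 2) ^ 2) (Set.Icc 0 k)
        (Metric.closedBall (0:ℝ) ((k * R / 2)^2)) := by
      intro y hy
      apply hT
      rw [abs_of_nonneg hy.1]
      exact hy.2
    have hc2 : ContinuousOn (fun y : ℝ => (y * R / 2) ^ 2) (Set.Icc 0 k) := by fun_prop
    have hF1 : ContinuousOn (fun y : ℝ => besselF (μ + 1) ((y * R / 2) ^ 2)) (Set.Icc 0 k) :=
      (besselF_continuousOn hμ10 ((k * R / 2)^2)).comp hc2 hmap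
    have hF2 : ContinuousOn (fun y : ℝ => besselF μ ((y * R / 2) ^ 2)) (Set.Icc 0 k) :=
      (besselF_continuousOn hμ0 ((k * R / 2)^2)).comp hc2 hmap
    apply ContinuousOn.add
    · exact (continuousOn_id.pow 2 |>.mul continuousOn_const |>.div_const 2).mul hF1
    · exact continuousOn_const.mul hF2
  -- h 0 < 0
  have hGμ : 0 < Real.Gamma (μ + 1) := Real.Gamma_pos_of_pos (by linarith)
  have hh0 : h 0 < 0 := by
    simp only [hh]
    norm_num
    rw [besselF_zero hμ0]
    exact mul_neg_of_neg_of_pos hα (by positivity)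
  -- h < 0 on [0, k)
  have hneg : ∀ y : ℝ, 0 ≤ y → y < k → h y < 0 := by
    intro y hy0 hyk
    by_contra hcon
    push_neg at hcon
    rcases eq_or_lt_of_le hcon with heq | hlt
    · -- h y = 0
      have hy0' : 0 < y := by
        rcases eq_or_lt_of_le hy0 with h0 | h0
        · exfalso; rw [← h0] at heq; linarith [hh0]
        · exact h0
      exact hmin y hy0' hyk (by rw [key y hy0', ← heq, mul_zero])
    · -- h y > 0 : IVT yields a root in (0, y)
      have hy0' : 0 < y := lt_of_le_of_ne hy0 (by rintro rfl; linarith)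
      have hconty : ContinuousOn h (Set.Icc 0 y) := hcont.mono (Set.Icc_subset_Icc le_rfl hyk.le)
      have hivt := intermediate_value_Ioo hy0'.le hconty
      obtain ⟨z, hz, hz0⟩ := hivt ⟨hh0, hlt⟩
      exact hmin z hz.1 (hz.2.trans hyk) (by rw [key z hz.1, hz0, mul_zero])
  intro r hr
  obtain ⟨hr0, hrR⟩ := hr
  have hkr : 0 < k * r := mul_pos hk hr0
  have hk' : 0 < k * r / R := by positivity
  have hk'k : k * r / R < k := by
    rw [div_lt_iff₀ hR]
    nlinarith
  have hhneg := hneg (k * r / R) hk'.le hk'k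
  have hprod : k * r / R * R = k * r := by field_simp
  -- rewrite the target
  have hkr2 : 0 < k * r / 2 := by linarith
  rw [besselI_eq hkr, besselI_eq hkr]
  have hpow : (k * r / 2 : ℝ) ^ (μ + 1) = (k * r / 2) ^ μ * (k * r / 2) := by
    rw [Real.rpow_add hkr2, Real.rpow_one]
  rw [hpow]
  have harg : (k * r / R * R / 2) ^ 2 = (k * r / 2) ^ 2 := by rw [hprod]
  have hhval : h (k * r / R) = (k * r / R) ^ 2 * R / 2 * besselF (μ + 1) ((k * r / 2) ^ 2)
      + α * besselF μ ((k * r / 2) ^ 2) := by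
    rw [hh]; simp only; rw [harg]
  have hfactor : k * r * ((k * r / 2) ^ μ * (k * r / 2) * besselF (μ + 1) ((k * r / 2) ^ 2))
      + α * R * ((k * r / 2) ^ μ * besselF μ ((k * r / 2) ^ 2))
      = (k * r / 2) ^ μ * R * h (k * r / R) := by
    rw [hhval]
    field_simp
  rw [hfactor]
  have hposμ : 0 < (k * r / 2 : ℝ) ^ μ := Real.rpow_pos_of_pos hkr2 μ
  exact mul_neg_of_pos_of_neg (by positivity) hhneg
end

section
/- For μ > 0 and z > 0, the ratio of modified Bessel functions satisfies I_{μ+1}(z)/I_μ(z) > z / ((μ + 1/2) + sqrt(z² + (μ + 3/2)²)). -/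
namespace AmosAux
open Real Finset


/-- coefficient of the Bessel-type power series -/
noncomputable def G (ν : ℝ) (m : ℕ) : ℝ :=
  1 / ((Nat.factorial m : ℝ) * Real.Gamma ((m : ℝ) + ν + 1))

lemma G_pos {ν : ℝ} (hν : 0 ≤ ν) (m : ℕ) : 0 < G ν m := by
  have h1 : (0:ℝ) < (m:ℝ) + ν + 1 := by positivity
  have := Real.Gamma_pos_of_pos h1
  have h2 : (0:ℝ) < (Nat.factorial m : ℝ) := by exact_mod_cast m.factorial_pos
  unfold G; positivity

lemma Gamma_step {ν : ℝ} (hν : 0 ≤ ν) (m : ℕ) :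
    Real.Gamma ((m:ℝ) + ν + 2) = ((m:ℝ) + ν + 1) * Real.Gamma ((m:ℝ) + ν + 1) := by
  have h1 : ((m:ℝ) + ν + 1) ≠ 0 := by positivity
  have := Real.Gamma_add_one h1
  rw [show (m:ℝ) + ν + 2 = ((m:ℝ) + ν + 1) + 1 by ring, this]

lemma G_succ {ν : ℝ} (hν : 0 ≤ ν) (m : ℕ) :
    G ν (m+1) = G ν m * (1 / (((m:ℝ)+1) * ((m:ℝ) + ν + 1))) := by
  have h1 : (0:ℝ) < (m:ℝ) + ν + 1 := by positivity
  have hg := Real.Gamma_pos_of_pos h1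
  have h2 : (0:ℝ) < (Nat.factorial m : ℝ) := by exact_mod_cast m.factorial_pos
  unfold G
  rw [Nat.factorial_succ]
  push_cast
  rw [show (m:ℝ) + 1 + ν + 1 = ((m:ℝ) + ν + 1) + 1 by ring,
    Real.Gamma_add_one (by positivity)]
  field_simp

lemma summable_term {ν : ℝ} (hν : 0 ≤ ν) {t : ℝ} (ht : 0 ≤ t) :
    Summable (fun m : ℕ => t ^ m * G ν m) := by
  apply summable_of_ratio_norm_eventually_le (r := 1/2) (by norm_num)
  filter_upwards [Filter.eventually_ge_atTop (⌈2*t⌉₊)] with m hm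
  have hGm := G_pos hν m
  have hterm : t ^ (m+1) * G ν (m+1)
      = (t ^ m * G ν m) * (t / (((m:ℝ)+1) * ((m:ℝ) + ν + 1))) := by
    rw [G_succ hν, pow_succ]; ring
  have hmono : 2 * t ≤ (m:ℝ) + 1 := by
    have : (⌈2*t⌉₊ : ℝ) ≤ m := by exact_mod_cast hm
    calc 2*t ≤ (⌈2*t⌉₊ : ℝ) := Nat.le_ceil _
    _ ≤ (m:ℝ) := this
    _ ≤ (m:ℝ) + 1 := by linarith
  have hden : (1:ℝ) ≤ ((m:ℝ) + ν + 1) := by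
    have : (0:ℝ) ≤ (m:ℝ) := m.cast_nonneg
    linarith
  have hratio : t / (((m:ℝ)+1) * ((m:ℝ) + ν + 1)) ≤ 1/2 := by
    rw [div_le_iff₀ (by positivity)]
    nlinarith
  have hT : 0 ≤ t ^ m * G ν m := by positivity
  rw [hterm, Real.norm_eq_abs, Real.norm_eq_abs, abs_of_nonneg hT,
    abs_of_nonneg (by positivity)]
  calc t ^ m * G ν m * (t / (((m:ℝ)+1) * ((m:ℝ) + ν + 1)))
      ≤ t ^ m * G ν m * (1/2) := by
        apply mul_le_mul_of_nonneg_left hratio hT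
  _ = 1/2 * (t ^ m * G ν m) := by ring

/-- the entire part of the Bessel series -/
noncomputable def FF (ν t : ℝ) : ℝ := ∑' m : ℕ, t ^ m * G ν m

lemma FF_pos {ν : ℝ} (hν : 0 ≤ ν) {t : ℝ} (ht : 0 < t) : 0 < FF ν t := by
  apply Summable.tsum_pos (summable_term hν ht.le)
    (fun m => by have := G_pos hν m; positivity) 0
  have := G_pos hν 0; positivity

lemma besselI_eq {ν z : ℝ} (hν : 0 ≤ ν) (hz : 0 < z) :
    besselI ν z = (z/2) ^ ν * FF ν ((z/2)^2) := by
  have hq : (0:ℝ) < z/2 := by linarith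
  unfold besselI FF
  rw [← tsum_mul_left]
  congr 1; funext m
  have h1 : (z/2) ^ (2 * (m:ℝ) + ν) = (z/2) ^ ν * ((z/2)^2) ^ m := by
    rw [Real.rpow_add hq, mul_comm]
    congr 1
    rw [← pow_mul, ← Real.rpow_natCast (z/2) (2*m)]
    push_cast
    ring_nf
  rw [h1, G]
  field_simp

/-- falling factorial with real argument -/
noncomputable def dp (x : ℝ) (k : ℕ) : ℝ := ∏ j ∈ range k, (x - j)

lemma dp_zero (x : ℝ) : dp x 0 = 1 := by simp [dp]

lemma dp_succ (x : ℝ) (k : ℕ) : dp x (k+1) = dp x k * (x - k) := by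
  rw [dp, prod_range_succ]; rfl

lemma dp_succ_left (x : ℝ) (k : ℕ) : dp x (k+1) = x * dp (x-1) k := by
  rw [dp, prod_range_succ']
  simp only [Nat.cast_zero, sub_zero, dp]
  rw [mul_comm]
  congr 1
  apply prod_congr rfl
  intro j _
  push_cast
  ring

lemma dp_pos {x : ℝ} {k : ℕ} (h : ∀ j : ℕ, j < k → 0 < x - j) : 0 < dp x k :=
  prod_pos (fun j hj => h j (mem_range.mp hj))

/-- Vandermonde identity for falling factorials -/
lemma dp_add (x y : ℝ) : ∀ k : ℕ, dp (x+y) k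
    = ∑ p ∈ antidiagonal k, (k.choose p.1 : ℝ) * dp x p.1 * dp y p.2 := by
  intro k
  induction k with
  | zero => simp [dp_zero]
  | succ k ih =>
    have hsplit : ∑ p ∈ antidiagonal (k+1), ((k+1).choose p.1 : ℝ) * dp x p.1 * dp y p.2
        = (∑ p ∈ antidiagonal k, (k.choose p.1 : ℝ) * dp x p.1 * dp y p.2 * (x - p.1))
          + (∑ p ∈ antidiagonal k, (k.choose p.1 : ℝ) * dp x p.1 * dp y p.2 * (y - p.2)) := by
      rw [Finset.Nat.sum_antidiagonal_succ
        (f := fun p => ((k+1).choose p.1 : ℝ) * dp x p.1 * dp y p.2)]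
      have hA : ∑ p ∈ antidiagonal k, ((k+1).choose (p.1+1) : ℝ) * dp x (p.1+1) * dp y p.2
          = (∑ p ∈ antidiagonal k, (k.choose p.1 : ℝ) * dp x (p.1+1) * dp y p.2)
            + (∑ p ∈ antidiagonal k, (k.choose (p.1+1) : ℝ) * dp x (p.1+1) * dp y p.2) := by
        rw [← Finset.sum_add_distrib]
        apply sum_congr rfl
        intro p _
        rw [Nat.choose_succ_succ]
        push_cast
        ring
      rw [hA]
      -- first piece: ∑ C(k,i) dp x (i+1) dp y j = ∑ C(k,i) dp x i dp y j (x - i)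
      have h1 : ∑ p ∈ antidiagonal k, (k.choose p.1 : ℝ) * dp x (p.1+1) * dp y p.2
          = ∑ p ∈ antidiagonal k, (k.choose p.1 : ℝ) * dp x p.1 * dp y p.2 * (x - p.1) := by
        apply sum_congr rfl
        intro p _
        rw [dp_succ]
        ring
      -- second piece plus boundary = ∑ over antidiagonal (k+1) of C(k, i) ...
      have h2 : ((k+1).choose 0 : ℝ) * dp x 0 * dp y (k+1)
            + ∑ p ∈ antidiagonal k, (k.choose (p.1+1) : ℝ) * dp x (p.1+1) * dp y p.2
          = ∑ p ∈ antidiagonal (k+1), (k.choose p.1 : ℝ) * dp x p.1 * dp y p.2 := by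
        rw [Finset.Nat.sum_antidiagonal_succ
          (f := fun p => (k.choose p.1 : ℝ) * dp x p.1 * dp y p.2)]
        simp [dp_zero]
      have h3 : ∑ p ∈ antidiagonal (k+1), (k.choose p.1 : ℝ) * dp x p.1 * dp y p.2
          = ∑ p ∈ antidiagonal k, (k.choose p.1 : ℝ) * dp x p.1 * dp y p.2 * (y - p.2) := by
        rw [Finset.Nat.sum_antidiagonal_succ'
          (f := fun p => (k.choose p.1 : ℝ) * dp x p.1 * dp y p.2)]
        rw [Nat.choose_succ_self]
        push_cast
        rw [zero_mul, zero_mul, zero_add]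
        apply sum_congr rfl
        intro p _
        rw [dp_succ]
        push_cast
        ring
      rw [hA] at *
      linarith [h1, h2, h3]
    rw [hsplit, dp_succ, ih, ← Finset.sum_add_distrib, Finset.sum_mul]
    apply sum_congr rfl
    intro p hp
    have hpk : p.1 + p.2 = k := Finset.HasAntidiagonal.mem_antidiagonal.mp hp
    have : ((p.1:ℝ)) + (p.2:ℝ) = k := by exact_mod_cast hpk
    linear_combination ((k.choose p.1 : ℝ) * dp x p.1 * dp y p.2) * this

lemma Gamma_dp {x : ℝ} : ∀ k : ℕ, 0 < x + 1 - k →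
    Real.Gamma (x+1) = dp x k * Real.Gamma (x + 1 - k) := by
  intro k
  induction k with
  | zero => simp [dp_zero]
  | succ k ih =>
    intro hk
    push_cast at hk ⊢
    have hk' : 0 < x + 1 - k := by linarith
    rw [ih hk', dp_succ]
    have : Real.Gamma (x + 1 - k) = (x - k) * Real.Gamma (x - k) := by
      rw [show x + 1 - k = (x - k) + 1 by ring]
      exact Real.Gamma_add_one (by linarith)
    rw [this, show x + 1 - (k+1) = x - k by ring]
    ring

noncomputable def cc (α β : ℝ) (k : ℕ) : ℝ :=
  ∑ p ∈ antidiagonal k, G α p.1 * G β p.2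

lemma cauchy {α β : ℝ} (hα : 0 ≤ α) (hβ : 0 ≤ β) {t : ℝ} (ht : 0 ≤ t) :
    FF α t * FF β t = ∑' k : ℕ, t ^ k * cc α β k := by
  have hfn : ∀ (ν : ℝ), 0 ≤ ν → Summable (fun m : ℕ => ‖t ^ m * G ν m‖) := by
    intro ν hν
    apply Summable.congr (summable_term hν ht)
    intro m
    rw [Real.norm_eq_abs, abs_of_nonneg (by have := G_pos hν m; positivity)]
  rw [FF, FF, tsum_mul_tsum_eq_tsum_sum_antidiagonal_of_summable_norm (hfn α hα) (hfn β hβ)]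
  congr 1; funext k
  rw [cc, Finset.mul_sum]
  apply sum_congr rfl
  intro p hp
  have hpk : p.1 + p.2 = k := Finset.HasAntidiagonal.mem_antidiagonal.mp hp
  rw [← hpk, pow_add]
  ring

lemma summable_cc {α β : ℝ} (hα : 0 ≤ α) (hβ : 0 ≤ β) {t : ℝ} (ht : 0 ≤ t) :
    Summable (fun k : ℕ => t ^ k * cc α β k) := by
  have hfn : ∀ (ν : ℝ), 0 ≤ ν → Summable (fun m : ℕ => ‖t ^ m * G ν m‖) := by
    intro ν hν
    apply Summable.congr (summable_term hν ht)
    intro m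
    rw [Real.norm_eq_abs, abs_of_nonneg (by have := G_pos hν m; positivity)]
  have := (summable_norm_sum_mul_antidiagonal_of_summable_norm (hfn α hα) (hfn β hβ)).of_norm
  apply this.congr
  intro k
  rw [cc, Finset.mul_sum]
  apply sum_congr rfl
  intro p hp
  have hpk : p.1 + p.2 = k := Finset.HasAntidiagonal.mem_antidiagonal.mp hp
  rw [← hpk, pow_add]
  ring

/-- closed form for the Cauchy coefficients -/
lemma cc_eq {α β : ℝ} (hα : 0 ≤ α) (hβ : 0 ≤ β) (k : ℕ) :
    cc α β k = dp (α+β+2*k) k /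
      ((Nat.factorial k : ℝ) * Real.Gamma (α+k+1) * Real.Gamma (β+k+1)) := by
  have hGα : 0 < Real.Gamma (α+k+1) := Real.Gamma_pos_of_pos (by positivity)
  have hGβ : 0 < Real.Gamma (β+k+1) := Real.Gamma_pos_of_pos (by positivity)
  have hfk : (0:ℝ) < (Nat.factorial k : ℝ) := by exact_mod_cast k.factorial_pos
  have key : ∀ p ∈ antidiagonal k, G α p.1 * G β p.2
      = ((k.choose p.1 : ℝ) * dp (β+k) p.1 * dp (α+k) p.2) /
        ((Nat.factorial k : ℝ) * Real.Gamma (α+k+1) * Real.Gamma (β+k+1)) := by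
    intro p hp
    obtain ⟨i, j⟩ := p
    simp only at *
    have hij : i + j = k := Finset.HasAntidiagonal.mem_antidiagonal.mp hp
    have hik : i ≤ k := by omega
    have hjk : j ≤ k := by omega
    have hcast : (i:ℝ) + (j:ℝ) = (k:ℝ) := by exact_mod_cast hij
    -- Γ(α+k+1) = dp (α+k) j * Γ(α+i+1)
    have hA : Real.Gamma (α+k+1) = dp (α+k) j * Real.Gamma ((i:ℝ) + α + 1) := by
      have h0 : 0 < (α+k) + 1 - j := by
        have : (j:ℝ) ≤ (k:ℝ) := by exact_mod_cast hjk
        linarith [hα]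
      have := Gamma_dp j h0
      rw [show α + (k:ℝ) + 1 = (α+k)+1 by ring, this,
        show (α+k) + 1 - j = (i:ℝ) + α + 1 by linarith]
    have hB : Real.Gamma (β+k+1) = dp (β+k) i * Real.Gamma ((j:ℝ) + β + 1) := by
      have h0 : 0 < (β+k) + 1 - i := by
        have : (i:ℝ) ≤ (k:ℝ) := by exact_mod_cast hik
        linarith [hβ]
      have := Gamma_dp i h0
      rw [show β + (k:ℝ) + 1 = (β+k)+1 by ring, this,
        show (β+k) + 1 - i = (j:ℝ) + β + 1 by linarith]
    have hfact : (k.choose i : ℝ) * (Nat.factorial i : ℝ) * (Nat.factorial j : ℝ)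
        = (Nat.factorial k : ℝ) := by
      rw [← Nat.cast_mul, ← Nat.cast_mul]
      congr 1
      have := Nat.choose_mul_factorial_mul_factorial hik
      rw [show k - i = j by omega] at this
      exact this
    have hGi : 0 < Real.Gamma ((i:ℝ) + α + 1) := Real.Gamma_pos_of_pos (by positivity)
    have hGj : 0 < Real.Gamma ((j:ℝ) + β + 1) := Real.Gamma_pos_of_pos (by positivity)
    have hfi : (0:ℝ) < (Nat.factorial i : ℝ) := by exact_mod_cast i.factorial_pos
    have hfj : (0:ℝ) < (Nat.factorial j : ℝ) := by exact_mod_cast j.factorial_pos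
    have hdpα : 0 < dp (α + (k:ℝ)) j := by
      apply dp_pos
      intro j' hj'
      have h1 : (j':ℝ) < (j:ℝ) := by exact_mod_cast hj'
      have h2 : (j:ℝ) ≤ (k:ℝ) := by exact_mod_cast hjk
      linarith
    have hdpβ : 0 < dp (β + (k:ℝ)) i := by
      apply dp_pos
      intro i' hi'
      have h1 : (i':ℝ) < (i:ℝ) := by exact_mod_cast hi'
      have h2 : (i:ℝ) ≤ (k:ℝ) := by exact_mod_cast hik
      linarith
    rw [G, G, hA, hB]
    rw [div_mul_div_comm, div_eq_div_iff (by positivity) (by positivity)]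
    linear_combination (-(dp (β+(k:ℝ)) i * dp (α+(k:ℝ)) j *
      Real.Gamma ((i:ℝ)+α+1) * Real.Gamma ((j:ℝ)+β+1))) * hfact
  rw [cc, sum_congr rfl key, ← Finset.sum_div]
  congr 1
  rw [show α + β + 2*(k:ℝ) = (β + k) + (α + k) by ring, dp_add]

section Key
variable {ν : ℝ}

/-- shifted coefficient sequence -/
noncomputable def Cc (ν : ℝ) : ℕ → ℝ
  | 0 => 0
  | (m+1) => cc (ν+1) (ν+1) m

lemma dd_zero_pos (hν : 0 < ν) :
    0 < 2 * cc ν ν 0 - (2*ν+1) * cc ν (ν+1) 0 - 2 * Cc ν 0 := by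
  have hν0 : (0:ℝ) ≤ ν := hν.le
  have hg1 : 0 < Real.Gamma (ν+1) := Real.Gamma_pos_of_pos (by linarith)
  have e1 : cc ν ν 0 = 1 / (Real.Gamma (ν+1) * Real.Gamma (ν+1)) := by
    rw [cc_eq hν0 hν0 0]
    norm_num [dp_zero]
  have e2 : cc ν (ν+1) 0 = 1 / (Real.Gamma (ν+1) * ((ν+1) * Real.Gamma (ν+1))) := by
    rw [cc_eq hν0 (by linarith) 0]
    norm_num [dp_zero]
    rw [show Real.Gamma (ν+1+1) = (ν+1) * Real.Gamma (ν+1) from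
      Real.Gamma_add_one (by positivity)]
    field_simp
    ring_nf
    exact Or.inl trivial
  have e3 : Cc ν 0 = 0 := rfl
  rw [e1, e2, e3]
  have heq : 2 * (1 / (Real.Gamma (ν+1) * Real.Gamma (ν+1)))
      - (2*ν+1) * (1 / (Real.Gamma (ν+1) * ((ν+1) * Real.Gamma (ν+1)))) - 2 * 0
      = 1 / ((ν+1) * Real.Gamma (ν+1) ^ 2) := by
    field_simp
    ring
  rw [heq]
  positivity

lemma dd_succ_pos (hν : 0 < ν) (m : ℕ) :
    0 < 2 * cc ν ν (m+1) - (2*ν+1) * cc ν (ν+1) (m+1) - 2 * Cc ν (m+1) := by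
  have hν0 : (0:ℝ) ≤ ν := hν.le
  have hν1 : (0:ℝ) ≤ ν + 1 := by linarith
  have hm1 : (0:ℝ) < (m:ℝ) + 1 := by positivity
  have hg : 0 < Real.Gamma (ν + (m:ℝ) + 2) := Real.Gamma_pos_of_pos (by positivity)
  have hfm : (0:ℝ) < (Nat.factorial m : ℝ) := by exact_mod_cast m.factorial_pos
  have hdp : 0 < dp (2*ν + 2*(m:ℝ) + 2) m := by
    apply dp_pos
    intro j hj
    have : (j:ℝ) < (m:ℝ) := by exact_mod_cast hj
    linarith
  have hfact : ((Nat.factorial (m+1) : ℕ) : ℝ) = ((m:ℝ)+1) * (Nat.factorial m : ℝ) := by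
    rw [Nat.factorial_succ]; push_cast; ring
  have e1 : cc ν ν (m+1) = (dp (2*ν+2*(m:ℝ)+2) m * (ν + ν + (m:ℝ) + 2)) /
      ((((m:ℝ)+1) * (Nat.factorial m : ℝ)) *
        (Real.Gamma (ν+(m:ℝ)+2) * Real.Gamma (ν+(m:ℝ)+2))) := by
    rw [cc_eq hν0 hν0 (m+1),
      show ν + ν + 2*(((m+1:ℕ)):ℝ) = 2*ν+2*(m:ℝ)+2 by push_cast; ring,
      dp_succ, hfact,
      show ν + (((m+1:ℕ)):ℝ) + 1 = ν+(m:ℝ)+2 by push_cast; ring]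
    rw [show 2*ν+2*(m:ℝ)+2 - (m:ℝ) = ν + ν + (m:ℝ) + 2 by ring]
    ring
  have e2 : cc ν (ν+1) (m+1) = ((2*ν+2*(m:ℝ)+3) * dp (2*ν+2*(m:ℝ)+2) m) /
      ((((m:ℝ)+1) * (Nat.factorial m : ℝ)) *
        (Real.Gamma (ν+(m:ℝ)+2) * ((ν+(m:ℝ)+2) * Real.Gamma (ν+(m:ℝ)+2)))) := by
    rw [cc_eq hν0 hν1 (m+1),
      show ν + (ν+1) + 2*(((m+1:ℕ)):ℝ) = 2*ν+2*(m:ℝ)+3 by push_cast; ring,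
      show (2*ν+2*(m:ℝ)+3 : ℝ) = (2*ν+2*(m:ℝ)+2) + 1 by ring,
      dp_succ_left, hfact,
      show ν + (((m+1:ℕ)):ℝ) + 1 = ν+(m:ℝ)+2 by push_cast; ring,
      show ν + 1 + (((m+1:ℕ)):ℝ) + 1 = (ν+(m:ℝ)+2) + 1 by push_cast; ring,
      Real.Gamma_add_one (by positivity),
      show (2*ν+2*(m:ℝ)+2) + 1 - 1 = 2*ν+2*(m:ℝ)+2 by ring]
    ring
  have e3 : Cc ν (m+1) = dp (2*ν+2*(m:ℝ)+2) m /
      (((Nat.factorial m : ℝ)) * (Real.Gamma (ν+(m:ℝ)+2) * Real.Gamma (ν+(m:ℝ)+2))) := by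
    show cc (ν+1) (ν+1) m = _
    rw [cc_eq hν1 hν1 m,
      show ν + 1 + (ν+1) + 2*((m:ℕ):ℝ) = 2*ν+2*(m:ℝ)+2 by push_cast; ring,
      show ν + 1 + ((m:ℕ):ℝ) + 1 = ν+(m:ℝ)+2 by push_cast; ring]
    ring
  rw [e1, e2, e3]
  have heq : (dp (2*ν+2*(m:ℝ)+2) m * (ν + ν + (m:ℝ) + 2)) * 2 /
      ((((m:ℝ)+1) * (Nat.factorial m : ℝ)) *
        (Real.Gamma (ν+(m:ℝ)+2) * Real.Gamma (ν+(m:ℝ)+2)))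
      - (2*ν+1) * (((2*ν+2*(m:ℝ)+3) * dp (2*ν+2*(m:ℝ)+2) m) /
      ((((m:ℝ)+1) * (Nat.factorial m : ℝ)) *
        (Real.Gamma (ν+(m:ℝ)+2) * ((ν+(m:ℝ)+2) * Real.Gamma (ν+(m:ℝ)+2)))))
      - 2 * (dp (2*ν+2*(m:ℝ)+2) m /
      (((Nat.factorial m : ℝ)) * (Real.Gamma (ν+(m:ℝ)+2) * Real.Gamma (ν+(m:ℝ)+2))))
      = (2*ν+1) * dp (2*ν+2*(m:ℝ)+2) m /
        ((((m:ℝ)+1) * (Nat.factorial m : ℝ)) * Real.Gamma (ν+(m:ℝ)+2) ^ 2 * (ν+(m:ℝ)+2)) := by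
    field_simp
    ring
  rw [show (dp (2*ν+2*(m:ℝ)+2) m * (ν + ν + (m:ℝ) + 2)) * 2 /
      ((((m:ℝ)+1) * (Nat.factorial m : ℝ)) *
        (Real.Gamma (ν+(m:ℝ)+2) * Real.Gamma (ν+(m:ℝ)+2)))
      = 2 * ((dp (2*ν+2*(m:ℝ)+2) m * (ν + ν + (m:ℝ) + 2)) /
      ((((m:ℝ)+1) * (Nat.factorial m : ℝ)) *
        (Real.Gamma (ν+(m:ℝ)+2) * Real.Gamma (ν+(m:ℝ)+2)))) by ring] at heq
  rw [heq]
  positivity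

/-- the key quadratic inequality -/
lemma key (hν : 0 < ν) {t : ℝ} (ht : 0 < t) :
    (2*ν+1) * (FF ν t * FF (ν+1) t) + 2 * t * (FF (ν+1) t * FF (ν+1) t)
      < 2 * (FF ν t * FF ν t) := by
  have hν0 : (0:ℝ) ≤ ν := hν.le
  have hν1 : (0:ℝ) ≤ ν + 1 := by linarith
  have ht0 : (0:ℝ) ≤ t := ht.le
  have s1 : Summable (fun k : ℕ => t ^ k * cc ν ν k) := summable_cc hν0 hν0 ht0
  have s2 : Summable (fun k : ℕ => t ^ k * cc ν (ν+1) k) := summable_cc hν0 hν1 ht0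
  have s3' : Summable (fun k : ℕ => t ^ k * cc (ν+1) (ν+1) k) := summable_cc hν1 hν1 ht0
  have s3 : Summable (fun k : ℕ => t ^ k * Cc ν k) := by
    apply (summable_nat_add_iff 1).mp
    apply Summable.congr (s3'.mul_left t)
    intro k
    show t * (t ^ k * cc (ν+1) (ν+1) k) = t ^ (k+1) * Cc ν (k+1)
    rw [pow_succ]
    show _ = t ^ k * t * cc (ν+1) (ν+1) k
    ring
  have hshift : t * (FF (ν+1) t * FF (ν+1) t) = ∑' k : ℕ, t ^ k * Cc ν k := by
    rw [cauchy hν1 hν1 ht0, ← tsum_mul_left, Summable.tsum_eq_zero_add s3]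
    show (∑' k : ℕ, t * (t ^ k * cc (ν+1) (ν+1) k))
        = t ^ 0 * Cc ν 0 + ∑' k : ℕ, t ^ (k+1) * Cc ν (k+1)
    rw [show t ^ 0 * Cc ν 0 = 0 by simp [Cc], zero_add]
    congr 1; funext k
    show t * (t ^ k * cc (ν+1) (ν+1) k) = t ^ (k+1) * cc (ν+1) (ν+1) k
    rw [pow_succ]; ring
  have hmain : 0 < ∑' k : ℕ, (2 * (t ^ k * cc ν ν k)
      - ((2*ν+1) * (t ^ k * cc ν (ν+1) k) + 2 * (t ^ k * Cc ν k))) := by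
    have hsum : Summable (fun k : ℕ => 2 * (t ^ k * cc ν ν k)
        - ((2*ν+1) * (t ^ k * cc ν (ν+1) k) + 2 * (t ^ k * Cc ν k))) :=
      (s1.mul_left 2).sub ((s2.mul_left _).add (s3.mul_left 2))
    apply Summable.tsum_pos hsum _ 0
    · have h0 := dd_zero_pos hν
      simp only [pow_zero, one_mul]
      linarith [h0]
    · intro k
      have hdd : 0 < 2 * cc ν ν k - (2*ν+1) * cc ν (ν+1) k - 2 * Cc ν k := by
        cases k with
        | zero => exact dd_zero_pos hν
        | succ m => exact dd_succ_pos hν m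
      have htk : 0 < t ^ k := by positivity
      have : 2 * (t ^ k * cc ν ν k) - ((2*ν+1) * (t ^ k * cc ν (ν+1) k)
          + 2 * (t ^ k * Cc ν k))
          = t ^ k * (2 * cc ν ν k - (2*ν+1) * cc ν (ν+1) k - 2 * Cc ν k) := by ring
      rw [this]
      positivity
  rw [Summable.tsum_sub (s1.mul_left 2) ((s2.mul_left _).add (s3.mul_left 2)),
    Summable.tsum_add (s2.mul_left _) (s3.mul_left 2), tsum_mul_left, tsum_mul_left, tsum_mul_left]
    at hmain
  rw [cauchy hν0 hν0 ht0, cauchy hν0 hν1 ht0]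
  have h2 : 2 * t * (FF (ν+1) t * FF (ν+1) t) = 2 * ∑' k : ℕ, t ^ k * Cc ν k := by
    rw [← hshift]; ring
  rw [h2]
  linarith [hmain]

end Key

/-- the three-term recurrence -/
lemma recurrence {μ : ℝ} (hμ : 0 < μ) {t : ℝ} (ht : 0 < t) :
    FF μ t = t * FF (μ+2) t + (μ+1) * FF (μ+1) t := by
  have hμ0 : (0:ℝ) ≤ μ := hμ.le
  have hμ1 : (0:ℝ) ≤ μ + 1 := by linarith
  have hμ2 : (0:ℝ) ≤ μ + 2 := by linarith
  have ht0 : (0:ℝ) ≤ t := ht.le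
  have s0 : Summable (fun m : ℕ => t ^ m * G μ m) := summable_term hμ0 ht0
  have s2 : Summable (fun m : ℕ => t * (t ^ m * G (μ+2) m)) :=
    (summable_term hμ2 ht0).mul_left t
  have s1 : Summable (fun m : ℕ => (μ+1) * (t ^ m * G (μ+1) m)) :=
    (summable_term hμ1 ht0).mul_left (μ+1)
  -- termwise identity : G μ (m+1) = G (μ+2) m + (μ+1) * G (μ+1) (m+1)
  have hG : ∀ m : ℕ, G μ (m+1) = G (μ+2) m + (μ+1) * G (μ+1) (m+1) := by
    intro m
    have h1 : (0:ℝ) < (m:ℝ) + μ + 2 := by positivity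
    have hg : 0 < Real.Gamma ((m:ℝ) + μ + 2) := Real.Gamma_pos_of_pos h1
    have hfm : (0:ℝ) < (Nat.factorial m : ℝ) := by exact_mod_cast m.factorial_pos
    have hfact : ((Nat.factorial (m+1) : ℕ) : ℝ) = ((m:ℝ)+1) * (Nat.factorial m : ℝ) := by
      rw [Nat.factorial_succ]; push_cast; ring
    unfold G
    rw [hfact,
      show ((m+1:ℕ):ℝ) + μ + 1 = (m:ℝ) + μ + 2 by push_cast; ring,
      show ((m:ℕ):ℝ) + (μ+2) + 1 = ((m:ℝ) + μ + 2) + 1 by push_cast; ring,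
      show ((m+1:ℕ):ℝ) + (μ+1) + 1 = ((m:ℝ) + μ + 2) + 1 by push_cast; ring,
      Real.Gamma_add_one (by positivity)]
    field_simp
    ring
  -- now assemble
  have lhs_split : FF μ t = G μ 0 + ∑' m : ℕ, t ^ (m+1) * G μ (m+1) := by
    rw [FF, Summable.tsum_eq_zero_add s0, pow_zero, one_mul]
  have rhs1 : t * FF (μ+2) t = ∑' m : ℕ, t ^ (m+1) * G (μ+2) m := by
    rw [FF, ← tsum_mul_left]
    congr 1; funext m
    rw [pow_succ]; ring
  have rhs2 : (μ+1) * FF (μ+1) t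
      = (μ+1) * G (μ+1) 0 + ∑' m : ℕ, t ^ (m+1) * ((μ+1) * G (μ+1) (m+1)) := by
    rw [FF, ← tsum_mul_left, Summable.tsum_eq_zero_add s1, pow_zero]
    have hc : ∀ m : ℕ, (μ+1) * (t ^ (m+1) * G (μ+1) (m+1))
        = t ^ (m+1) * ((μ+1) * G (μ+1) (m+1)) := fun m => by ring
    rw [tsum_congr hc]
    ring
  have hzero : G μ 0 = (μ+1) * G (μ+1) 0 := by
    have hg : 0 < Real.Gamma (μ+1) := Real.Gamma_pos_of_pos (by positivity)
    unfold G
    norm_num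
    rw [show Real.Gamma (μ+1+1) = (μ+1) * Real.Gamma (μ+1) from
      Real.Gamma_add_one (by positivity)]
    field_simp
  have htail : ∑' m : ℕ, t ^ (m+1) * G μ (m+1)
      = (∑' m : ℕ, t ^ (m+1) * G (μ+2) m)
        + ∑' m : ℕ, t ^ (m+1) * ((μ+1) * G (μ+1) (m+1)) := by
    have sa : Summable (fun m : ℕ => t ^ (m+1) * G (μ+2) m) := by
      apply Summable.congr s2
      intro m
      rw [pow_succ]; ring
    have sb : Summable (fun m : ℕ => t ^ (m+1) * ((μ+1) * G (μ+1) (m+1))) := by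
      have h := ((summable_nat_add_iff 1).mpr (summable_term hμ1 ht0)).mul_left (μ+1)
      apply Summable.congr h
      intro m
      show (μ+1) * (t ^ (m+1) * G (μ+1) (m+1)) = _
      ring
    rw [← Summable.tsum_add sa sb]
    congr 1; funext m
    rw [hG m]
    ring
  rw [lhs_split, rhs1, rhs2, htail, hzero]
  ring


end AmosAux

open AmosAux
set_option maxHeartbeats 1000000 in
/-- Amos' lower bound (with Segura's strict inequality) for the Bessel quotient
`I_{μ+1}(z)/I_μ(z)`. -/
theorem besselI_ratio_lower_bound (μ z : ℝ) (hμ : 0 < μ) (hz : 0 < z) :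
    besselI (μ + 1) z / besselI μ z >
      z / ((μ + 1 / 2) + Real.sqrt (z ^ 2 + (μ + 3 / 2) ^ 2)) := by
  have hq : (0:ℝ) < z/2 := by linarith
  set t : ℝ := (z/2)^2 with ht_def
  have ht : 0 < t := by positivity
  have hz2 : z^2 = 4*t := by rw [ht_def]; ring
  set f0 := FF μ t with hf0_def
  set f1 := FF (μ+1) t with hf1_def
  set f2 := FF (μ+2) t with hf2_def
  have hf0 : 0 < f0 := FF_pos hμ.le ht
  have hf1 : 0 < f1 := FF_pos (by linarith) ht
  have hf2 : 0 < f2 := FF_pos (by linarith) ht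
  have hrec : f0 = t * f2 + (μ+1) * f1 := recurrence hμ ht
  have hkey : (2*(μ+1)+1) * (f1 * f2) + 2 * t * (f2 * f2) < 2 * (f1 * f1) := by
    have := key (show (0:ℝ) < μ+1 by linarith) ht
    rw [show μ + 1 + 1 = μ + 2 by ring] at this
    exact this
  set s := Real.sqrt (z ^ 2 + (μ + 3/2) ^ 2) with hs_def
  have hs0 : 0 ≤ s := Real.sqrt_nonneg _
  have hs2 : s^2 = z^2 + (μ + 3/2)^2 := Real.sq_sqrt (by positivity)
  set a : ℝ := μ + 3/2 with ha_def
  have ha : 0 < a := by rw [ha_def]; linarith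
  have hsa : a < s := by nlinarith [hs2, hz2, ht, hs0, ha]
  have hD : 0 < (μ + 1/2) + s := by linarith
  have hkey' : 2*a*(f1*f2) + 2*t*(f2*f2) < 2*(f1*f1) := by
    rw [ha_def]; linarith [hkey]
  -- h1 : a * f2 < f1
  have h1 : a * f2 < f1 := by
    nlinarith [hkey', hf1, hf2, mul_pos ht (mul_pos hf2 hf2)]
  -- h2 : (s + a) * f2 < 2 * f1
  have h2 : (s + a) * f2 < 2 * f1 := by
    have hsf : (s*f2)^2 = (4*t + a^2) * f2^2 := by rw [mul_pow, hs2, hz2]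
    have hsq : (s * f2)^2 < (2*f1 - a*f2)^2 := by
      rw [hsf]
      nlinarith [hkey']
    have hpos : 0 < s * f2 + (2*f1 - a*f2) := by nlinarith [h1, hf2, hs0, ha]
    nlinarith [hsq, hpos]
  -- h5 : 2*t*f2 < (s - a) * f1
  have h5 : 2*t*f2 < (s - a) * f1 := by
    have hfac : 0 < 2*f1 - (s+a)*f2 := by linarith
    have h4 : 0 < (s - a) * (2*f1 - (s+a)*f2) := mul_pos (by linarith) hfac
    have hdiff : s^2 - a^2 = 4*t := by nlinarith [hs2, hz2]
    nlinarith [h4, hdiff, hf2]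
  -- core : 2 * f0 < f1 * ((μ+1/2) + s)
  have hcore : 2 * f0 < f1 * ((μ + 1/2) + s) := by
    rw [ha_def] at h5
    rw [hrec]
    linarith [h5]
  -- reduce the goal
  rw [gt_iff_lt, besselI_eq hμ.le hz, besselI_eq (show (0:ℝ) ≤ μ+1 by linarith) hz,
    div_lt_div_iff₀ hD (mul_pos (Real.rpow_pos_of_pos hq μ) hf0)]
  rw [show (z/2 : ℝ) ^ (μ+1) = (z/2)^μ * (z/2) from Real.rpow_add_one (ne_of_gt hq) μ]
  have hqp : 0 < (z/2 : ℝ) ^ (μ:ℝ) := Real.rpow_pos_of_pos hq μ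
  have hzq : z = 2 * (z/2) := by ring
  calc z * ((z/2)^(μ:ℝ) * f0) = (z/2)^(μ:ℝ) * ((z/2) * (2 * f0)) := by
        rw [hzq]; ring
  _ < (z/2)^(μ:ℝ) * ((z/2) * (f1 * ((μ + 1/2) + s))) := by
        apply mul_lt_mul_of_pos_left _ hqp
        apply mul_lt_mul_of_pos_left hcore hq
  _ = (z/2)^(μ:ℝ) * (z/2) * f1 * ((μ + 1/2) + s) := by ring
end

section
/- Let d ≥ 2, R > 0, α < 0, and let λ₁^α(B_R) denote the first Robin eigenvalue of the ball B_R ⊂ ℝ^d with boundary parameter α. Then λ₁^α(B_R) < −α² + ((d−1)/R)·α. -/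
open MeasureTheory intervalIntegral Set

/-- The first Robin eigenvalue of the ball `B_R ⊂ ℝ^d`, given by the radial
Rayleigh quotient
`(∫₀^R φ'(r)² r^{d-1} dr + α R^{d-1} φ(R)²) / ∫₀^R φ(r)² r^{d-1} dr`
over nonzero `C¹` functions `φ` on `[0,R]`. -/
noncomputable def lam1Ball (d : ℕ) (R α : ℝ) : ℝ :=
  sInf { q : ℝ | ∃ φ : ℝ → ℝ, ContDiff ℝ 1 φ ∧
    (∫ r in (0 : ℝ)..R, (φ r) ^ 2 * r ^ (d - 1)) ≠ 0 ∧
    q = ((∫ r in (0 : ℝ)..R, (deriv φ r) ^ 2 * r ^ (d - 1)) + α * R ^ (d - 1) * (φ R) ^ 2) /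
        (∫ r in (0 : ℝ)..R, (φ r) ^ 2 * r ^ (d - 1)) }

/-- Young-type inequality. -/
private lemma young_ineq (ε u v : ℝ) (hε : 0 < ε) : 2 * u * v ≤ ε * v ^ 2 + ε⁻¹ * u ^ 2 := by
  have h : 0 ≤ (ε * v - u) ^ 2 := sq_nonneg _
  have h2 : ε * (2 * u * v) ≤ ε * (ε * v ^ 2 + ε⁻¹ * u ^ 2) := by
    have hεu : ε * ε⁻¹ = 1 := mul_inv_cancel₀ hε.ne'
    nlinarith [sq_nonneg (ε * v - u)]
  exact le_of_mul_le_mul_left h2 hε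

/-- Trace inequality: the boundary value is controlled by the weighted `H¹` norm. -/
private lemma trace_bound (n : ℕ) (R α : ℝ) (hR : 0 < R) (hα : α < 0)
    (φ : ℝ → ℝ) (hφ : ContDiff ℝ 1 φ) :
    φ R ^ 2 * R ^ (n + 1) ≤
      (-α)⁻¹ * (∫ r in (0:ℝ)..R, (deriv φ r) ^ 2 * r ^ (n + 1))
      + ((-α) * 4 ^ (n + 1) + 2 ^ (n + 2) / R) * (∫ r in (0:ℝ)..R, (φ r) ^ 2 * r ^ (n + 1)) := by
  have hαpos : 0 < -α := by linarith
  have hcφ : Continuous φ := hφ.continuous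
  have hcd : Continuous (deriv φ) := hφ.continuous_deriv le_rfl
  set c₁ : ℝ := (-α)⁻¹ with hc₁def
  set c₂ : ℝ := (-α) * 4 ^ (n + 1) + 2 ^ (n + 2) / R with hc₂def
  have hc₁ : 0 < c₁ := by positivity
  have hc₂ : 0 < c₂ := by positivity
  set G : ℝ → ℝ := fun r => 2 * φ r * deriv φ r * (2 * R ^ n * (r - R / 2))
      + φ r ^ 2 * (2 * R ^ n) with hGdef
  set F : ℝ → ℝ := fun r => (c₁ * (deriv φ r) ^ 2 + c₂ * (φ r) ^ 2) * r ^ (n + 1) with hFdef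
  have hcG : Continuous G := by fun_prop
  have hcF : Continuous F := by fun_prop
  -- FTC on [R/2, R]
  have hFTC : ∫ r in (R/2)..R, G r = φ R ^ 2 * R ^ (n + 1) := by
    have key : ∀ r ∈ uIcc (R/2) R, HasDerivAt (fun r => φ r ^ 2 * (2 * R ^ n * (r - R / 2)))
        (G r) r := by
      intro r _
      have h1 : HasDerivAt (fun r => φ r ^ 2) (2 * φ r * deriv φ r) r := by
        have := ((hφ.differentiable one_ne_zero r).hasDerivAt).pow 2
        simpa [mul_comm, mul_assoc, Pi.pow_def] using this
      have h2 : HasDerivAt (fun r : ℝ => 2 * R ^ n * (r - R / 2)) (2 * R ^ n) r := by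
        simpa using ((hasDerivAt_id r).sub_const (R / 2)).const_mul (2 * R ^ n)
      have := h1.mul h2
      exact this
    rw [integral_eq_sub_of_hasDerivAt key (hcG.intervalIntegrable _ _)]
    have : R - R / 2 = R / 2 := by ring
    rw [this]
    ring
  -- pointwise bound on [R/2, R]
  have hpt : ∀ r ∈ Icc (R/2) R, G r ≤ F r := by
    intro r hr
    obtain ⟨hr1, hr2⟩ := hr
    have hrpos : 0 < r := lt_of_lt_of_le (by positivity) hr1
    have hpow : (R/2) ^ (n+1) ≤ r ^ (n+1) := pow_le_pow_left₀ (by positivity) hr1 _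
    set u := φ r
    set v := deriv φ r
    set ε : ℝ := ((-α) * 2 ^ (n+1))⁻¹ with hεdef
    have hε : 0 < ε := by positivity
    have hyoung : 2 * u * v ≤ ε * v ^ 2 + ε⁻¹ * u ^ 2 := young_ineq ε u v hε
    set ψ : ℝ := 2 * R ^ n * (r - R / 2) with hψdef
    have hψ0 : 0 ≤ ψ := by
      have : 0 ≤ r - R / 2 := by linarith
      positivity
    have hψle : ψ ≤ R ^ (n+1) := by
      have h1 : r - R / 2 ≤ R / 2 := by linarith
      have : 2 * R ^ n * (r - R / 2) ≤ 2 * R ^ n * (R / 2) := by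
        apply mul_le_mul_of_nonneg_left h1 (by positivity)
      calc ψ ≤ 2 * R ^ n * (R / 2) := this
        _ = R ^ (n+1) := by rw [pow_succ]; ring
    have hA : ε * R ^ (n+1) = c₁ * (R/2) ^ (n+1) := by
      rw [hεdef, hc₁def, mul_inv, div_pow]
      field_simp
    have hB : ε⁻¹ * R ^ (n+1) = (-α) * 4 ^ (n+1) * (R/2) ^ (n+1) := by
      rw [hεdef, inv_inv, div_pow, show (4:ℝ) = 2 * 2 by norm_num, mul_pow]
      field_simp
    have hC : 2 * R ^ n = (2 ^ (n+2) / R) * (R/2) ^ (n+1) := by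
      rw [div_pow]
      field_simp
      try rw [pow_succ, pow_succ, pow_succ]
      try ring
    have step1 : (2 * u * v) * ψ ≤ (ε * v ^ 2 + ε⁻¹ * u ^ 2) * ψ :=
      mul_le_mul_of_nonneg_right hyoung hψ0
    have step2 : (ε * v ^ 2 + ε⁻¹ * u ^ 2) * ψ ≤ (ε * v ^ 2 + ε⁻¹ * u ^ 2) * R ^ (n+1) :=
      mul_le_mul_of_nonneg_left hψle (by positivity)
    have step3 : (ε * v ^ 2 + ε⁻¹ * u ^ 2) * R ^ (n+1)
        ≤ (c₁ * v ^ 2 + (-α) * 4 ^ (n+1) * u ^ 2) * r ^ (n+1) := by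
      have e1 : (ε * v ^ 2 + ε⁻¹ * u ^ 2) * R ^ (n+1)
          = (c₁ * v ^ 2 + (-α) * 4 ^ (n+1) * u ^ 2) * (R/2) ^ (n+1) := by
        nlinarith [hA, hB]
      rw [e1]
      apply mul_le_mul_of_nonneg_left hpow (by positivity)
    have step4 : u ^ 2 * (2 * R ^ n) ≤ (2 ^ (n+2) / R) * u ^ 2 * r ^ (n+1) := by
      rw [hC]
      calc u ^ 2 * ((2 ^ (n+2) / R) * (R/2) ^ (n+1))
          ≤ u ^ 2 * ((2 ^ (n+2) / R) * r ^ (n+1)) := by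
            apply mul_le_mul_of_nonneg_left _ (sq_nonneg u)
            exact mul_le_mul_of_nonneg_left hpow (by positivity)
        _ = (2 ^ (n+2) / R) * u ^ 2 * r ^ (n+1) := by ring
    have : G r = (2 * u * v) * ψ + u ^ 2 * (2 * R ^ n) := by simp [hGdef, hψdef, u, v]
    rw [this, hFdef]
    have hfinal : (2 * u * v) * ψ + u ^ 2 * (2 * R ^ n)
        ≤ (c₁ * v ^ 2 + (-α) * 4 ^ (n+1) * u ^ 2) * r ^ (n+1)
          + (2 ^ (n+2) / R) * u ^ 2 * r ^ (n+1) := by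
      linarith [step1, step2, step3, step4]
    calc (2 * u * v) * ψ + u ^ 2 * (2 * R ^ n)
        ≤ (c₁ * v ^ 2 + (-α) * 4 ^ (n+1) * u ^ 2) * r ^ (n+1)
          + (2 ^ (n+2) / R) * u ^ 2 * r ^ (n+1) := hfinal
      _ = (c₁ * v ^ 2 + c₂ * u ^ 2) * r ^ (n+1) := by rw [hc₂def]; ring
  -- integrate the pointwise bound and extend to [0, R]
  have hmono : ∫ r in (R/2)..R, G r ≤ ∫ r in (R/2)..R, F r :=
    integral_mono_on (by linarith) (hcG.intervalIntegrable _ _) (hcF.intervalIntegrable _ _) hpt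
  have hext : ∫ r in (R/2)..R, F r ≤ ∫ r in (0:ℝ)..R, F r := by
    apply integral_mono_interval (by linarith) (by linarith) le_rfl
    · filter_upwards [ae_restrict_mem measurableSet_Ioc] with r hr
      have hrpos : 0 < r := hr.1
      rw [hFdef]
      positivity
    · exact hcF.intervalIntegrable _ _
  have hsplit : ∫ r in (0:ℝ)..R, F r
      = c₁ * (∫ r in (0:ℝ)..R, (deriv φ r) ^ 2 * r ^ (n + 1))
        + c₂ * (∫ r in (0:ℝ)..R, (φ r) ^ 2 * r ^ (n + 1)) := by
    rw [hFdef]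
    have : (fun r => (c₁ * (deriv φ r) ^ 2 + c₂ * (φ r) ^ 2) * r ^ (n + 1))
        = fun r => c₁ * ((deriv φ r) ^ 2 * r ^ (n + 1)) + c₂ * ((φ r) ^ 2 * r ^ (n + 1)) := by
      funext r; ring
    rw [this, intervalIntegral.integral_add, intervalIntegral.integral_const_mul, intervalIntegral.integral_const_mul]
    · exact (Continuous.intervalIntegrable (by fun_prop) _ _)
    · exact (Continuous.intervalIntegrable (by fun_prop) _ _)
  linarith [hFTC ▸ hmono, hext, hsplit.le, hsplit.ge]

theorem lam1Ball_upper_bound (d : ℕ) (hd : 2 ≤ d) (R α : ℝ) (hR : 0 < R) (hα : α < 0) :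
    lam1Ball d R α < -α ^ 2 + ((d : ℝ) - 1) / R * α := by
  obtain ⟨n, rfl⟩ : ∃ n, d = n + 2 := ⟨d - 2, by omega⟩
  have hd1 : n + 2 - 1 = n + 1 := rfl
  have hαpos : 0 < -α := by linarith
  unfold lam1Ball
  simp only [hd1]
  set S := { q : ℝ | ∃ φ : ℝ → ℝ, ContDiff ℝ 1 φ ∧
    (∫ r in (0 : ℝ)..R, (φ r) ^ 2 * r ^ (n + 1)) ≠ 0 ∧
    q = ((∫ r in (0 : ℝ)..R, (deriv φ r) ^ 2 * r ^ (n + 1)) + α * R ^ (n + 1) * (φ R) ^ 2) /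
        (∫ r in (0 : ℝ)..R, (φ r) ^ 2 * r ^ (n + 1)) } with hSdef
  set c₂ : ℝ := (-α) * 4 ^ (n + 1) + 2 ^ (n + 2) / R with hc₂def
  -- lower bound for all elements of S
  have hLB : ∀ q ∈ S, α * c₂ ≤ q := by
    rintro q ⟨φ, hφ, hDne, rfl⟩
    set D := ∫ r in (0 : ℝ)..R, (φ r) ^ 2 * r ^ (n + 1) with hDdef
    set N := ∫ r in (0 : ℝ)..R, (deriv φ r) ^ 2 * r ^ (n + 1) with hNdef
    clear_value D N
    have hDnn : 0 ≤ D := hDdef ▸ integral_nonneg hR.le (fun u hu => by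
        have : (0:ℝ) ≤ u := hu.1
        positivity)
    have hDpos : 0 < D := hDnn.lt_of_ne (Ne.symm hDne)
    rw [le_div_iff₀ hDpos]
    have htr := trace_bound n R α hR hα φ hφ
    rw [← hDdef, ← hNdef] at htr
    have hmul := mul_le_mul_of_nonpos_left htr hα.le
    have hαc₁ : α * (-α)⁻¹ = -1 := by rw [inv_neg, mul_neg, mul_inv_cancel₀ hα.ne]
    have e : α * ((-α)⁻¹ * N + (-α * 4 ^ (n + 1) + 2 ^ (n + 2) / R) * D)
        = -N + α * ((-α * 4 ^ (n + 1) + 2 ^ (n + 2) / R) * D) := by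
      rw [mul_add, ← mul_assoc, hαc₁]; ring
    rw [e] at hmul
    have hN0 : 0 ≤ N := hNdef ▸ integral_nonneg hR.le (fun u hu => by
      have : (0:ℝ) ≤ u := hu.1
      positivity)
    rw [hc₂def]
    linarith [hmul, hN0]
  -- the test function
  set φ₀ : ℝ → ℝ := fun r => Real.exp (α * (R - r)) with hφ₀def
  have hφ₀C : ContDiff ℝ 1 φ₀ := by fun_prop
  have hder : ∀ r, deriv φ₀ r = -α * φ₀ r := by
    intro r
    have h : HasDerivAt φ₀ (Real.exp (α * (R - r)) * (α * (0 - 1))) r :=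
      (((hasDerivAt_const r R).sub (hasDerivAt_id r)).const_mul α).exp
    rw [h.deriv, hφ₀def]; ring
  have hφ₀R : φ₀ R = 1 := by simp [hφ₀def]
  set D₀ := ∫ r in (0 : ℝ)..R, (φ₀ r) ^ 2 * r ^ (n + 1) with hD₀def
  have hD₀pos : 0 < D₀ := by
    apply integral_pos hR
    · exact (by fun_prop : Continuous fun r => (φ₀ r) ^ 2 * r ^ (n + 1)).continuousOn
    · intro x hx
      have : (0:ℝ) < x := hx.1
      positivity
    · exact ⟨R, ⟨hR.le, le_rfl⟩, by rw [hφ₀R]; positivity⟩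
  have hN₀ : (∫ r in (0 : ℝ)..R, (deriv φ₀ r) ^ 2 * r ^ (n + 1)) = α ^ 2 * D₀ := by
    have : (fun r => (deriv φ₀ r) ^ 2 * r ^ (n + 1))
        = fun r => α ^ 2 * ((φ₀ r) ^ 2 * r ^ (n + 1)) := by
      funext r; rw [hder r]; ring
    rw [this, intervalIntegral.integral_const_mul, hD₀def]
  set q₀ : ℝ := ((∫ r in (0 : ℝ)..R, (deriv φ₀ r) ^ 2 * r ^ (n + 1))
      + α * R ^ (n + 1) * (φ₀ R) ^ 2) / D₀ with hq₀def
  have hmem : q₀ ∈ S := ⟨φ₀, hφ₀C, hD₀pos.ne', rfl⟩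
  -- key strict inequality: K * D₀ < R^(n+1)
  set K : ℝ := -2 * α + ((n:ℝ) + 1) / R with hKdef
  clear_value K
  have hKD : K * D₀ < R ^ (n + 1) := by
    have hsq : ∀ r, (φ₀ r) ^ 2 = Real.exp (2 * α * (R - r)) := by
      intro r; rw [hφ₀def, sq, ← Real.exp_add]; ring_nf
    have hFTC : ∫ r in (0:ℝ)..R, (Real.exp (2*α*(R-r)) * (-2*α) * r^(n+1)
        + Real.exp (2*α*(R-r)) * (((n:ℝ)+1) * r^n)) = R^(n+1) := by
      have key : ∀ r ∈ uIcc (0:ℝ) R, HasDerivAt (fun r => Real.exp (2*α*(R-r)) * r^(n+1))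
          (Real.exp (2*α*(R-r)) * (-2*α) * r^(n+1) + Real.exp (2*α*(R-r)) * (((n:ℝ)+1) * r^n)) r := by
        intro r _
        have h1 : HasDerivAt (fun r : ℝ => Real.exp (2*α*(R-r)))
            (Real.exp (2*α*(R-r)) * (2*α*(0-1))) r :=
          (((hasDerivAt_const r R).sub (hasDerivAt_id r)).const_mul (2*α)).exp
        have h2 : HasDerivAt (fun r : ℝ => r^(n+1)) (((n:ℕ)+1 : ℕ) * r^n) r := by
          simpa using hasDerivAt_pow (n+1) r
        have := h1.mul h2
        exact this.congr_deriv (by push_cast; ring)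
      have hi : IntervalIntegrable (fun r : ℝ =>
          Real.exp (2*α*(R-r)) * (-2*α) * r^(n+1) + Real.exp (2*α*(R-r)) * (((n:ℝ)+1) * r^n))
          volume 0 R :=
        (by fun_prop : Continuous fun r : ℝ =>
          Real.exp (2*α*(R-r)) * (-2*α) * r^(n+1)
            + Real.exp (2*α*(R-r)) * (((n:ℝ)+1) * r^n)).intervalIntegrable 0 R
      rw [integral_eq_sub_of_hasDerivAt key hi]; simp
    have hKD₀ : K * D₀ = ∫ r in (0:ℝ)..R, K * ((φ₀ r) ^ 2 * r ^ (n + 1)) := by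
      rw [intervalIntegral.integral_const_mul, hD₀def]
    rw [hKD₀, ← hFTC]
    apply integral_lt_integral_of_continuousOn_of_le_of_exists_lt hR
    · exact (by fun_prop : Continuous fun r => K * ((φ₀ r) ^ 2 * r ^ (n + 1))).continuousOn
    · exact (by fun_prop : Continuous fun r : ℝ => Real.exp (2*α*(R-r)) * (-2*α) * r^(n+1)
        + Real.exp (2*α*(R-r)) * (((n:ℝ)+1) * r^n)).continuousOn
    · intro r hr
      have hr0 : 0 < r := hr.1
      have hrR : r ≤ R := hr.2
      rw [hsq r]
      have hE : 0 < Real.exp (2*α*(R-r)) := Real.exp_pos _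
      have hdiff : Real.exp (2*α*(R-r)) * (-2*α) * r^(n+1)
          + Real.exp (2*α*(R-r)) * (((n:ℝ)+1) * r^n)
          - K * (Real.exp (2*α*(R-r)) * r ^ (n + 1))
          = ((n:ℝ)+1) * Real.exp (2*α*(R-r)) * (r^n - r^(n+1)/R) := by
        rw [hKdef]; ring
      have hpow : r^(n+1)/R ≤ r^n := by
        rw [div_le_iff₀ hR, pow_succ]
        exact mul_le_mul_of_nonneg_left hrR (by positivity)
      have hprod : 0 ≤ ((n:ℝ)+1) * Real.exp (2*α*(R-r)) * (r^n - r^(n+1)/R) :=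
        mul_nonneg (mul_nonneg (by positivity) hE.le) (sub_nonneg.mpr hpow)
      linarith [hdiff.ge, hdiff.le, hprod]
    · refine ⟨R/2, ⟨by linarith, by linarith⟩, ?_⟩
      set r := R/2 with hrdef
      clear_value r
      have hr0 : 0 < r := by rw [hrdef]; linarith
      have hrR : r < R := by rw [hrdef]; linarith
      rw [hsq r]
      have hE : 0 < Real.exp (2*α*(R-r)) := Real.exp_pos _
      have hdiff : Real.exp (2*α*(R-r)) * (-2*α) * r^(n+1)
          + Real.exp (2*α*(R-r)) * (((n:ℝ)+1) * r^n)
          - K * (Real.exp (2*α*(R-r)) * r ^ (n + 1))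
          = ((n:ℝ)+1) * Real.exp (2*α*(R-r)) * (r^n - r^(n+1)/R) := by
        rw [hKdef]; ring
      have hpow : r^(n+1)/R < r^n := by
        rw [div_lt_iff₀ hR, pow_succ]
        have hrn : 0 < r^n := by positivity
        exact mul_lt_mul_of_pos_left hrR hrn
      have hprod : 0 < ((n:ℝ)+1) * Real.exp (2*α*(R-r)) * (r^n - r^(n+1)/R) :=
        mul_pos (mul_pos (by positivity) hE) (sub_pos.mpr hpow)
      linarith [hdiff.ge, hdiff.le, hprod]
  clear_value D₀ q₀
  -- conclude
  have hq₀lt : q₀ < -α ^ 2 + (((n:ℝ) + 2) - 1) / R * α := by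
    rw [hq₀def, hN₀, hφ₀R, div_lt_iff₀ hD₀pos]
    have h1 : α * R ^ (n+1) < α * (K * D₀) := by
      exact mul_lt_mul_of_neg_left hKD hα
    have h2 : (-α ^ 2 + (((n:ℝ) + 2) - 1) / R * α) * D₀ = α ^ 2 * D₀ + α * (K * D₀) := by
      rw [hKdef]; ring
    rw [h2, one_pow]
    linarith [h1]
  have hfinal : sInf S ≤ q₀ := csInf_le ⟨α * c₂, fun q hq => hLB q hq⟩ hmem
  calc sInf S ≤ q₀ := hfinal
    _ < -α ^ 2 + (((n:ℝ) + 2) - 1) / R * α := hq₀lt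
    _ = -α ^ 2 + ((↑(n + 2) : ℝ) - 1) / R * α := by push_cast; ring
end

section
/- Let d ≥ 2, R > 0, α < 0, and let λ₁^α(B_R) denote the first Robin eigenvalue of the ball B_R ⊂ ℝ^d. Then λ₁^α(B_R) > −(1/2)α² + ((d−1)/(2R))α + (α/(2R))·sqrt((d−1−αR)² + 4d). -/
open MeasureTheory intervalIntegral

lemma rayleigh_aux (e : ℕ) (R α x' : ℝ) (hR : 0 < R)
    (h hD : ℝ → ℝ)
    (hder : ∀ r, HasDerivAt h (hD r) r) (hDc : Continuous hD)
    (hbdry : h R = -α)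
    (hkey : ∀ r ∈ Set.Icc (0:ℝ) R, r * hD r + ((e:ℝ)+1) * h r + r * (h r)^2 ≤ x' * r)
    (φ : ℝ → ℝ) (hφ : ContDiff ℝ 1 φ)
    (hden : (∫ r in (0:ℝ)..R, (φ r)^2 * r^(e+1)) ≠ 0) :
    -x' ≤ ((∫ r in (0:ℝ)..R, (deriv φ r)^2 * r^(e+1)) + α * R^(e+1) * (φ R)^2) /
        (∫ r in (0:ℝ)..R, (φ r)^2 * r^(e+1)) := by
  have hφc : Continuous φ := hφ.continuous
  have hφ'c : Continuous (deriv φ) := hφ.continuous_deriv le_rfl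
  have hφd : ∀ r, HasDerivAt φ (deriv φ r) r :=
    fun r => ((hφ.differentiable one_ne_zero) r).hasDerivAt
  have hhc : Continuous h := by
    have : Differentiable ℝ h := fun r => (hder r).differentiableAt
    exact this.continuous
  -- denominator positive
  have hden_nonneg : 0 ≤ ∫ r in (0:ℝ)..R, (φ r)^2 * r^(e+1) := by
    apply intervalIntegral.integral_nonneg hR.le
    intro u hu
    have := hu.1
    positivity
  have hdenpos : 0 < ∫ r in (0:ℝ)..R, (φ r)^2 * r^(e+1) :=
    lt_of_le_of_ne hden_nonneg (Ne.symm hden)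
  rw [le_div_iff₀ hdenpos]
  -- integrabilities
  have int1 : IntervalIntegrable (fun r => (deriv φ r)^2 * r^(e+1)) volume 0 R :=
    ((hφ'c.pow 2).mul (continuous_pow _)).intervalIntegrable 0 R
  have int2 : IntervalIntegrable (fun r => h r * φ r * deriv φ r * r^(e+1)) volume 0 R :=
    (((hhc.mul hφc).mul hφ'c).mul (continuous_pow _)).intervalIntegrable 0 R
  have int3 : IntervalIntegrable (fun r => (h r)^2 * (φ r)^2 * r^(e+1)) volume 0 R :=
    (((hhc.pow 2).mul (hφc.pow 2)).mul (continuous_pow _)).intervalIntegrable 0 R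
  have int4 : IntervalIntegrable (fun r => (φ r)^2 * r^(e+1)) volume 0 R :=
    ((hφc.pow 2).mul (continuous_pow _)).intervalIntegrable 0 R
  have int5 : IntervalIntegrable (fun r => (hD r * r^(e+1) + ((e:ℝ)+1) * h r * r^e) * (φ r)^2) volume 0 R :=
    (((hDc.mul (continuous_pow _)).add ((continuous_const.mul hhc).mul (continuous_pow _))).mul
      (hφc.pow 2)).intervalIntegrable 0 R
  -- FTC for G = h r * (r^(e+1) * φ r ^2)
  have hG : ∀ r, HasDerivAt (fun r => h r * (r^(e+1) * (φ r)^2))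
      ((hD r * r^(e+1) + ((e:ℝ)+1) * h r * r^e) * (φ r)^2
        + 2 * (h r * φ r * deriv φ r * r^(e+1))) r := by
    intro r
    have := (hder r).mul ((hasDerivAt_pow (e+1) r).mul ((hφd r).pow 2))
    refine this.congr_deriv ?_
    simp only [Nat.add_sub_cancel, Pi.mul_apply, Pi.pow_apply]
    push_cast
    ring
  have hFTC : (∫ r in (0:ℝ)..R, ((hD r * r^(e+1) + ((e:ℝ)+1) * h r * r^e) * (φ r)^2
        + 2 * (h r * φ r * deriv φ r * r^(e+1))))
      = -α * (R^(e+1) * (φ R)^2) := by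
    rw [intervalIntegral.integral_eq_sub_of_hasDerivAt (fun r _ => hG r)]
    · simp [hbdry]
    · exact int5.add (int2.const_mul 2)
  -- expansion of the square
  have hJsplit : (∫ r in (0:ℝ)..R, (deriv φ r - h r * φ r)^2 * r^(e+1))
      = (∫ r in (0:ℝ)..R, (deriv φ r)^2 * r^(e+1))
        - 2 * (∫ r in (0:ℝ)..R, h r * φ r * deriv φ r * r^(e+1))
        + (∫ r in (0:ℝ)..R, (h r)^2 * (φ r)^2 * r^(e+1)) := by
    have : (∫ r in (0:ℝ)..R, (deriv φ r - h r * φ r)^2 * r^(e+1))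
        = ∫ r in (0:ℝ)..R, ((deriv φ r)^2 * r^(e+1) - 2 * (h r * φ r * deriv φ r * r^(e+1))
            + (h r)^2 * (φ r)^2 * r^(e+1)) := by
      congr 1; funext r; ring
    rw [this, intervalIntegral.integral_add (int1.sub (int2.const_mul 2)) int3,
      intervalIntegral.integral_sub int1 (int2.const_mul 2),
      intervalIntegral.integral_const_mul]
  have hJnn : 0 ≤ ∫ r in (0:ℝ)..R, (deriv φ r - h r * φ r)^2 * r^(e+1) := by
    apply intervalIntegral.integral_nonneg hR.le
    intro u hu
    have := hu.1
    positivity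
  -- FTC split
  have hFTC2 : (∫ r in (0:ℝ)..R, (hD r * r^(e+1) + ((e:ℝ)+1) * h r * r^e) * (φ r)^2)
      + 2 * (∫ r in (0:ℝ)..R, h r * φ r * deriv φ r * r^(e+1))
      = -α * (R^(e+1) * (φ R)^2) := by
    rw [← intervalIntegral.integral_const_mul, ← intervalIntegral.integral_add int5 (int2.const_mul 2)]
    exact hFTC
  -- the key pointwise integral estimate
  have hI6 : (∫ r in (0:ℝ)..R, (hD r * r^(e+1) + ((e:ℝ)+1) * h r * r^e) * (φ r)^2)
      + (∫ r in (0:ℝ)..R, (h r)^2 * (φ r)^2 * r^(e+1))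
      - x' * (∫ r in (0:ℝ)..R, (φ r)^2 * r^(e+1)) ≤ 0 := by
    have hsplit : (∫ r in (0:ℝ)..R, (hD r * r^(e+1) + ((e:ℝ)+1) * h r * r^e) * (φ r)^2)
        + (∫ r in (0:ℝ)..R, (h r)^2 * (φ r)^2 * r^(e+1))
        - x' * (∫ r in (0:ℝ)..R, (φ r)^2 * r^(e+1))
        = ∫ r in (0:ℝ)..R, ((hD r * r^(e+1) + ((e:ℝ)+1) * h r * r^e) * (φ r)^2
            + (h r)^2 * (φ r)^2 * r^(e+1) - x' * ((φ r)^2 * r^(e+1))) := by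
      rw [intervalIntegral.integral_sub (int5.add int3) (int4.const_mul x'),
        intervalIntegral.integral_add int5 int3, intervalIntegral.integral_const_mul]
    rw [hsplit]
    have : 0 ≤ ∫ r in (0:ℝ)..R, -((hD r * r^(e+1) + ((e:ℝ)+1) * h r * r^e) * (φ r)^2
            + (h r)^2 * (φ r)^2 * r^(e+1) - x' * ((φ r)^2 * r^(e+1))) := by
      apply intervalIntegral.integral_nonneg hR.le
      intro u hu
      have key := hkey u hu
      have hu0 : 0 ≤ u := hu.1
      have hfact : (hD u * u^(e+1) + ((e:ℝ)+1) * h u * u^e + (h u)^2 * u^(e+1) - x' * u^(e+1))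
          = (u * hD u + ((e:ℝ)+1) * h u + u * (h u)^2 - x' * u) * u^e := by
        ring
      have h1 : (hD u * u^(e+1) + ((e:ℝ)+1) * h u * u^e + (h u)^2 * u^(e+1) - x' * u^(e+1)) ≤ 0 := by
        rw [hfact]
        apply mul_nonpos_of_nonpos_of_nonneg
        · linarith
        · positivity
      nlinarith [sq_nonneg (φ u), mul_nonneg (sq_nonneg (φ u)) (pow_nonneg hu0 e)]
    rw [intervalIntegral.integral_neg] at this
    linarith
  -- combine everything
  linarith [hJsplit, hJnn, hFTC2, hI6]

set_option maxHeartbeats 1000000 in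
lemma key_pointwise (a b x W K M R x' u : ℝ)
    (ha : 0 < a) (hb : b = a + 1) (hx : 0 < x) (hW : 0 < W) (hbW : b ≤ W)
    (hWsq : W^2 = x*R^2 + b^2)
    (hKP : K * ((W+b)*(W*(a+W)^2)) = x^2*b)
    (hK : 0 < K) (hM : 0 < M)
    (hMK : M*(2*a+3) + M^2*R^4 ≤ K)
    (hx' : x' = x - (2*a+1)*M*R^2)
    (hR : 0 < R) (hu : 0 ≤ u) (huR : u ≤ R) :
    u * ((x*(a + Real.sqrt (x*u^2+b^2)) - x*u*(x*(2*u)/(2*Real.sqrt (x*u^2+b^2))))/(a + Real.sqrt (x*u^2+b^2))^2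
          - (M*(R^2-u^2) + M*u*(-(2*u))))
      + (2*a) * (x*u/(a + Real.sqrt (x*u^2+b^2)) - M*u*(R^2-u^2))
      + u * (x*u/(a + Real.sqrt (x*u^2+b^2)) - M*u*(R^2-u^2))^2 ≤ x' * u := by
  have hb0 : 0 < b := by linarith
  set w := Real.sqrt (x*u^2+b^2) with hw
  have hargpos : 0 < x*u^2+b^2 := by positivity
  have hw2 : w^2 = x*u^2+b^2 := Real.sq_sqrt hargpos.le
  have hw0 : 0 < w := Real.sqrt_pos.mpr hargpos
  have hwb : b ≤ w := by nlinarith [hw2, sq_nonneg u]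
  have hu2R : u^2 ≤ R^2 := by nlinarith
  have hwW : w ≤ W := by nlinarith [hw2, hWsq, mul_le_mul_of_nonneg_left hu2R hx.le]
  have hD0 : 0 < a + w := by linarith
  have hDW : 0 < a + W := by linarith
  have hwne : w ≠ 0 := ne_of_gt hw0
  have hDne : (a+w) ≠ 0 := ne_of_gt hD0
  -- Amos-type Riccati identity for the main part
  have E1 : u * ((x*(a + w) - x*u*(x*(2*u)/(2*w)))/(a + w)^2)
      + (2*a)*(x*u/(a+w)) + u*(x*u/(a+w))^2
      = x*u - u*(x*b*(w-b)/(w*(a+w)^2)) := by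
    have lhs_eq : u * ((x*(a + w) - x*u*(x*(2*u)/(2*w)))/(a + w)^2)
        + (2*a)*(x*u/(a+w)) + u*(x*u/(a+w))^2
        = (x*u*(a+w)*w - x^2*u^3 + 2*a*x*u*w*(a+w) + x^2*u^3*w)/(w*(a+w)^2) := by
      field_simp
    have rhs_eq : x*u - u*(x*b*(w-b)/(w*(a+w)^2))
        = (x*u*w*(a+w)^2 - u*(x*b*(w-b)))/(w*(a+w)^2) := by
      field_simp
    rw [lhs_eq, rhs_eq]
    congr 1
    subst hb
    linear_combination (x*u*(1-w))*hw2
  -- slack estimate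
  have E2 : K*u^2 ≤ x*b*(w-b)/(w*(a+w)^2) := by
    have hfac : (w+b)*(w*(a+w)^2) ≤ (W+b)*(W*(a+W)^2) := by
      have h1 : w*(a+w)^2 ≤ W*(a+W)^2 :=
        mul_le_mul hwW (pow_le_pow_left₀ hD0.le (by linarith) 2) (by positivity) hW.le
      exact mul_le_mul (by linarith) h1 (by positivity) (by positivity)
    have hwb2 : (w-b)*(w+b) = x*u^2 := by linear_combination hw2
    rw [le_div_iff₀ (by positivity)]
    have t1 : K*u^2*((w+b)*(w*(a+w)^2)) ≤ K*u^2*((W+b)*(W*(a+W)^2)) :=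
      mul_le_mul_of_nonneg_left hfac (by positivity)
    have t2 : K*u^2*((W+b)*(W*(a+W)^2)) = x^2*b*u^2 := by linear_combination u^2*hKP
    have t3 : x*b*(w-b)*(w+b) = x^2*b*u^2 := by linear_combination (x*b)*hwb2
    have t4 : K*u^2*(w*(a+w)^2)*(w+b) ≤ x*b*(w-b)*(w+b) := by linarith [t1, t2, t3]
    exact le_of_mul_le_mul_right t4 (by linarith : (0:ℝ) < w+b)
  have hh1 : 0 ≤ x*u/(a+w) := by positivity
  have decomp : u * ((x*(a + w) - x*u*(x*(2*u)/(2*w)))/(a + w)^2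
          - (M*(R^2-u^2) + M*u*(-(2*u))))
      + (2*a) * (x*u/(a + w) - M*u*(R^2-u^2))
      + u * (x*u/(a + w) - M*u*(R^2-u^2))^2
      = (u * ((x*(a + w) - x*u*(x*(2*u)/(2*w)))/(a + w)^2)
        + (2*a)*(x*u/(a+w)) + u*(x*u/(a+w))^2)
        + (u*(-(M*(R^2-u^2) + M*u*(-(2*u)))) + 2*a*(-(M*u*(R^2-u^2)))
          + 2*u*(x*u/(a+w))*(-(M*u*(R^2-u^2))) + u*(M*u*(R^2-u^2))^2) := by
    ring
  have g1 : 2*u*(x*u/(a+w))*(-(M*u*(R^2-u^2))) ≤ 0 := by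
    have hnn : 0 ≤ M*u*(R^2-u^2) := by
      apply mul_nonneg (mul_nonneg hM.le hu); linarith
    nlinarith [mul_nonneg (mul_nonneg hu hh1) hnn]
  have g2 : u*(M*u*(R^2-u^2))^2 ≤ M^2*u^3*R^4 := by
    have h1 : (R^2-u^2)^2 ≤ (R^2)^2 := by nlinarith
    have h2 : (0:ℝ) ≤ M^2*u^3 := by positivity
    nlinarith [mul_le_mul_of_nonneg_left h1 h2]
  have bound2 : u*(-(M*(R^2-u^2) + M*u*(-(2*u)))) + 2*a*(-(M*u*(R^2-u^2)))
      + 2*u*(x*u/(a+w))*(-(M*u*(R^2-u^2))) + u*(M*u*(R^2-u^2))^2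
      ≤ -((2*a+1)*M*R^2*u) + (2*a+3)*M*u^3 + M^2*u^3*R^4 := by
    nlinarith [g1, g2]
  have E2u : u*(K*u^2) ≤ u*(x*b*(w-b)/(w*(a+w)^2)) := mul_le_mul_of_nonneg_left E2 hu
  have t5 : u^3*(M*(2*a+3) + M^2*R^4) ≤ u^3*K := mul_le_mul_of_nonneg_left hMK (pow_nonneg hu 3)
  rw [hx']
  linarith [decomp, E1, E2u, bound2, t5]

lemma testfun_hasDeriv (a b x M R : ℝ) (ha : 0 < a) (hb0 : 0 < b) (hx : 0 < x) (r : ℝ) :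
    HasDerivAt (fun r => x*r/(a + Real.sqrt (x*r^2+b^2)) - M*r*(R^2-r^2))
      ((x*(a + Real.sqrt (x*r^2+b^2)) - x*r*(x*(2*r)/(2*Real.sqrt (x*r^2+b^2))))/(a + Real.sqrt (x*r^2+b^2))^2
        - (M*(R^2-r^2) + M*r*(-(2*r)))) r := by
  have harg : 0 < x*r^2+b^2 := by positivity
  have hw0 : 0 < Real.sqrt (x*r^2+b^2) := Real.sqrt_pos.mpr harg
  have h1 : HasDerivAt (fun r : ℝ => x*r^2+b^2) (x*(2*r)) r := by
    have := ((hasDerivAt_pow 2 r).const_mul x).add_const (b^2)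
    simpa using this
  have h2 : HasDerivAt (fun r : ℝ => Real.sqrt (x*r^2+b^2))
      (x*(2*r)/(2*Real.sqrt (x*r^2+b^2))) r := h1.sqrt (ne_of_gt harg)
  have h3 : HasDerivAt (fun r : ℝ => a + Real.sqrt (x*r^2+b^2))
      (x*(2*r)/(2*Real.sqrt (x*r^2+b^2))) r := h2.const_add a
  have h4 : HasDerivAt (fun r : ℝ => x*r) x r := by
    simpa using (hasDerivAt_id r).const_mul x
  have h5 := h4.div h3 (by positivity)
  have h6 : HasDerivAt (fun r : ℝ => M*r*(R^2-r^2)) (M*(R^2-r^2) + M*r*(-(2*r))) r := by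
    have hA : HasDerivAt (fun r : ℝ => M*r) M r := by
      simpa using (hasDerivAt_id r).const_mul M
    have hB : HasDerivAt (fun r : ℝ => R^2-r^2) (-(2*r)) r := by
      have := (hasDerivAt_pow 2 r).const_sub (R^2)
      simpa using this
    exact hA.mul hB
  exact h5.sub h6

lemma testfun_deriv_cont (a b x M R : ℝ) (ha : 0 < a) (hb0 : 0 < b) (hx : 0 < x) :
    Continuous (fun r =>
      (x*(a + Real.sqrt (x*r^2+b^2)) - x*r*(x*(2*r)/(2*Real.sqrt (x*r^2+b^2))))/(a + Real.sqrt (x*r^2+b^2))^2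
        - (M*(R^2-r^2) + M*r*(-(2*r)))) := by
  have hwc : Continuous (fun r : ℝ => Real.sqrt (x*r^2+b^2)) :=
    Real.continuous_sqrt.comp (by fun_prop)
  have hwne : ∀ r : ℝ, Real.sqrt (x*r^2+b^2) ≠ 0 := by
    intro r
    have : (0:ℝ) < x*r^2+b^2 := by positivity
    exact ne_of_gt (Real.sqrt_pos.mpr this)
  have hDne : ∀ r : ℝ, (a + Real.sqrt (x*r^2+b^2))^2 ≠ 0 := by
    intro r
    have : (0:ℝ) < Real.sqrt (x*r^2+b^2) := Real.sqrt_pos.mpr (by positivity)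
    positivity
  apply Continuous.sub
  · apply Continuous.div
    · apply Continuous.sub
      · fun_prop
      · apply Continuous.mul (by fun_prop)
        apply Continuous.div (by fun_prop) (by fun_prop)
        intro r hc
        apply hwne r
        linarith
    · fun_prop
    · exact hDne
  · fun_prop

set_option maxHeartbeats 1000000 in
theorem lam1Ball_lower_bound (d : ℕ) (hd : 2 ≤ d) (R α : ℝ) (hR : 0 < R) (hα : α < 0) :
    lam1Ball d R α >
      -(1 / 2) * α ^ 2 + ((d : ℝ) - 1) / (2 * R) * α
        + α / (2 * R) * Real.sqrt (((d : ℝ) - 1 - α * R) ^ 2 + 4 * d) := by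
  obtain ⟨e, rfl⟩ : ∃ e, d = e + 2 := ⟨d - 2, by omega⟩
  have hα' : 0 < -α := neg_pos.mpr hα
  have hαR : 0 < -α * R := mul_pos hα' hR
  have hRne : R ≠ 0 := ne_of_gt hR
  -- rewrite goal's square root argument
  have hargB : (((e+2:ℕ):ℝ) - 1 - α * R) ^ 2 + 4 * ((e+2:ℕ):ℝ)
      = ((e:ℝ)+1-α*R)^2 + 4*((e:ℝ)+2) := by push_cast; ring
  rw [hargB]
  set s : ℝ := Real.sqrt (((e:ℝ)+1-α*R)^2 + 4*((e:ℝ)+2)) with hs_def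
  have hargs : 0 < ((e:ℝ)+1-α*R)^2 + 4*((e:ℝ)+2) := by positivity
  have hs : 0 < s := Real.sqrt_pos.mpr hargs
  have hs2 : s^2 = ((e:ℝ)+1-α*R)^2 + 4*((e:ℝ)+2) := Real.sq_sqrt hargs.le
  -- the constants
  obtain ⟨x, hx, hxR⟩ : ∃ x : ℝ, 0 < x ∧ x*(2*R) = (-α)*((e:ℝ)+1-α*R+s) := by
    refine ⟨(-α)*((e:ℝ)+1-α*R+s)/(2*R), ?_, by field_simp⟩
    apply div_pos (mul_pos hα' (by nlinarith)) (by linarith)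
  set a : ℝ := ((e:ℝ)+1)/2 with ha_def
  set b : ℝ := ((e:ℝ)+1)/2 + 1 with hb_def
  have ha : 0 < a := by rw [ha_def]; positivity
  have hb : b = a + 1 := by rw [hb_def, ha_def]
  have hb0 : 0 < b := by rw [hb]; linarith
  set W : ℝ := (s - α*R)/2 with hW_def
  have hW : 0 < W := by rw [hW_def]; nlinarith
  have hWsq : W^2 = x*R^2 + b^2 := by
    rw [hW_def, hb_def]
    linear_combination (1/4)*hs2 - (R/2)*hxR
  have hbW : b ≤ W := by nlinarith [hWsq, mul_pos (mul_pos hx hR) hR]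
  have hDW : 0 < a + W := by linarith
  obtain ⟨K, hK, hKP⟩ : ∃ K : ℝ, 0 < K ∧ K * ((W+b)*(W*(a+W)^2)) = x^2*b := by
    refine ⟨x^2*b/((W+b)*(W*(a+W)^2)), by positivity, by field_simp⟩
  obtain ⟨M, hM, hMdef⟩ : ∃ M : ℝ, 0 < M ∧ M*(2*(((e:ℝ)+4)+K*R^4)) = K := by
    have hT : 0 < 2*(((e:ℝ)+4)+K*R^4) := by positivity
    exact ⟨K/(2*(((e:ℝ)+4)+K*R^4)), by positivity, by field_simp⟩
  have he0 : (0:ℝ) ≤ (e:ℝ) := Nat.cast_nonneg e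
  have hMK : M*(2*a+3) + M^2*R^4 ≤ K := by
    have hMle : M ≤ K := by nlinarith [mul_nonneg (mul_nonneg hM.le hK.le) (pow_nonneg hR.le 4)]
    have h2 : M*M*R^4 ≤ M*K*R^4 :=
      mul_le_mul_of_nonneg_right (mul_le_mul_of_nonneg_left hMle hM.le) (pow_nonneg hR.le 4)
    have h3 : 2*a+3 = (e:ℝ)+4 := by rw [ha_def]; ring
    nlinarith [mul_nonneg (mul_nonneg hM.le hK.le) (pow_nonneg hR.le 4)]
  -- the test function
  set x' : ℝ := x - (2*a+1)*M*R^2 with hx'_def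
  have hsqrtR : Real.sqrt (x*R^2+b^2) = W := by
    rw [show x*R^2+b^2 = W^2 by linarith [hWsq]]
    exact Real.sqrt_sq hW.le
  have hbdry : x*R/(a + Real.sqrt (x*R^2+b^2)) - M*R*(R^2-R^2) = -α := by
    rw [hsqrtR, sub_self, mul_zero, sub_zero, div_eq_iff (ne_of_gt hDW)]
    rw [hW_def, ha_def]
    linear_combination (1/2)*hxR
  have hkey : ∀ r ∈ Set.Icc (0:ℝ) R,
      r * ((x*(a + Real.sqrt (x*r^2+b^2)) - x*r*(x*(2*r)/(2*Real.sqrt (x*r^2+b^2))))/(a + Real.sqrt (x*r^2+b^2))^2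
            - (M*(R^2-r^2) + M*r*(-(2*r))))
        + ((e:ℝ)+1) * (x*r/(a + Real.sqrt (x*r^2+b^2)) - M*r*(R^2-r^2))
        + r * (x*r/(a + Real.sqrt (x*r^2+b^2)) - M*r*(R^2-r^2))^2 ≤ x' * r := by
    intro r hr
    have hkp := key_pointwise a b x W K M R x' r ha hb hx hW hbW hWsq hKP hK hM hMK hx'_def hR hr.1 hr.2
    have h2a : ((e:ℝ)+1) = 2*a := by rw [ha_def]; ring
    rw [h2a]
    exact hkp
  -- lower bound for every element of the Rayleigh set
  have hlow : ∀ q ∈ { q : ℝ | ∃ φ : ℝ → ℝ, ContDiff ℝ 1 φ ∧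
      (∫ r in (0 : ℝ)..R, (φ r) ^ 2 * r ^ (e+2 - 1)) ≠ 0 ∧
      q = ((∫ r in (0 : ℝ)..R, (deriv φ r) ^ 2 * r ^ (e+2 - 1)) + α * R ^ (e+2 - 1) * (φ R) ^ 2) /
          (∫ r in (0 : ℝ)..R, (φ r) ^ 2 * r ^ (e+2 - 1)) }, -x' ≤ q := by
    rintro q ⟨φ, hφ, hden, rfl⟩
    exact rayleigh_aux e R α x' hR
      (fun r => x*r/(a + Real.sqrt (x*r^2+b^2)) - M*r*(R^2-r^2))
      (fun r => (x*(a + Real.sqrt (x*r^2+b^2)) - x*r*(x*(2*r)/(2*Real.sqrt (x*r^2+b^2))))/(a + Real.sqrt (x*r^2+b^2))^2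
        - (M*(R^2-r^2) + M*r*(-(2*r))))
      (testfun_hasDeriv a b x M R ha hb0 hx) (testfun_deriv_cont a b x M R ha hb0 hx)
      hbdry hkey φ hφ hden
  -- nonemptiness
  have hne : { q : ℝ | ∃ φ : ℝ → ℝ, ContDiff ℝ 1 φ ∧
      (∫ r in (0 : ℝ)..R, (φ r) ^ 2 * r ^ (e+2 - 1)) ≠ 0 ∧
      q = ((∫ r in (0 : ℝ)..R, (deriv φ r) ^ 2 * r ^ (e+2 - 1)) + α * R ^ (e+2 - 1) * (φ R) ^ 2) /
          (∫ r in (0 : ℝ)..R, (φ r) ^ 2 * r ^ (e+2 - 1)) }.Nonempty := by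
    have hden1 : (∫ r in (0:ℝ)..R, ((fun _ : ℝ => (1:ℝ)) r) ^ 2 * r ^ (e+2-1)) ≠ 0 := by
      simp only [one_pow, one_mul]
      rw [integral_pow]
      have : (0:ℝ)^(e+2-1+1) = 0 := zero_pow (by omega)
      rw [this]
      have : 0 < (R ^ (e + 2 - 1 + 1) - 0) / (↑(e + 2 - 1) + 1) := by
        apply div_pos
        · simp only [sub_zero]; positivity
        · positivity
      exact ne_of_gt this
    exact ⟨_, (fun _ => (1:ℝ)), contDiff_const, hden1, rfl⟩
  -- conclude
  have hsInf : -x' ≤ lam1Ball (e+2) R α := le_csInf hne hlow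
  have hB0 : -(1 / 2) * α ^ 2 + (((e+2:ℕ):ℝ) - 1) / (2 * R) * α + α / (2 * R) * s = -x := by
    have h2R : (2*R) ≠ 0 := by positivity
    push_cast
    field_simp
    ring_nf
    linear_combination hxR
  have heps : 0 < (2*a+1)*M*R^2 := by
    have : 0 < 2*a+1 := by linarith
    positivity
  have hlt : -(1 / 2) * α ^ 2 + (((e+2:ℕ):ℝ) - 1) / (2 * R) * α + α / (2 * R) * s < -x' := by
    rw [hB0, hx'_def]
    linarith
  calc -(1 / 2) * α ^ 2 + (((e+2:ℕ):ℝ) - 1) / (2 * R) * α + α / (2 * R) * s < -x' := hlt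
    _ ≤ lam1Ball (e+2) R α := hsInf
end

section
/- Let d ≥ 2, α < 0, and 0 < R₁ < R₂. The first Robin eigenvalue of the spherical shell A_{R₁,R₂} = B_{R₂} \ closure(B_{R₁}) in ℝ^d satisfies λ₁^α(A_{R₁,R₂}) > −α² + ((d−1)/R₂ + 2/(R₂−R₁))·α. -/
set_option maxHeartbeats 1000000


open MeasureTheory intervalIntegral

/-- The first Robin eigenvalue of the spherical shell `A_{R₁,R₂} ⊂ ℝ^d`, given by the
radial Rayleigh quotient
`(∫_{R₁}^{R₂} φ'(r)² r^{d-1} dr + α R₁^{d-1} φ(R₁)² + α R₂^{d-1} φ(R₂)²) /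
  ∫_{R₁}^{R₂} φ(r)² r^{d-1} dr`
over nonzero `C¹` functions `φ` on `[R₁,R₂]`. -/
noncomputable def lam1Shell (d : ℕ) (R₁ R₂ α : ℝ) : ℝ :=
  sInf { q : ℝ | ∃ φ : ℝ → ℝ, ContDiff ℝ 1 φ ∧
    (∫ r in R₁..R₂, (φ r) ^ 2 * r ^ (d - 1)) ≠ 0 ∧
    q = ((∫ r in R₁..R₂, (deriv φ r) ^ 2 * r ^ (d - 1))
          + α * R₁ ^ (d - 1) * (φ R₁) ^ 2 + α * R₂ ^ (d - 1) * (φ R₂) ^ 2) /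
        (∫ r in R₁..R₂, (φ r) ^ 2 * r ^ (d - 1)) }

/-- Pointwise estimate used for the shell Rayleigh quotient bound. -/
lemma shell_pointwise (d : ℕ) (hd : 2 ≤ d) (R₁ R₂ α ε : ℝ)
    (h₁ : 0 < R₁) (h₁₂ : R₁ < R₂) (hα : α < 0) (hεpos : 0 < ε)
    (hε1 : ε * (R₂ - R₁) ^ 2 ≤ 2)
    (hε2 : ε * (R₂ * (R₂ - R₁) * (2 * R₂ + ((d : ℝ) - 1) * (R₂ - R₁))) ≤ ((d : ℝ) - 1) * (R₁ + R₂))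
    (r x y : ℝ) (hr : r ∈ Set.Icc R₁ R₂) :
    ((-α ^ 2 + (((d : ℝ) - 1) / R₂ + 2 / (R₂ - R₁)) * α) + (-α * ε * (R₂ - R₁))) * (x ^ 2 * r ^ (d - 1))
      ≤ y ^ 2 * r ^ (d - 1)
        + α * ((2 / (R₂ - R₁) + ε * ((R₁ + R₂) - 2 * r)) * (x ^ 2 * r ^ (d - 1))
            + ((2 * r - (R₁ + R₂)) / (R₂ - R₁) + ε * ((R₂ - r) * (r - R₁)))
              * (2 * x * y * r ^ (d - 1) + x ^ 2 * (((d : ℝ) - 1) * r ^ (d - 2)))) := by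
  obtain ⟨hr1, hr2⟩ := hr
  have hL0 : 0 < R₂ - R₁ := sub_pos.2 h₁₂
  have hR₂0 : 0 < R₂ := h₁.trans h₁₂
  have hr0 : 0 < r := h₁.trans_le hr1
  have hD10 : 1 ≤ (d : ℝ) - 1 := by
    have : (2 : ℝ) ≤ (d : ℝ) := by exact_mod_cast hd
    linarith
  set D1 : ℝ := (d : ℝ) - 1 with hD1
  set L : ℝ := R₂ - R₁ with hLdef
  set S : ℝ := R₁ + R₂ with hSdef
  set n : ℝ := (2 * r - S) / L + ε * ((R₂ - r) * (r - R₁)) with hn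
  set T : ℝ := -α ^ 2 + (D1 / R₂ + 2 / L) * α with hT
  set m : ℝ := -α * ε * L with hm
  have hσ : 0 ≤ (R₂ - r) * (r - R₁) := mul_nonneg (by linarith) (by linarith)
  have hnge : -1 ≤ n := by
    have h1 : (-1 : ℝ) ≤ (2 * r - S) / L := by
      rw [le_div_iff₀ hL0]; simp only [hSdef, hLdef]; linarith
    have h2 : 0 ≤ ε * ((R₂ - r) * (r - R₁)) := mul_nonneg hεpos.le hσ
    simp only [hn]; linarith
  have hnle : n ≤ 1 := by
    have hn_eq : n = ((2 * r - S) + ε * ((R₂ - r) * (r - R₁)) * L) / L := by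
      rw [hn, add_div, mul_div_cancel_right₀ _ hL0.ne']
    rw [hn_eq, div_le_one hL0]
    have h3 : ε * ((R₂ - r) * (r - R₁)) * L ≤ ε * ((R₂ - r) * L) * L := by
      have h : (R₂ - r) * (r - R₁) ≤ (R₂ - r) * L := by
        apply mul_le_mul_of_nonneg_left (by simp only [hLdef]; linarith) (by linarith)
      exact mul_le_mul_of_nonneg_right (mul_le_mul_of_nonneg_left h hεpos.le) hL0.le
    have h4 : ε * ((R₂ - r) * L) * L ≤ 2 * (R₂ - r) := by
      have := mul_le_mul_of_nonneg_left hε1 (show (0:ℝ) ≤ R₂ - r by linarith)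
      linarith
    simp only [hSdef, hLdef] at *
    linarith
  have hn2 : n ^ 2 ≤ 1 := by nlinarith
  -- the scalar inequality
  have hGr : 0 ≤ -α ^ 2 * n ^ 2 * r + α * (2 / L + ε * (S - 2 * r)) * r + α * D1 * n - (T + m) * r := by
    have hid : -α ^ 2 * n ^ 2 * r + α * (2 / L + ε * (S - 2 * r)) * r + α * D1 * n - (T + m) * r
        = α ^ 2 * (1 - n ^ 2) * r
          + (-α) * ((D1 * S * (R₂ - r)) / (R₂ * L) - ε * (R₂ - r) * (2 * r + D1 * (r - R₁))) := by
      simp only [hn, hT, hm]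
      field_simp
      ring
    rw [hid]
    have h2 : 0 ≤ (D1 * S * (R₂ - r)) / (R₂ * L) - ε * (R₂ - r) * (2 * r + D1 * (r - R₁)) := by
      rw [sub_nonneg, le_div_iff₀ (by positivity : (0:ℝ) < R₂ * L)]
      have h3 : ε * (2 * r + D1 * (r - R₁)) ≤ ε * (2 * R₂ + D1 * L) := by
        apply mul_le_mul_of_nonneg_left _ hεpos.le
        have : r - R₁ ≤ L := by simp only [hLdef]; linarith
        nlinarith
      have h4 : ε * (R₂ - r) * (2 * r + D1 * (r - R₁)) * (R₂ * L) ≤ (R₂ - r) * (ε * (R₂ * L * (2 * R₂ + D1 * L))) := by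
        have h5 : ε * (2 * r + D1 * (r - R₁)) * (R₂ * L) ≤ ε * (2 * R₂ + D1 * L) * (R₂ * L) :=
          mul_le_mul_of_nonneg_right h3 (by positivity)
        nlinarith [show (0:ℝ) ≤ R₂ - r by linarith, show (0:ℝ) < R₂*L by positivity]
      have h6 : (R₂ - r) * (ε * (R₂ * L * (2 * R₂ + D1 * L))) ≤ (R₂ - r) * (D1 * S) :=
        mul_le_mul_of_nonneg_left hε2 (by linarith)
      nlinarith
    have h1 : 0 ≤ α ^ 2 * (1 - n ^ 2) * r := by
      apply mul_nonneg (mul_nonneg (sq_nonneg α) (by linarith)) hr0.le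
    have hnegα : 0 ≤ -α := by linarith
    exact add_nonneg h1 (mul_nonneg hnegα h2)
  have hidx : d - 1 = (d - 2) + 1 := by omega
  have hfin : y ^ 2 * r ^ (d - 1)
        + α * ((2 / L + ε * (S - 2 * r)) * (x ^ 2 * r ^ (d - 1))
            + n * (2 * x * y * r ^ (d - 1) + x ^ 2 * (D1 * r ^ (d - 2))))
        - (T + m) * (x ^ 2 * r ^ (d - 1))
      = r ^ (d - 2) * ((y + α * n * x) ^ 2 * r
          + (-α ^ 2 * n ^ 2 * r + α * (2 / L + ε * (S - 2 * r)) * r + α * D1 * n - (T + m) * r) * x ^ 2) := by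
    rw [hidx, pow_succ]
    ring
  have hrd2 : (0:ℝ) ≤ r ^ (d - 2) := pow_nonneg hr0.le _
  linarith [mul_nonneg hrd2 (add_nonneg (mul_nonneg (sq_nonneg (y + α * n * x)) hr0.le) (mul_nonneg hGr (sq_nonneg x)))]

/-- Rayleigh quotient lower bound for each admissible test function. -/
lemma shell_quotient_bound (d : ℕ) (hd : 2 ≤ d) (R₁ R₂ α : ℝ)
    (h₁ : 0 < R₁) (h₁₂ : R₁ < R₂) (hα : α < 0) (ε : ℝ) (hεpos : 0 < ε)
    (hε1 : ε * (R₂ - R₁) ^ 2 ≤ 2)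
    (hε2 : ε * (R₂ * (R₂ - R₁) * (2 * R₂ + ((d : ℝ) - 1) * (R₂ - R₁))) ≤ ((d : ℝ) - 1) * (R₁ + R₂))
    (φ : ℝ → ℝ) (hφ : ContDiff ℝ 1 φ)
    (hDne : (∫ r in R₁..R₂, (φ r) ^ 2 * r ^ (d - 1)) ≠ 0) :
    ((-α ^ 2 + (((d : ℝ) - 1) / R₂ + 2 / (R₂ - R₁)) * α) + (-α * ε * (R₂ - R₁)))
      ≤ ((∫ r in R₁..R₂, (deriv φ r) ^ 2 * r ^ (d - 1))
          + α * R₁ ^ (d - 1) * (φ R₁) ^ 2 + α * R₂ ^ (d - 1) * (φ R₂) ^ 2) /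
        (∫ r in R₁..R₂, (φ r) ^ 2 * r ^ (d - 1)) := by
  have key := fun r hr x y => shell_pointwise d hd R₁ R₂ α ε h₁ h₁₂ hα hεpos hε1 hε2 r x y hr
  have hL0 : 0 < R₂ - R₁ := sub_pos.2 h₁₂
  have hR₂0 : 0 < R₂ := h₁.trans h₁₂
  have hInn : 0 ≤ ∫ r in R₁..R₂, (φ r) ^ 2 * r ^ (d - 1) :=
    intervalIntegral.integral_nonneg h₁₂.le
      (fun x hx => mul_nonneg (sq_nonneg _) (pow_nonneg (h₁.le.trans hx.1) _))
  have hIpos : 0 < ∫ r in R₁..R₂, (φ r) ^ 2 * r ^ (d - 1) :=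
    lt_of_le_of_ne hInn (Ne.symm hDne)
  rw [le_div_iff₀ hIpos]
  -- derivative facts
  have hφd : ∀ s : ℝ, HasDerivAt φ (deriv φ s) s :=
    fun s => (hφ.differentiable one_ne_zero s).hasDerivAt
  have hcast : ((d - 1 : ℕ) : ℝ) = (d : ℝ) - 1 := by
    rw [Nat.cast_sub (by omega : 1 ≤ d)]; simp
  have hpow : ∀ s : ℝ, HasDerivAt (fun u : ℝ => u ^ (d - 1)) (((d : ℝ) - 1) * s ^ (d - 2)) s := by
    intro s
    have h := hasDerivAt_pow (d - 1) s
    rw [show d - 1 - 1 = d - 2 from by omega, hcast] at h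
    exact h
  have hw : ∀ s : ℝ, HasDerivAt (fun u => (φ u) ^ 2 * u ^ (d - 1))
      (2 * (φ s) * (deriv φ s) * s ^ (d - 1) + (φ s) ^ 2 * (((d : ℝ) - 1) * s ^ (d - 2))) s := by
    intro s
    have h1 := (((hφd s).pow 2).mul (hpow s))
    refine h1.congr_deriv ?_
    simp only [Pi.pow_apply, Nat.cast_ofNat]
    ring
  have hn' : ∀ s : ℝ, HasDerivAt
      (fun u => (2 * u - (R₁ + R₂)) / (R₂ - R₁) + ε * ((R₂ - u) * (u - R₁)))
      (2 / (R₂ - R₁) + ε * ((R₁ + R₂) - 2 * s)) s := by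
    intro s
    have h1 : HasDerivAt (fun u : ℝ => (2 * u - (R₁ + R₂)) / (R₂ - R₁)) (2 / (R₂ - R₁)) s := by
      have := (((hasDerivAt_id s).const_mul 2).sub_const (R₁ + R₂)).div_const (R₂ - R₁)
      simpa using this
    have h2 : HasDerivAt (fun u : ℝ => (R₂ - u) * (u - R₁)) ((R₁ + R₂) - 2 * s) s := by
      have h := ((hasDerivAt_id s).const_sub R₂).mul ((hasDerivAt_id s).sub_const R₁)
      simp only [id_eq] at h
      refine h.congr_deriv ?_
      ring
    exact h1.add (h2.const_mul ε)
  set P : ℝ → ℝ := fun s => α * (((2 * s - (R₁ + R₂)) / (R₂ - R₁) + ε * ((R₂ - s) * (s - R₁)))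
      * ((φ s) ^ 2 * s ^ (d - 1))) with hPdef
  set P' : ℝ → ℝ := fun s => α * ((2 / (R₂ - R₁) + ε * ((R₁ + R₂) - 2 * s)) * ((φ s) ^ 2 * s ^ (d - 1))
      + ((2 * s - (R₁ + R₂)) / (R₂ - R₁) + ε * ((R₂ - s) * (s - R₁)))
        * (2 * (φ s) * (deriv φ s) * s ^ (d - 1) + (φ s) ^ 2 * (((d : ℝ) - 1) * s ^ (d - 2)))) with hP'def
  have hP : ∀ s : ℝ, HasDerivAt P (P' s) s := fun s => ((hn' s).mul (hw s)).const_mul α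
  have hdc : Continuous (deriv φ) := hφ.continuous_deriv le_rfl
  have hφc : Continuous φ := hφ.continuous
  have hc1 : Continuous fun s : ℝ => (deriv φ s) ^ 2 * s ^ (d - 1) :=
    (hdc.pow 2).mul (continuous_pow _)
  have hcP' : Continuous P' := by
    rw [hP'def]
    fun_prop
  have hint1 : IntervalIntegrable (fun s : ℝ => (deriv φ s) ^ 2 * s ^ (d - 1)) volume R₁ R₂ :=
    hc1.intervalIntegrable _ _
  have hintP' : IntervalIntegrable P' volume R₁ R₂ := hcP'.intervalIntegrable _ _
  have hFTC : (∫ s in R₁..R₂, P' s) = P R₂ - P R₁ :=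
    intervalIntegral.integral_eq_sub_of_hasDerivAt (fun s _ => hP s) hintP'
  have hPR2 : P R₂ = α * ((φ R₂) ^ 2 * R₂ ^ (d - 1)) := by
    rw [hPdef]
    have h2 : (2 * R₂ - (R₁ + R₂)) / (R₂ - R₁) + ε * ((R₂ - R₂) * (R₂ - R₁)) = 1 := by
      rw [sub_self, zero_mul, mul_zero, add_zero, div_eq_one_iff_eq hL0.ne']
      ring
    simp only [h2, one_mul]
  have hPR1 : P R₁ = -(α * ((φ R₁) ^ 2 * R₁ ^ (d - 1))) := by
    rw [hPdef]
    have h2 : (2 * R₁ - (R₁ + R₂)) / (R₂ - R₁) + ε * ((R₂ - R₁) * (R₁ - R₁)) = -1 := by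
      rw [sub_self, mul_zero, mul_zero, add_zero, div_eq_iff hL0.ne']
      ring
    simp only [h2]
    ring
  have hbd : α * R₁ ^ (d - 1) * (φ R₁) ^ 2 + α * R₂ ^ (d - 1) * (φ R₂) ^ 2 = P R₂ - P R₁ := by
    rw [hPR2, hPR1]; ring
  have hNum : (∫ r in R₁..R₂, (deriv φ r) ^ 2 * r ^ (d - 1))
          + α * R₁ ^ (d - 1) * (φ R₁) ^ 2 + α * R₂ ^ (d - 1) * (φ R₂) ^ 2
      = ∫ s in R₁..R₂, ((deriv φ s) ^ 2 * s ^ (d - 1) + P' s) := by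
    rw [intervalIntegral.integral_add hint1 hintP', hFTC]
    linarith [hbd]
  have hmono : (∫ s in R₁..R₂,
        ((-α ^ 2 + (((d : ℝ) - 1) / R₂ + 2 / (R₂ - R₁)) * α) + (-α * ε * (R₂ - R₁))) * ((φ s) ^ 2 * s ^ (d - 1)))
      ≤ ∫ s in R₁..R₂, ((deriv φ s) ^ 2 * s ^ (d - 1) + P' s) := by
    apply intervalIntegral.integral_mono_on h₁₂.le
      ((continuous_const.mul ((hφc.pow 2).mul (continuous_pow _))).intervalIntegrable _ _)
      (hint1.add hintP')
    intro r hr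
    have k := key r hr (φ r) (deriv φ r)
    rw [hP'def]
    exact k
  calc ((-α ^ 2 + (((d : ℝ) - 1) / R₂ + 2 / (R₂ - R₁)) * α) + (-α * ε * (R₂ - R₁)))
        * ∫ r in R₁..R₂, (φ r) ^ 2 * r ^ (d - 1)
      = ∫ s in R₁..R₂,
          ((-α ^ 2 + (((d : ℝ) - 1) / R₂ + 2 / (R₂ - R₁)) * α) + (-α * ε * (R₂ - R₁))) * ((φ s) ^ 2 * s ^ (d - 1)) :=
        (intervalIntegral.integral_const_mul _ _).symm
    _ ≤ _ := hmono
    _ = _ := hNum.symm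

theorem lam1Shell_lower_bound (d : ℕ) (hd : 2 ≤ d) (R₁ R₂ α : ℝ)
    (h₁ : 0 < R₁) (h₁₂ : R₁ < R₂) (hα : α < 0) :
    lam1Shell d R₁ R₂ α > -α ^ 2 + (((d : ℝ) - 1) / R₂ + 2 / (R₂ - R₁)) * α := by
  have hL0 : 0 < R₂ - R₁ := sub_pos.2 h₁₂
  have hR₂0 : 0 < R₂ := h₁.trans h₁₂
  have hD10 : 1 ≤ (d : ℝ) - 1 := by
    have : (2 : ℝ) ≤ (d : ℝ) := by exact_mod_cast hd
    linarith
  have hden : 0 < R₂ * (R₂ - R₁) * (2 * R₂ + ((d : ℝ) - 1) * (R₂ - R₁)) := by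
    apply mul_pos (mul_pos hR₂0 hL0)
    nlinarith
  set ε : ℝ := min (2 / (R₂ - R₁) ^ 2)
    ((((d : ℝ) - 1) * (R₁ + R₂)) / (R₂ * (R₂ - R₁) * (2 * R₂ + ((d : ℝ) - 1) * (R₂ - R₁)))) with hεdef
  have hεpos : 0 < ε := lt_min (by positivity) (div_pos (by nlinarith) hden)
  have hε1 : ε * (R₂ - R₁) ^ 2 ≤ 2 :=
    (le_div_iff₀ (by positivity)).1 (min_le_left _ _)
  have hε2 : ε * (R₂ * (R₂ - R₁) * (2 * R₂ + ((d : ℝ) - 1) * (R₂ - R₁))) ≤ ((d : ℝ) - 1) * (R₁ + R₂) :=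
    (le_div_iff₀ hden).1 (min_le_right _ _)
  have hm : 0 < -α * ε * (R₂ - R₁) := mul_pos (mul_pos (neg_pos.2 hα) hεpos) hL0
  have hone : (∫ r in R₁..R₂, ((1:ℝ)) ^ 2 * r ^ (d - 1)) ≠ 0 := by
    apply ne_of_gt
    simp only [one_pow, one_mul]
    apply intervalIntegral.intervalIntegral_pos_of_pos_on
      ((continuous_pow _).intervalIntegrable _ _)
      (fun x hx => pow_pos (h₁.trans hx.1) _) h₁₂
  have hlower : (-α ^ 2 + (((d : ℝ) - 1) / R₂ + 2 / (R₂ - R₁)) * α) + (-α * ε * (R₂ - R₁))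
      ≤ lam1Shell d R₁ R₂ α := by
    unfold lam1Shell
    apply le_csInf
    · exact ⟨_, (fun _ => (1:ℝ)), contDiff_const, hone, rfl⟩
    · rintro q ⟨φ, hφ, hDne, rfl⟩
      exact shell_quotient_bound d hd R₁ R₂ α h₁ h₁₂ hα ε hεpos hε1 hε2 φ hφ hDne
  linarith
end

section
/- Let d ≥ 2, α < 0, and 0 < R₁ < R₂. The first Robin eigenvalue of the spherical shell A_{R₁,R₂} in ℝ^d satisfies λ₁^α(A_{R₁,R₂}) < −α² + ((d−1)/R₂)·α. -/
open MeasureTheory intervalIntegral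

set_option maxHeartbeats 2000000 in
lemma shell_bddBelow (d : ℕ) (R₁ R₂ α : ℝ) (h₁ : 0 < R₁) (h₁₂ : R₁ < R₂) :
    BddBelow { q : ℝ | ∃ φ : ℝ → ℝ, ContDiff ℝ 1 φ ∧
    (∫ r in R₁..R₂, (φ r) ^ 2 * r ^ (d - 1)) ≠ 0 ∧
    q = ((∫ r in R₁..R₂, (deriv φ r) ^ 2 * r ^ (d - 1))
          + α * R₁ ^ (d - 1) * (φ R₁) ^ 2 + α * R₂ ^ (d - 1) * (φ R₂) ^ 2) /
        (∫ r in R₁..R₂, (φ r) ^ 2 * r ^ (d - 1)) } := by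
  have hR₂ : 0 < R₂ := h₁.trans h₁₂
  have hle : R₁ ≤ R₂ := h₁₂.le
  set m : ℝ := R₁ ^ (d - 1) with hm
  set M : ℝ := R₂ ^ (d - 1) with hM
  have hm0 : 0 < m := pow_pos h₁ _
  have hM0 : 0 < M := pow_pos hR₂ _
  set a : ℝ := |α| with ha
  have ha0 : 0 ≤ a := abs_nonneg α
  set c : ℝ := a * (m + M) with hc
  have hc0 : 0 ≤ c := mul_nonneg ha0 (by linarith)
  set ε : ℝ := m / (c + 1) with hε
  have hε0 : 0 < ε := div_pos hm0 (by linarith)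
  have hcε : c * ε ≤ m := by
    have h1 : c * ε ≤ (c + 1) * ε := by nlinarith
    have h2 : (c + 1) * ε = m := by rw [hε]; field_simp
    linarith
  set K : ℝ := c / ((R₂ - R₁) * m) + c * (c + 1) / (m * m) with hK
  refine ⟨-K, fun q hq => ?_⟩
  obtain ⟨φ, hφ, hD0, rfl⟩ := hq
  have hcφ : Continuous φ := hφ.continuous
  have hcφ' : Continuous (deriv φ) := hφ.continuous_deriv le_rfl
  -- weight bounds
  have hwlb : ∀ r ∈ Set.Icc R₁ R₂, m ≤ r ^ (d - 1) := fun r hr =>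
    pow_le_pow_left₀ h₁.le hr.1 _
  have hw0 : ∀ r ∈ Set.Icc R₁ R₂, (0:ℝ) ≤ r ^ (d - 1) := fun r hr =>
    pow_nonneg (h₁.le.trans hr.1) _
  set D : ℝ := ∫ r in R₁..R₂, (φ r) ^ 2 * r ^ (d - 1) with hD
  set N₀ : ℝ := ∫ r in R₁..R₂, (deriv φ r) ^ 2 * r ^ (d - 1) with hN₀
  set P : ℝ := ∫ r in R₁..R₂, (φ r) ^ 2 with hP
  set P' : ℝ := ∫ r in R₁..R₂, (deriv φ r) ^ 2 with hP'
  -- integrability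
  have iD : IntervalIntegrable (fun r => (φ r) ^ 2 * r ^ (d - 1)) volume R₁ R₂ :=
    (((hcφ.pow 2).mul (continuous_pow _))).intervalIntegrable _ _
  have iN : IntervalIntegrable (fun r => (deriv φ r) ^ 2 * r ^ (d - 1)) volume R₁ R₂ :=
    (((hcφ'.pow 2).mul (continuous_pow _))).intervalIntegrable _ _
  have iP : IntervalIntegrable (fun r => (φ r) ^ 2) volume R₁ R₂ :=
    (hcφ.pow 2).intervalIntegrable _ _
  have iP' : IntervalIntegrable (fun r => (deriv φ r) ^ 2) volume R₁ R₂ :=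
    (hcφ'.pow 2).intervalIntegrable _ _
  have hDnn : 0 ≤ D := intervalIntegral.integral_nonneg hle
    (fun r hr => mul_nonneg (sq_nonneg _) (hw0 r hr))
  have hDpos : 0 < D := lt_of_le_of_ne hDnn (Ne.symm hD0)
  have hN0nn : 0 ≤ N₀ := intervalIntegral.integral_nonneg hle
    (fun r hr => mul_nonneg (sq_nonneg _) (hw0 r hr))
  have hPnn : 0 ≤ P := intervalIntegral.integral_nonneg hle (fun r _ => sq_nonneg _)
  have hP'nn : 0 ≤ P' := intervalIntegral.integral_nonneg hle (fun r _ => sq_nonneg _)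
  -- P * m ≤ D and P' * m ≤ N₀
  have hPD : P * m ≤ D := by
    have : (∫ r in R₁..R₂, (φ r) ^ 2 * m) ≤ D :=
      intervalIntegral.integral_mono_on hle (iP.mul_const m) iD
        (fun r hr => mul_le_mul_of_nonneg_left (hwlb r hr) (sq_nonneg _))
    rwa [intervalIntegral.integral_mul_const] at this
  have hP'N : P' * m ≤ N₀ := by
    have : (∫ r in R₁..R₂, (deriv φ r) ^ 2 * m) ≤ N₀ :=
      intervalIntegral.integral_mono_on hle (iP'.mul_const m) iN
        (fun r hr => mul_le_mul_of_nonneg_left (hwlb r hr) (sq_nonneg _))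
    rwa [intervalIntegral.integral_mul_const] at this
  -- min point of φ²
  obtain ⟨r₀, hr₀mem, hr₀min⟩ := isCompact_Icc.exists_isMinOn (Set.nonempty_Icc.2 hle)
    ((hcφ.pow 2).continuousOn : ContinuousOn (fun r => (φ r) ^ 2) (Set.Icc R₁ R₂))
  have hr₀D : φ r₀ ^ 2 * ((R₂ - R₁) * m) ≤ D := by
    have : (∫ r in R₁..R₂, φ r₀ ^ 2 * m) ≤ D :=
      intervalIntegral.integral_mono_on hle (intervalIntegrable_const) iD
        (fun r hr => mul_le_mul (hr₀min hr) (hwlb r hr) hm0.le (sq_nonneg _))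
    rw [intervalIntegral.integral_const, smul_eq_mul] at this
    nlinarith [this]
  -- trace inequality
  have htrace : ∀ R ∈ Set.Icc R₁ R₂, φ R ^ 2 ≤ φ r₀ ^ 2 + (ε * P' + (1/ε) * P) := by
    intro R hR
    have hFTC : φ R ^ 2 - φ r₀ ^ 2 = ∫ r in r₀..R, 2 * φ r * deriv φ r := by
      refine (intervalIntegral.integral_eq_sub_of_hasDerivAt (f := fun r => φ r ^ 2)
        (fun r _ => ?_) (((continuous_const.mul hcφ).mul hcφ').intervalIntegrable _ _)).symm
      have hh := ((hφ.differentiable one_ne_zero) r).hasDerivAt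
      simpa [pow_one, mul_comm] using hh.fun_pow 2
    have young : ∀ u v : ℝ, 2 * u * v ≤ ε * v ^ 2 + (1/ε) * u ^ 2 := by
      intro u v
      rw [← sub_nonneg]
      have heq : ε * v ^ 2 + (1/ε) * u ^ 2 - 2 * u * v = (ε * v - u) ^ 2 / ε := by
        field_simp; ring
      rw [heq]; positivity
    have habs : |∫ r in r₀..R, 2 * φ r * deriv φ r|
        ≤ ∫ r in R₁..R₂, (ε * (deriv φ r) ^ 2 + (1/ε) * (φ r) ^ 2) := by
      have hptnn : ∀ r, 0 ≤ ε * (deriv φ r) ^ 2 + (1/ε) * (φ r) ^ 2 := fun r =>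
        add_nonneg (mul_nonneg hε0.le (sq_nonneg _)) (mul_nonneg (by positivity) (sq_nonneg _))
      have hintB : IntervalIntegrable (fun r => ε * (deriv φ r) ^ 2 + (1/ε) * (φ r) ^ 2)
          volume R₁ R₂ :=
        ((continuous_const.mul (hcφ'.pow 2)).add (continuous_const.mul (hcφ.pow 2))).intervalIntegrable _ _
      rcases le_total r₀ R with h | h
      · calc |∫ r in r₀..R, 2 * φ r * deriv φ r|
            ≤ ∫ r in r₀..R, |2 * φ r * deriv φ r| :=
              intervalIntegral.abs_integral_le_integral_abs h
          _ ≤ ∫ r in r₀..R, (ε * (deriv φ r) ^ 2 + (1/ε) * (φ r) ^ 2) := by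
              refine intervalIntegral.integral_mono_on h
                (((continuous_const.mul hcφ).mul hcφ').abs.intervalIntegrable _ _)
                (hintB.mono_set ?_) (fun r _ => ?_)
              · exact Set.uIcc_subset_uIcc (by rw [Set.uIcc_of_le hle]; exact hr₀mem)
                  (by rw [Set.uIcc_of_le hle]; exact hR)
              · rw [abs_mul, abs_mul, abs_two, ← sq_abs (φ r), ← sq_abs (deriv φ r)]
                exact young _ _
          _ ≤ _ := intervalIntegral.integral_mono_interval hr₀mem.1 h hR.2
                (Filter.Eventually.of_forall (fun r => hptnn r)) hintB
      · rw [intervalIntegral.integral_symm, abs_neg]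
        calc |∫ r in R..r₀, 2 * φ r * deriv φ r|
            ≤ ∫ r in R..r₀, |2 * φ r * deriv φ r| :=
              intervalIntegral.abs_integral_le_integral_abs h
          _ ≤ ∫ r in R..r₀, (ε * (deriv φ r) ^ 2 + (1/ε) * (φ r) ^ 2) := by
              refine intervalIntegral.integral_mono_on h
                (((continuous_const.mul hcφ).mul hcφ').abs.intervalIntegrable _ _)
                (hintB.mono_set ?_) (fun r _ => ?_)
              · exact Set.uIcc_subset_uIcc (by rw [Set.uIcc_of_le hle]; exact hR)
                  (by rw [Set.uIcc_of_le hle]; exact hr₀mem)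
              · rw [abs_mul, abs_mul, abs_two, ← sq_abs (φ r), ← sq_abs (deriv φ r)]
                exact young _ _
          _ ≤ _ := intervalIntegral.integral_mono_interval hR.1 h hr₀mem.2
                (Filter.Eventually.of_forall (fun r => hptnn r)) hintB
    have hsplit : (∫ r in R₁..R₂, (ε * (deriv φ r) ^ 2 + (1/ε) * (φ r) ^ 2))
        = ε * P' + (1/ε) * P := by
      rw [intervalIntegral.integral_add (iP'.const_mul ε) (iP.const_mul (1/ε)),
        intervalIntegral.integral_const_mul, intervalIntegral.integral_const_mul]
    have h2 : φ R ^ 2 - φ r₀ ^ 2 ≤ ε * P' + (1/ε) * P := by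
      rw [hFTC]
      calc (∫ r in r₀..R, 2 * φ r * deriv φ r) ≤ |∫ r in r₀..R, 2 * φ r * deriv φ r| :=
            le_abs_self _
        _ ≤ _ := hsplit ▸ habs
    linarith
  -- assemble
  set T : ℝ := φ r₀ ^ 2 + (ε * P' + (1/ε) * P) with hT
  have hTnn : 0 ≤ T := by positivity
  have hR1T : φ R₁ ^ 2 ≤ T := htrace R₁ ⟨le_rfl, hle⟩
  have hR2T : φ R₂ ^ 2 ≤ T := htrace R₂ ⟨hle, le_rfl⟩
  clear_value D N₀ P P' T m M a c ε K
  have hb1 : -(a * m * T) ≤ α * m * φ R₁ ^ 2 := by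
    have h1 : -(a) * (m * φ R₁ ^ 2) ≤ α * (m * φ R₁ ^ 2) :=
      mul_le_mul_of_nonneg_right (by rw [ha]; exact neg_abs_le α) (by positivity)
    have h2 : a * m * φ R₁ ^ 2 ≤ a * m * T := mul_le_mul_of_nonneg_left hR1T (mul_nonneg ha0 hm0.le)
    nlinarith [h1, h2]
  have hb2 : -(a * M * T) ≤ α * M * φ R₂ ^ 2 := by
    have h1 : -(a) * (M * φ R₂ ^ 2) ≤ α * (M * φ R₂ ^ 2) :=
      mul_le_mul_of_nonneg_right (by rw [ha]; exact neg_abs_le α) (by positivity)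
    have h2 : a * M * φ R₂ ^ 2 ≤ a * M * T := mul_le_mul_of_nonneg_left hR2T (mul_nonneg ha0 hM0.le)
    nlinarith [h1, h2]
  -- bound the pieces of c * T
  have hA : c * φ r₀ ^ 2 ≤ c / ((R₂ - R₁) * m) * D := by
    have hpos : (0:ℝ) < (R₂ - R₁) * m := by nlinarith
    rw [div_mul_eq_mul_div, le_div_iff₀ hpos]
    nlinarith
  have hBp : c * (ε * P') ≤ N₀ := by
    nlinarith [mul_le_mul_of_nonneg_right hcε hP'nn]
  have hCp : c * ((1/ε) * P) ≤ c * (c + 1) / (m * m) * D := by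
    have h1 : (1/ε) = (c + 1) / m := by rw [hε]; field_simp
    rw [h1, ← sub_nonneg]
    have h3 : c * (c + 1) / (m * m) * D - c * ((c + 1) / m * P)
        = (c * (c + 1) * (D - P * m)) / (m * m) := by field_simp
    rw [h3]
    exact div_nonneg (mul_nonneg (by positivity) (by linarith)) (by positivity)
  have hnum : -(K * D) ≤ N₀ + α * m * φ R₁ ^ 2 + α * M * φ R₂ ^ 2 := by
    have hcT : c * T = c * φ r₀ ^ 2 + c * (ε * P') + c * ((1/ε) * P) := by rw [hT]; ring
    have hKD : K * D = c / ((R₂ - R₁) * m) * D + c * (c + 1) / (m * m) * D := by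
      rw [hK]; ring
    have haT : a * m * T + a * M * T = c * T := by rw [hc]; ring
    linarith
  rw [le_div_iff₀ hDpos]
  linarith [hnum]

set_option maxHeartbeats 1000000 in
theorem lam1Shell_upper_bound (d : ℕ) (hd : 2 ≤ d) (R₁ R₂ α : ℝ)
    (h₁ : 0 < R₁) (h₁₂ : R₁ < R₂) (hα : α < 0) :
    lam1Shell d R₁ R₂ α < -α ^ 2 + ((d : ℝ) - 1) / R₂ * α := by
  have hR₂ : 0 < R₂ := h₁.trans h₁₂
  have hle : R₁ ≤ R₂ := h₁₂.le
  -- test function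
  set φ : ℝ → ℝ := fun r => Real.exp (α * (R₂ - r)) with hφdef
  have hφc : ContDiff ℝ 1 φ :=
    Real.contDiff_exp.comp (contDiff_const.mul (contDiff_const.sub contDiff_id))
  have hder : ∀ r, HasDerivAt φ (-α * φ r) r := by
    intro r
    have h1 : HasDerivAt (fun r : ℝ => α * (R₂ - r)) (-α) r := by
      simpa using ((hasDerivAt_id r).const_sub R₂).const_mul α
    exact h1.exp.congr_deriv (by simp only [hφdef]; ring)
  have hderiv : ∀ r, deriv φ r = -α * φ r := fun r => (hder r).deriv
  -- basic quantities
  set E : ℝ → ℝ := fun r => Real.exp (2 * α * (R₂ - r)) with hE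
  have hφsq : ∀ r, φ r ^ 2 = E r := by
    intro r
    rw [hφdef, hE]
    simp only []
    rw [sq, ← Real.exp_add]
    ring_nf
  set D : ℝ := ∫ r in R₁..R₂, (φ r) ^ 2 * r ^ (d - 1) with hD
  set I : ℝ := ∫ r in R₁..R₂, E r * r ^ (d - 2) with hI
  have hEc : Continuous E := Real.continuous_exp.comp (continuous_const.mul
    (continuous_const.sub continuous_id))
  have hEpos : ∀ r, 0 < E r := fun r => Real.exp_pos _
  have hcφ : Continuous φ := hφc.continuous
  have iD : IntervalIntegrable (fun r => (φ r) ^ 2 * r ^ (d - 1)) volume R₁ R₂ :=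
    ((hcφ.pow 2).mul (continuous_pow _)).intervalIntegrable _ _
  have iI : IntervalIntegrable (fun r => E r * r ^ (d - 2)) volume R₁ R₂ :=
    (hEc.mul (continuous_pow _)).intervalIntegrable _ _
  have iDE : IntervalIntegrable (fun r => E r * r ^ (d - 1)) volume R₁ R₂ :=
    (hEc.mul (continuous_pow _)).intervalIntegrable _ _
  have hDE : D = ∫ r in R₁..R₂, E r * r ^ (d - 1) := by
    rw [hD]
    exact intervalIntegral.integral_congr (fun r _ => by rw [hφsq r])
  have hDpos : 0 < D := by
    rw [hDE]
    apply intervalIntegral.intervalIntegral_pos_of_pos_on iDE _ h₁₂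
    intro r hr
    exact mul_pos (hEpos r) (pow_pos (h₁.trans hr.1) _)
  -- the numerator equals α² D + boundary terms
  have hNum : (∫ r in R₁..R₂, (deriv φ r) ^ 2 * r ^ (d - 1)) = α ^ 2 * D := by
    rw [hD, ← intervalIntegral.integral_const_mul]
    apply intervalIntegral.integral_congr
    intro r _
    show deriv φ r ^ 2 * r ^ (d - 1) = α ^ 2 * (φ r ^ 2 * r ^ (d - 1))
    rw [hderiv r]
    ring
  -- FTC identity
  have hkey : -(2 * α) * D + ((d : ℝ) - 1) * I
      = R₂ ^ (d - 1) - R₁ ^ (d - 1) * E R₁ := by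
    have hE2 : E R₂ = 1 := by rw [hE]; simp
    have hd1 : ((d - 1 : ℕ) : ℝ) = (d : ℝ) - 1 := by
      have : 1 ≤ d := by omega
      push_cast [Nat.cast_sub this]; ring
    have hftc : (∫ r in R₁..R₂,
          (-(2 * α) * (E r * r ^ (d - 1)) + ((d : ℝ) - 1) * (E r * r ^ (d - 2))))
        = E R₂ * R₂ ^ (d - 1) - E R₁ * R₁ ^ (d - 1) := by
      apply intervalIntegral.integral_eq_sub_of_hasDerivAt (f := fun r => E r * r ^ (d - 1))
      · intro r _
        have h1 : HasDerivAt (fun r : ℝ => 2 * α * (R₂ - r)) (-(2 * α)) r := by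
          simpa using ((hasDerivAt_id r).const_sub R₂).const_mul (2 * α)
        have h2 : HasDerivAt E (E r * -(2 * α)) r :=
          h1.exp
        have h3 : HasDerivAt (fun r : ℝ => r ^ (d - 1))
            (((d - 1 : ℕ) : ℝ) * r ^ (d - 2)) r := by
          have := hasDerivAt_pow (d - 1) r
          have he : d - 1 - 1 = d - 2 := by omega
          rwa [he] at this
        have := h2.mul h3
        refine this.congr_deriv ?_
        rw [hd1]
        ring
      · exact ((continuous_const.mul (hEc.mul (continuous_pow _))).add
          (continuous_const.mul (hEc.mul (continuous_pow _)))).intervalIntegrable _ _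
    rw [intervalIntegral.integral_add (iDE.const_mul _) (iI.const_mul _),
      intervalIntegral.integral_const_mul, intervalIntegral.integral_const_mul] at hftc
    rw [hDE, hI]
    rw [hftc, hE2]
    ring
  -- comparison: D ≤ R₂ * I
  have hDI : D ≤ R₂ * I := by
    rw [hDE, hI, ← intervalIntegral.integral_const_mul]
    apply intervalIntegral.integral_mono_on hle iDE (iI.const_mul R₂)
    intro r hr
    have hr0 : 0 ≤ r := (h₁.le.trans hr.1)
    have hpow : r ^ (d - 1) ≤ R₂ * r ^ (d - 2) := by
      have he : d - 1 = (d - 2) + 1 := by omega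
      rw [he, pow_succ]
      calc r ^ (d - 2) * r ≤ r ^ (d - 2) * R₂ :=
            mul_le_mul_of_nonneg_left hr.2 (pow_nonneg hr0 _)
        _ = R₂ * r ^ (d - 2) := by ring
    calc E r * r ^ (d - 1) ≤ E r * (R₂ * r ^ (d - 2)) :=
          mul_le_mul_of_nonneg_left hpow (hEpos r).le
      _ = R₂ * (E r * r ^ (d - 2)) := by ring
  -- the candidate quotient is in the set
  have hφR₂ : φ R₂ ^ 2 = 1 := by rw [hφsq, hE]; simp
  have hφR₁ : φ R₁ ^ 2 = E R₁ := hφsq R₁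
  have hmem : (α ^ 2 * D + α * R₁ ^ (d - 1) * E R₁ + α * R₂ ^ (d - 1)) / D
      ∈ { q : ℝ | ∃ ψ : ℝ → ℝ, ContDiff ℝ 1 ψ ∧
        (∫ r in R₁..R₂, (ψ r) ^ 2 * r ^ (d - 1)) ≠ 0 ∧
        q = ((∫ r in R₁..R₂, (deriv ψ r) ^ 2 * r ^ (d - 1))
              + α * R₁ ^ (d - 1) * (ψ R₁) ^ 2 + α * R₂ ^ (d - 1) * (ψ R₂) ^ 2) /
            (∫ r in R₁..R₂, (ψ r) ^ 2 * r ^ (d - 1)) } := by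
    refine ⟨φ, hφc, ?_, ?_⟩
    · rw [← hD]; exact hDpos.ne'
    · rw [← hD, hNum, hφR₁, hφR₂, mul_one]
  have hsInf : lam1Shell d R₁ R₂ α
      ≤ (α ^ 2 * D + α * R₁ ^ (d - 1) * E R₁ + α * R₂ ^ (d - 1)) / D :=
    csInf_le (shell_bddBelow d R₁ R₂ α h₁ h₁₂) hmem
  refine lt_of_le_of_lt hsInf ?_
  -- final arithmetic
  rw [div_lt_iff₀ hDpos]
  have hE₁pos : 0 < E R₁ := hEpos R₁
  have hm0 : (0:ℝ) < R₁ ^ (d - 1) := pow_pos h₁ _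
  have hd1 : (1:ℝ) ≤ (d : ℝ) - 1 := by
    have : (2:ℝ) ≤ (d : ℝ) := by exact_mod_cast hd
    linarith
  set J : ℝ := D / R₂ with hJ
  have hJD : J * R₂ = D := by rw [hJ]; field_simp
  have hJI : J ≤ I := by
    rw [hJ, div_le_iff₀ hR₂]
    linarith [hDI]
  have hbound : ((d:ℝ) - 1) / R₂ * α * D = ((d:ℝ) - 1) * α * J := by
    rw [hJ]; field_simp
  have hsum : 0 < 2 * α * D + R₁ ^ (d - 1) * E R₁ + R₂ ^ (d - 1) - ((d:ℝ) - 1) * J := by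
    have h2 : 2 * α * D = R₁ ^ (d - 1) * E R₁ - R₂ ^ (d - 1) + ((d:ℝ) - 1) * I := by
      linarith [hkey]
    rw [h2]
    have h3 : 0 ≤ ((d:ℝ) - 1) * (I - J) :=
      mul_nonneg (by linarith) (by linarith)
    nlinarith [mul_pos hm0 hE₁pos]
  have hfin : 0 < -α * (2 * α * D + R₁ ^ (d - 1) * E R₁ + R₂ ^ (d - 1) - ((d:ℝ) - 1) * J) :=
    mul_pos (by linarith) hsum
  nlinarith [hfin, hbound]
end

section
/- Let α < 0 and R > 0. The first Robin eigenvalue of the interval (−R,R) equals −k², where k is the smallest positive solution of −k/α = coth(Rk), and the map R ↦ λ₁^α((−R,R)) is strictly increasing in R. -/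
open MeasureTheory intervalIntegral

/-- The first Robin eigenvalue of the interval `(a,b)` with boundary parameter `α`,
given by the Rayleigh quotient `(∫_a^b u'² + α(u(a)² + u(b)²)) / ∫_a^b u²`. -/
noncomputable def lam1Int (α a b : ℝ) : ℝ :=
  sInf { q : ℝ | ∃ u : ℝ → ℝ, ContDiff ℝ 1 u ∧ (∫ x in a..b, (u x) ^ 2) ≠ 0 ∧
    q = ((∫ x in a..b, (deriv u x) ^ 2) + α * ((u a) ^ 2 + (u b) ^ 2)) /
        (∫ x in a..b, (u x) ^ 2) }

/-- The hyperbolic cotangent. -/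
noncomputable def rcoth (x : ℝ) : ℝ := Real.cosh x / Real.sinh x

/- ---------------- auxiliary lemmas ---------------- -/

lemma th_lt {a b : ℝ} (h : a < b) :
    Real.sinh a / Real.cosh a < Real.sinh b / Real.cosh b := by
  rw [div_lt_div_iff₀ (Real.cosh_pos a) (Real.cosh_pos b)]
  have h1 : 0 < Real.sinh (b - a) := Real.sinh_pos_iff.mpr (by linarith)
  rw [Real.sinh_sub] at h1
  linarith

lemma th_le {a b : ℝ} (h : a ≤ b) :
    Real.sinh a / Real.cosh a ≤ Real.sinh b / Real.cosh b := by
  rcases h.lt_or_eq with h' | h'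
  · exact (th_lt h').le
  · rw [h']

lemma phiMono (R : ℝ) (hR : 0 < R) :
    StrictMonoOn (fun k : ℝ => k * (Real.sinh (R * k) / Real.cosh (R * k)))
      (Set.Ici 0) := by
  intro a ha b _ hab
  simp only [Set.mem_Ici] at ha
  have hb : 0 < b := lt_of_le_of_lt ha hab
  have hta : 0 ≤ Real.sinh (R * a) / Real.cosh (R * a) :=
    div_nonneg (Real.sinh_nonneg_iff.mpr (by positivity)) (Real.cosh_pos _).le
  have htb : 0 < Real.sinh (R * b) / Real.cosh (R * b) :=
    div_pos (Real.sinh_pos_iff.mpr (by positivity)) (Real.cosh_pos _)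
  have hlt : Real.sinh (R * a) / Real.cosh (R * a)
      < Real.sinh (R * b) / Real.cosh (R * b) := th_lt (by nlinarith)
  simp only
  nlinarith

lemma exists_k (α R : ℝ) (hα : α < 0) (hR : 0 < R) :
    ∃ k : ℝ, 0 < k ∧ k * (Real.sinh (R * k) / Real.cosh (R * k)) = -α := by
  set t : ℝ := Real.sinh R / Real.cosh R with ht_def
  have ht : 0 < t := div_pos (Real.sinh_pos_iff.mpr hR) (Real.cosh_pos _)
  set K : ℝ := max 1 ((1 - α) / t) with hK_def
  have hK1 : (1 : ℝ) ≤ K := le_max_left _ _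
  have hK0 : (0 : ℝ) ≤ K := by linarith
  have hKval : -α < K * (Real.sinh (R * K) / Real.cosh (R * K)) := by
    have h1 : t ≤ Real.sinh (R * K) / Real.cosh (R * K) := by
      have : R ≤ R * K := by nlinarith
      simpa [ht_def] using th_le this
    have h2 : (1 - α) / t ≤ K := le_max_right _ _
    have h3 : 1 - α ≤ K * t := by
      rw [div_le_iff₀ ht] at h2; linarith
    nlinarith
  have hcont : ContinuousOn (fun k : ℝ => k * (Real.sinh (R * k) / Real.cosh (R * k)))
      (Set.Icc 0 K) := by
    apply Continuous.continuousOn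
    exact continuous_id.mul ((Real.continuous_sinh.comp (continuous_const.mul continuous_id)).div
      (Real.continuous_cosh.comp (continuous_const.mul continuous_id))
      (fun x => (Real.cosh_pos _).ne'))
  have hiv := intermediate_value_Icc hK0 hcont
  have hmem : -α ∈ Set.Icc ((fun k : ℝ => k * (Real.sinh (R * k) / Real.cosh (R * k))) 0)
      ((fun k : ℝ => k * (Real.sinh (R * k) / Real.cosh (R * k))) K) := by
    constructor
    · simp only [zero_mul]; linarith
    · exact hKval.le
  obtain ⟨k, hk, hfk⟩ := hiv hmem
  refine ⟨k, ?_, hfk⟩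
  rcases hk.1.lt_or_eq with h | h
  · exact h
  · exfalso; rw [← h] at hfk; simp at hfk; linarith

lemma root_iff (α R k : ℝ) (hα : α < 0) (hR : 0 < R) (hk : 0 < k) :
    (-k / α = rcoth (R * k)) ↔ k * (Real.sinh (R * k) / Real.cosh (R * k)) = -α := by
  have hS : 0 < Real.sinh (R * k) := Real.sinh_pos_iff.mpr (by positivity)
  have hC : 0 < Real.cosh (R * k) := Real.cosh_pos _
  rw [rcoth, div_eq_div_iff hα.ne hS.ne', mul_div_assoc', div_eq_iff hC.ne']
  constructor <;> intro h <;> linear_combination -h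

/- derivative of w x = k * (sinh (k x) / cosh (k x)) -/
lemma hasDerivAt_w (k x : ℝ) :
    HasDerivAt (fun y : ℝ => k * (Real.sinh (k * y) / Real.cosh (k * y)))
      (k ^ 2 / Real.cosh (k * x) ^ 2) x := by
  have hkx : HasDerivAt (fun y : ℝ => k * y) k x := by
    simpa using (hasDerivAt_id x).const_mul k
  have hs : HasDerivAt (fun y : ℝ => Real.sinh (k * y)) (Real.cosh (k * x) * k) x :=
    (Real.hasDerivAt_sinh (k * x)).comp x hkx
  have hc : HasDerivAt (fun y : ℝ => Real.cosh (k * y)) (Real.sinh (k * x) * k) x :=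
    (Real.hasDerivAt_cosh (k * x)).comp x hkx
  have hdiv := (hs.div hc (Real.cosh_pos (k * x)).ne').const_mul k
  refine hdiv.congr_deriv ?_
  have hC := Real.cosh_pos (k * x)
  have hid := Real.cosh_sq_sub_sinh_sq (k * x)
  rw [mul_div_assoc', div_left_inj' (pow_pos hC 2).ne']
  linear_combination (k:ℝ) ^ 2 * hid

/- pointwise identity : wd + w² = k² -/
lemma w_identity (k x : ℝ) :
    k ^ 2 / Real.cosh (k * x) ^ 2 + (k * (Real.sinh (k * x) / Real.cosh (k * x))) ^ 2
      = k ^ 2 := by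
  have hC := (Real.cosh_pos (k * x)).ne'
  have hid := Real.cosh_sq_sub_sinh_sq (k * x)
  field_simp
  linear_combination (-(k:ℝ) ^ 2) * hid

lemma rayleigh_lb (α R k : ℝ) (hR : 0 < R) (hk : 0 < k)
    (hroot : k * (Real.sinh (R * k) / Real.cosh (R * k)) = -α)
    (u : ℝ → ℝ) (hu : ContDiff ℝ 1 u) :
    -k ^ 2 * ∫ x in (-R)..R, (u x) ^ 2 ≤
      (∫ x in (-R)..R, (deriv u x) ^ 2) + α * ((u (-R)) ^ 2 + (u R) ^ 2) := by
  set w : ℝ → ℝ := fun x => k * (Real.sinh (k * x) / Real.cosh (k * x)) with hw_def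
  set wd : ℝ → ℝ := fun x => k ^ 2 / Real.cosh (k * x) ^ 2 with hwd_def
  have hcu : Continuous u := hu.continuous
  have hcu' : Continuous (deriv u) := hu.continuous_deriv le_rfl
  have hcw : Continuous w := by
    apply continuous_const.mul
    exact (Real.continuous_sinh.comp (continuous_const.mul continuous_id)).div
      (Real.continuous_cosh.comp (continuous_const.mul continuous_id))
      (fun x => (Real.cosh_pos _).ne')
  have hcwd : Continuous wd := by
    apply continuous_const.div
    · exact (Real.continuous_cosh.comp (continuous_const.mul continuous_id)).pow 2
    · intro x; positivity
  have huderiv : ∀ x, HasDerivAt u (deriv u x) x :=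
    fun x => (hu.differentiable one_ne_zero x).hasDerivAt
  have hvderiv : ∀ x, HasDerivAt (fun y => (u y) ^ 2) (2 * u x * deriv u x) x := by
    intro x
    have := (huderiv x).pow 2
    exact this.congr_deriv (by norm_num)
  have I1 : IntervalIntegrable (fun x => (deriv u x) ^ 2) volume (-R) R :=
    (hcu'.pow 2).intervalIntegrable _ _
  have I2 : IntervalIntegrable (fun x => w x * (2 * u x * deriv u x)) volume (-R) R :=
    (hcw.mul ((continuous_const.mul hcu).mul hcu')).intervalIntegrable _ _
  have I3 : IntervalIntegrable (fun x => (w x) ^ 2 * (u x) ^ 2) volume (-R) R :=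
    ((hcw.pow 2).mul (hcu.pow 2)).intervalIntegrable _ _
  have I4 : IntervalIntegrable (fun x => wd x * (u x) ^ 2) volume (-R) R :=
    (hcwd.mul (hcu.pow 2)).intervalIntegrable _ _
  have h0 : 0 ≤ ∫ x in (-R)..R, (deriv u x - w x * u x) ^ 2 :=
    intervalIntegral.integral_nonneg (by linarith) (fun x _ => sq_nonneg _)
  have hexp : ∫ x in (-R)..R, (deriv u x - w x * u x) ^ 2 =
      (∫ x in (-R)..R, (deriv u x) ^ 2) -
        (∫ x in (-R)..R, w x * (2 * u x * deriv u x)) +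
        ∫ x in (-R)..R, (w x) ^ 2 * (u x) ^ 2 := by
    have heq : (fun x => (deriv u x - w x * u x) ^ 2) =
        fun x => (deriv u x) ^ 2 - w x * (2 * u x * deriv u x) + (w x) ^ 2 * (u x) ^ 2 := by
      funext x; ring
    rw [heq, intervalIntegral.integral_add (I1.sub I2) I3,
      intervalIntegral.integral_sub I1 I2]
  have hibp : ∫ x in (-R)..R, w x * (2 * u x * deriv u x) =
      w R * (u R) ^ 2 - w (-R) * (u (-R)) ^ 2 - ∫ x in (-R)..R, wd x * (u x) ^ 2 :=
    intervalIntegral.integral_mul_deriv_eq_deriv_mul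
      (fun x _ => hasDerivAt_w k x) (fun x _ => hvderiv x)
      (hcwd.intervalIntegrable _ _)
      (((continuous_const.mul hcu).mul hcu').intervalIntegrable _ _)
  have hid : (∫ x in (-R)..R, wd x * (u x) ^ 2) + (∫ x in (-R)..R, (w x) ^ 2 * (u x) ^ 2)
      = k ^ 2 * ∫ x in (-R)..R, (u x) ^ 2 := by
    rw [← intervalIntegral.integral_add I4 I3, ← intervalIntegral.integral_const_mul]
    apply intervalIntegral.integral_congr
    intro x _
    have := w_identity k x
    simp only [hw_def, hwd_def]
    nlinarith [this]
  have hwR : w R = -α := by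
    simp only [hw_def]
    rw [mul_comm R k] at hroot
    exact hroot
  have hwmR : w (-R) = α := by
    have hkR : k * (-R) = -(k * R) := by ring
    simp only [hw_def, hkR, Real.sinh_neg, Real.cosh_neg, neg_div, mul_neg]
    rw [mul_comm R k] at hroot
    rw [hroot]; ring
  rw [hwR, hwmR] at hibp
  nlinarith [h0, hexp, hibp, hid]

lemma rayleigh_cosh (α R k : ℝ) (hR : 0 < R) (hk : 0 < k)
    (hroot : k * (Real.sinh (R * k) / Real.cosh (R * k)) = -α) :
    ∃ u : ℝ → ℝ, ContDiff ℝ 1 u ∧ (∫ x in (-R)..R, (u x) ^ 2) ≠ 0 ∧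
      -k ^ 2 = ((∫ x in (-R)..R, (deriv u x) ^ 2) + α * ((u (-R)) ^ 2 + (u R) ^ 2)) /
        (∫ x in (-R)..R, (u x) ^ 2) := by
  set S := Real.sinh (k * R) with hS_def
  set C := Real.cosh (k * R) with hC_def
  have hSpos : 0 < S := Real.sinh_pos_iff.mpr (by positivity)
  have hCpos : 0 < C := Real.cosh_pos _
  have hαC : α * C = -(k * S) := by
    rw [mul_comm R k] at hroot
    have hC' : C ≠ 0 := hCpos.ne'
    field_simp [hS_def, hC_def] at hroot ⊢
    linarith
  have hkx : ∀ x : ℝ, HasDerivAt (fun y : ℝ => k * y) k x := fun x => by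
    simpa using (hasDerivAt_id x).const_mul k
  have hs : ∀ x : ℝ, HasDerivAt (fun y : ℝ => Real.sinh (k * y)) (Real.cosh (k * x) * k) x :=
    fun x => (Real.hasDerivAt_sinh (k * x)).comp x (hkx x)
  have hc : ∀ x : ℝ, HasDerivAt (fun y : ℝ => Real.cosh (k * y)) (Real.sinh (k * x) * k) x :=
    fun x => (Real.hasDerivAt_cosh (k * x)).comp x (hkx x)
  have hderiv_eq : deriv (fun y : ℝ => Real.cosh (k * y)) = fun x => Real.sinh (k * x) * k :=
    funext fun x => (hc x).deriv
  set F₁ : ℝ → ℝ := fun x => (Real.sinh (k * x) * Real.cosh (k * x) / k + x) / 2 with hF₁_def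
  set F₂ : ℝ → ℝ := fun x => (k * (Real.sinh (k * x) * Real.cosh (k * x)) - k ^ 2 * x) / 2
    with hF₂_def
  have hF₁ : ∀ x : ℝ, HasDerivAt F₁ (Real.cosh (k * x) ^ 2) x := by
    intro x
    have h := ((((hs x).mul (hc x)).div_const k).add (hasDerivAt_id x)).div_const 2
    refine h.congr_deriv ?_
    have hid := Real.cosh_sq_sub_sinh_sq (k * x)
    field_simp
    linear_combination (-1 : ℝ) * hid
  have hF₂ : ∀ x : ℝ, HasDerivAt F₂ ((Real.sinh (k * x) * k) ^ 2) x := by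
    intro x
    have hid' : HasDerivAt (fun y : ℝ => y) 1 x := hasDerivAt_id x
    have h := ((((hs x).mul (hc x)).const_mul k).sub (hid'.const_mul (k ^ 2))).div_const 2
    refine h.congr_deriv ?_
    have hid := Real.cosh_sq_sub_sinh_sq (k * x)
    linear_combination ((k : ℝ) ^ 2 / 2) * hid
  have hcont1 : Continuous fun x : ℝ => Real.cosh (k * x) ^ 2 :=
    ((Real.continuous_cosh.comp (continuous_const.mul continuous_id)).pow 2)
  have hcont2 : Continuous fun x : ℝ => (Real.sinh (k * x) * k) ^ 2 :=
    (((Real.continuous_sinh.comp (continuous_const.mul continuous_id)).mul continuous_const).pow 2)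
  have hE : (∫ x in (-R)..R, Real.cosh (k * x) ^ 2) = S * C / k + R := by
    rw [intervalIntegral.integral_eq_sub_of_hasDerivAt (fun x _ => hF₁ x)
      (hcont1.intervalIntegrable _ _)]
    have hneg : k * (-R) = -(k * R) := by ring
    simp only [hF₁_def, hneg, Real.sinh_neg, Real.cosh_neg, hS_def, hC_def]
    ring
  have hD : (∫ x in (-R)..R, (deriv (fun y : ℝ => Real.cosh (k * y)) x) ^ 2)
      = S * C * k - k ^ 2 * R := by
    rw [hderiv_eq]
    rw [intervalIntegral.integral_eq_sub_of_hasDerivAt (fun x _ => hF₂ x)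
      (hcont2.intervalIntegrable _ _)]
    have hneg : k * (-R) = -(k * R) := by ring
    simp only [hF₂_def, hneg, Real.sinh_neg, Real.cosh_neg, hS_def, hC_def]
    ring
  have hEpos : 0 < S * C / k + R := by positivity
  refine ⟨fun x => Real.cosh (k * x), ?_, ?_, ?_⟩
  · exact Real.contDiff_cosh.comp (contDiff_const.mul contDiff_id)
  · rw [hE]; exact hEpos.ne'
  · have hneg : k * (-R) = -(k * R) := by ring
    show -k ^ 2 = ((∫ x in (-R)..R, (deriv (fun y : ℝ => Real.cosh (k * y)) x) ^ 2)
        + α * (Real.cosh (k * (-R)) ^ 2 + Real.cosh (k * R) ^ 2)) /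
        (∫ x in (-R)..R, Real.cosh (k * x) ^ 2)
    rw [hD, hE, hneg, Real.cosh_neg, ← hC_def, eq_div_iff hEpos.ne']
    field_simp
    linear_combination (-2 * C) * hαC

lemma lam_eq (α R k : ℝ) (hα : α < 0) (hR : 0 < R) (hk : 0 < k)
    (hroot : k * (Real.sinh (R * k) / Real.cosh (R * k)) = -α) :
    lam1Int α (-R) R = -k ^ 2 := by
  obtain ⟨u, hu, hne, hval⟩ := rayleigh_cosh α R k hR hk hroot
  set Q : Set ℝ := { q : ℝ | ∃ u : ℝ → ℝ, ContDiff ℝ 1 u ∧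
    (∫ x in (-R)..R, (u x) ^ 2) ≠ 0 ∧
    q = ((∫ x in (-R)..R, (deriv u x) ^ 2) + α * ((u (-R)) ^ 2 + (u R) ^ 2)) /
        (∫ x in (-R)..R, (u x) ^ 2) } with hQ_def
  have hmem : -k ^ 2 ∈ Q := ⟨u, hu, hne, hval⟩
  have hlb : ∀ q ∈ Q, -k ^ 2 ≤ q := by
    rintro q ⟨v, hv, hvne, rfl⟩
    have hEnn : 0 ≤ ∫ x in (-R)..R, (v x) ^ 2 :=
      intervalIntegral.integral_nonneg (by linarith) (fun x _ => sq_nonneg _)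
    have hEpos : 0 < ∫ x in (-R)..R, (v x) ^ 2 := lt_of_le_of_ne hEnn (Ne.symm hvne)
    rw [le_div_iff₀ hEpos]
    exact rayleigh_lb α R k hR hk hroot v hv
  have : sInf Q = -k ^ 2 :=
    le_antisymm (csInf_le ⟨-k ^ 2, fun q hq => hlb q hq⟩ hmem) (le_csInf ⟨_, hmem⟩ hlb)
  exact this

/-- For `α < 0`, `λ₁^α((−R,R)) = −k²` with `k` the smallest positive solution of
`−k/α = coth(Rk)`, and `R ↦ λ₁^α((−R,R))` is strictly increasing. -/
theorem lam1Int_eq_and_strictMono (α : ℝ) (hα : α < 0) :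
    (∀ R : ℝ, 0 < R → ∃ k : ℝ, 0 < k ∧ -k / α = rcoth (R * k) ∧
      (∀ k', 0 < k' → -k' / α = rcoth (R * k') → k ≤ k') ∧
      lam1Int α (-R) R = -k ^ 2) ∧
    StrictMonoOn (fun R : ℝ => lam1Int α (-R) R) (Set.Ioi 0) := by
  have key : ∀ R : ℝ, 0 < R → ∃ k : ℝ, 0 < k ∧
      k * (Real.sinh (R * k) / Real.cosh (R * k)) = -α ∧ lam1Int α (-R) R = -k ^ 2 := by
    intro R hR
    obtain ⟨k, hk, hroot⟩ := exists_k α R hα hR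
    exact ⟨k, hk, hroot, lam_eq α R k hα hR hk hroot⟩
  constructor
  · intro R hR
    obtain ⟨k, hk, hroot, hlam⟩ := key R hR
    refine ⟨k, hk, (root_iff α R k hα hR hk).mpr hroot, ?_, hlam⟩
    intro k' hk' hroot'
    have hroot'' := (root_iff α R k' hα hR hk').mp hroot'
    have hval : k * (Real.sinh (R * k) / Real.cosh (R * k))
        = k' * (Real.sinh (R * k') / Real.cosh (R * k')) := by rw [hroot, hroot'']
    have heq : k = k' := (phiMono R hR).injOn (Set.mem_Ici.mpr hk.le)
      (Set.mem_Ici.mpr hk'.le) hval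
    exact heq.le
  · intro R1 hR1 R2 hR2 h12
    simp only [Set.mem_Ioi] at hR1 hR2
    obtain ⟨k1, hk1, hroot1, hlam1⟩ := key R1 hR1
    obtain ⟨k2, hk2, hroot2, hlam2⟩ := key R2 hR2
    show lam1Int α (-R1) R1 < lam1Int α (-R2) R2
    rw [hlam1, hlam2]
    have hk21 : k2 < k1 := by
      by_contra hcon
      push_neg at hcon
      have h1 : k1 * (Real.sinh (R1 * k1) / Real.cosh (R1 * k1))
          < k1 * (Real.sinh (R2 * k1) / Real.cosh (R2 * k1)) := by
        have h := th_lt (show R1 * k1 < R2 * k1 by nlinarith)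
        nlinarith
      have h2 : k1 * (Real.sinh (R2 * k1) / Real.cosh (R2 * k1))
          ≤ k2 * (Real.sinh (R2 * k2) / Real.cosh (R2 * k2)) := by
        rcases hcon.lt_or_eq with h | h
        · have := (phiMono R2 hR2) (Set.mem_Ici.mpr hk1.le) (Set.mem_Ici.mpr hk2.le) h
          simpa using this.le
        · rw [h]
      rw [hroot1] at h1
      rw [hroot2] at h2
      linarith
    nlinarith
end

section
/- Let α < 0. As R → 0+, the first Robin eigenvalue of the interval (−R,R) satisfies λ₁^α((−R,R)) = α/R + o(1/R); and as R → +∞, λ₁^α((−R,R)) = −α² + o(1). -/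
open MeasureTheory intervalIntegral Topology Filter Asymptotics

namespace Lam1Aux

lemma sinh_nonneg {x : ℝ} (h : 0 ≤ x) : 0 ≤ Real.sinh x := by positivity

lemma sq_integral_pos {u : ℝ → ℝ} (hu : Continuous u) {R : ℝ} (hR : 0 < R)
    (hne : (∫ x in (-R)..R, (u x) ^ 2) ≠ 0) : 0 < ∫ x in (-R)..R, (u x) ^ 2 := by
  refine lt_of_le_of_ne ?_ (Ne.symm hne)
  apply intervalIntegral.integral_nonneg (by linarith)
  intro x _; positivity

lemma hasDerivAt_sq {u : ℝ → ℝ} (hu : ContDiff ℝ 1 u) (x : ℝ) :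
    HasDerivAt (fun y => u y ^ 2) (2 * u x * deriv u x) x := by
  have h := ((hu.differentiable one_ne_zero) x).hasDerivAt
  have := h.pow 2
  simp [mul_comm, mul_assoc, mul_left_comm] at this ⊢
  exact this

/-- Trace-type bound. -/
lemma trace_bound {u : ℝ → ℝ} (hu : ContDiff ℝ 1 u) {R : ℝ} (hR : 0 < R) :
    u R ^ 2 + u (-R) ^ 2 ≤ (∫ x in (-R)..R, u x ^ 2) / R
      + 2 * ∫ x in (-R)..R, |2 * u x * deriv u x| := by
  set g : ℝ → ℝ := fun x => 2 * u x * deriv u x with hg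
  have hgc : Continuous g := by
    exact (continuous_const.mul (hu.continuous)).mul (hu.continuous_deriv le_rfl)
  have hRR : (-R : ℝ) ≤ R := by linarith
  set Ig : ℝ := ∫ x in (-R)..R, |g x| with hIg
  have hIgi : ∀ a b : ℝ, IntervalIntegrable g volume a b := fun a b =>
    hgc.intervalIntegrable a b
  have hIgia : ∀ a b : ℝ, IntervalIntegrable (fun x => |g x|) volume a b := fun a b =>
    hgc.abs.intervalIntegrable a b
  -- key pointwise bound
  have key : ∀ x ∈ Set.Icc (-R) R, u R ^ 2 + u (-R) ^ 2 ≤ 2 * u x ^ 2 + 2 * Ig := by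
    intro x hx
    have ftc1 : ∫ t in x..R, g t = u R ^ 2 - u x ^ 2 :=
      intervalIntegral.integral_eq_sub_of_hasDerivAt
        (fun t _ => hasDerivAt_sq hu t) (hIgi x R)
    have ftc2 : ∫ t in (-R)..x, g t = u x ^ 2 - u (-R) ^ 2 :=
      intervalIntegral.integral_eq_sub_of_hasDerivAt
        (fun t _ => hasDerivAt_sq hu t) (hIgi (-R) x)
    have h1 : ∫ t in x..R, g t ≤ Ig := by
      have habs : |∫ t in x..R, g t| ≤ ∫ t in x..R, |g t| :=
        intervalIntegral.abs_integral_le_integral_abs hx.2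
      have hsplit : Ig = (∫ t in (-R)..x, |g t|) + ∫ t in x..R, |g t| :=
        (intervalIntegral.integral_add_adjacent_intervals (hIgia _ _) (hIgia _ _)).symm
      have hnn : 0 ≤ ∫ t in (-R)..x, |g t| :=
        intervalIntegral.integral_nonneg hx.1 (fun t _ => abs_nonneg _)
      calc ∫ t in x..R, g t ≤ |∫ t in x..R, g t| := le_abs_self _
        _ ≤ ∫ t in x..R, |g t| := habs
        _ ≤ Ig := by rw [hsplit]; linarith
    have h2 : -(∫ t in (-R)..x, g t) ≤ Ig := by
      have habs : |∫ t in (-R)..x, g t| ≤ ∫ t in (-R)..x, |g t| :=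
        intervalIntegral.abs_integral_le_integral_abs hx.1
      have hsplit : Ig = (∫ t in (-R)..x, |g t|) + ∫ t in x..R, |g t| :=
        (intervalIntegral.integral_add_adjacent_intervals (hIgia _ _) (hIgia _ _)).symm
      have hnn : 0 ≤ ∫ t in x..R, |g t| :=
        intervalIntegral.integral_nonneg hx.2 (fun t _ => abs_nonneg _)
      have := neg_abs_le (∫ t in (-R)..x, g t)
      have h' : -(∫ t in (-R)..x, g t) ≤ |∫ t in (-R)..x, g t| := neg_le_abs _
      calc -(∫ t in (-R)..x, g t) ≤ |∫ t in (-R)..x, g t| := h'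
        _ ≤ ∫ t in (-R)..x, |g t| := habs
        _ ≤ Ig := by rw [hsplit]; linarith
    nlinarith [ftc1, ftc2, h1, h2]
  -- integrate the pointwise bound over x
  have hmono : ∫ x in (-R)..R, (u R ^ 2 + u (-R) ^ 2) ≤
      ∫ x in (-R)..R, (2 * u x ^ 2 + 2 * Ig) := by
    apply intervalIntegral.integral_mono_on hRR
    · exact (continuous_const.intervalIntegrable _ _)
    · exact (((continuous_const.mul ((hu.continuous).pow 2)).add
        continuous_const).intervalIntegrable _ _)
    · exact key
  have hconst : ∫ x in (-R)..R, (u R ^ 2 + u (-R) ^ 2) = 2 * R * (u R ^ 2 + u (-R) ^ 2) := by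
    rw [intervalIntegral.integral_const, smul_eq_mul]; ring
  have hrhs : ∫ x in (-R)..R, (2 * u x ^ 2 + 2 * Ig)
      = 2 * (∫ x in (-R)..R, u x ^ 2) + 2 * R * (2 * Ig) := by
    rw [intervalIntegral.integral_add (f := fun x => 2 * u x ^ 2) (g := fun _ => 2 * Ig) ((continuous_const.mul ((hu.continuous).pow 2)).intervalIntegrable _ _)
      (continuous_const.intervalIntegrable _ _)]
    rw [intervalIntegral.integral_const_mul, intervalIntegral.integral_const, smul_eq_mul]
    ring
  rw [hconst, hrhs] at hmono
  set I2 : ℝ := ∫ x in (-R)..R, u x ^ 2 with hI2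
  have key2 : R * (u R ^ 2 + u (-R) ^ 2) ≤ I2 + R * (2 * Ig) := by linarith
  calc u R ^ 2 + u (-R) ^ 2 = R * (u R ^ 2 + u (-R) ^ 2) / R := by field_simp
    _ ≤ (I2 + R * (2 * Ig)) / R := by gcongr
    _ = I2 / R + 2 * Ig := by field_simp

/-- Small-R lower bound: `(α/R - 4α²) * ∫u² ≤ ∫u'² + α(u(-R)²+u(R)²)`. -/
lemma lower_small {α R : ℝ} (hα : α < 0) (hR : 0 < R) {u : ℝ → ℝ} (hu : ContDiff ℝ 1 u) :
    (α / R - 4 * α ^ 2) * ∫ x in (-R)..R, u x ^ 2 ≤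
      (∫ x in (-R)..R, (deriv u x) ^ 2) + α * (u (-R) ^ 2 + u R ^ 2) := by
  have hRR : (-R : ℝ) ≤ R := by linarith
  set I2 : ℝ := ∫ x in (-R)..R, u x ^ 2 with hI2
  set Id : ℝ := ∫ x in (-R)..R, (deriv u x) ^ 2 with hId
  set Ig : ℝ := ∫ x in (-R)..R, |2 * u x * deriv u x| with hIg
  have htr : u R ^ 2 + u (-R) ^ 2 ≤ I2 / R + 2 * Ig := trace_bound hu hR
  set δ : ℝ := -1 / (2 * α) with hδdef
  have hδ : 0 < δ := by
    have h1 : δ = 1 / (-(2 * α)) := by rw [hδdef]; ring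
    rw [h1]
    exact div_pos one_pos (by linarith)
  have hIgle : Ig ≤ δ * Id + δ⁻¹ * I2 := by
    have hmono : Ig ≤ ∫ x in (-R)..R, (δ * (deriv u x) ^ 2 + δ⁻¹ * u x ^ 2) := by
      apply intervalIntegral.integral_mono_on hRR
      · exact ((continuous_const.mul (hu.continuous)).mul
          (hu.continuous_deriv le_rfl)).abs.intervalIntegrable _ _
      · exact ((continuous_const.mul ((hu.continuous_deriv le_rfl).pow 2)).add
          (continuous_const.mul ((hu.continuous).pow 2))).intervalIntegrable _ _
      · intro x _
        have h1 : |2 * u x * deriv u x| = 2 * |u x| * |deriv u x| := by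
          rw [abs_mul, abs_mul]; simp [abs_of_nonneg]
        have e1 : |deriv u x| ^ 2 = (deriv u x) ^ 2 := sq_abs _
        have e2 : |u x| ^ 2 = (u x) ^ 2 := sq_abs _
        have hsq : 0 ≤ (δ * |deriv u x| - |u x|) ^ 2 := sq_nonneg _
        have hδne : δ ≠ 0 := ne_of_gt hδ
        have hδi : δ * δ⁻¹ = 1 := mul_inv_cancel₀ hδne
        rw [h1]
        have hmul : δ * (δ * (deriv u x) ^ 2 + δ⁻¹ * u x ^ 2 - 2 * |u x| * |deriv u x|)
            = (δ * |deriv u x| - |u x|) ^ 2 + (δ * δ⁻¹ - 1) * u x ^ 2 := by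
          rw [← e1, ← e2]; ring
        nlinarith [hsq, hδ, hmul, hδi]
    have heq : ∫ x in (-R)..R, (δ * (deriv u x) ^ 2 + δ⁻¹ * u x ^ 2)
        = δ * Id + δ⁻¹ * I2 := by
      rw [intervalIntegral.integral_add (f := fun x => δ * deriv u x ^ 2) (g := fun x => δ⁻¹ * u x ^ 2)
        ((continuous_const.mul ((hu.continuous_deriv le_rfl).pow 2)).intervalIntegrable _ _)
        ((continuous_const.mul ((hu.continuous).pow 2)).intervalIntegrable _ _),
        intervalIntegral.integral_const_mul, intervalIntegral.integral_const_mul]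
    linarith [hmono, heq.le, heq.ge]
  have hαtr : α * (I2 / R + 2 * Ig) ≤ α * (u (-R) ^ 2 + u R ^ 2) := by
    have h' : u (-R) ^ 2 + u R ^ 2 ≤ I2 / R + 2 * Ig := by linarith
    exact mul_le_mul_of_nonpos_left h' (le_of_lt hα)
  have hαIg : α * (δ * Id + δ⁻¹ * I2) ≤ α * Ig :=
    mul_le_mul_of_nonpos_left hIgle (le_of_lt hα)
  have hαne : α ≠ 0 := ne_of_lt hα
  have h2αδ : 2 * α * δ = -1 := by rw [hδdef]; field_simp
  have hδinv : δ⁻¹ = -(2 * α) := by rw [hδdef, inv_div]; ring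
  have hIdnn : 0 ≤ Id := intervalIntegral.integral_nonneg hRR (fun x _ => sq_nonneg _)
  have e4 : 2 * (α * (δ * Id)) = -Id := by
    have : 2 * (α * (δ * Id)) = (2 * α * δ) * Id := by ring
    rw [this, h2αδ]; ring
  have e5 : 2 * (α * (δ⁻¹ * I2)) = -(4 * α ^ 2) * I2 := by
    rw [hδinv]; ring
  have e1 : α * (I2 / R + 2 * Ig) = α * (I2 / R) + 2 * (α * Ig) := by ring
  have e3 : (α / R - 4 * α ^ 2) * I2 = α * (I2 / R) - 4 * α ^ 2 * I2 := by ring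
  have e6 : α * (δ * Id + δ⁻¹ * I2) = α * (δ * Id) + α * (δ⁻¹ * I2) := by ring
  linarith [hαtr, hαIg, hIdnn, e4, e5]

/-- Hyperbolic lower bound. -/
lemma lower_hyp {α R k : ℝ} (hR : 0 < R) (hk : 0 < k)
    (hbd : 0 ≤ k * Real.sinh (k * R) + α * Real.cosh (k * R))
    {u : ℝ → ℝ} (hu : ContDiff ℝ 1 u) :
    (-k ^ 2) * ∫ x in (-R)..R, u x ^ 2 ≤
      (∫ x in (-R)..R, (deriv u x) ^ 2) + α * (u (-R) ^ 2 + u R ^ 2) := by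
  have hRR : (-R : ℝ) ≤ R := by linarith
  set c : ℝ → ℝ := fun x => Real.cosh (k * x) with hc
  set s : ℝ → ℝ := fun x => Real.sinh (k * x) with hs
  have hcpos : ∀ x, 0 < c x := fun x => Real.cosh_pos (k * x)
  have hcne : ∀ x, c x ≠ 0 := fun x => ne_of_gt (hcpos x)
  set g : ℝ → ℝ := fun x => k * (s x / c x) * u x ^ 2 with hgdef
  set g' : ℝ → ℝ := fun x =>
    k * (k / c x ^ 2) * u x ^ 2 + k * (s x / c x) * (2 * u x * deriv u x) with hg'def
  have hds : ∀ x, HasDerivAt s (k * c x) x := by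
    intro x
    have h1 : HasDerivAt (fun y : ℝ => k * y) k x := by
      simpa using (hasDerivAt_id x).const_mul k
    exact ((Real.hasDerivAt_sinh (k * x)).comp x h1).congr_deriv (mul_comm _ _)
  have hdc : ∀ x, HasDerivAt c (k * s x) x := by
    intro x
    have h1 : HasDerivAt (fun y : ℝ => k * y) k x := by
      simpa using (hasDerivAt_id x).const_mul k
    exact ((Real.hasDerivAt_cosh (k * x)).comp x h1).congr_deriv (mul_comm _ _)
  have hsc : ∀ x, HasDerivAt (fun y => s y / c y) (k / c x ^ 2) x := by
    intro x
    have h := (hds x).div (hdc x) (hcne x)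
    have heq : (k * c x * c x - s x * (k * s x)) / c x ^ 2 = k / c x ^ 2 := by
      have hid : c x ^ 2 - s x ^ 2 = 1 := Real.cosh_sq_sub_sinh_sq (k * x)
      rw [show k * c x * c x - s x * (k * s x) = k * (c x ^ 2 - s x ^ 2) by ring, hid, mul_one]
    rwa [heq] at h
  have hdg : ∀ x, HasDerivAt g (g' x) x := by
    intro x
    have h1 : HasDerivAt (fun y => k * (s y / c y)) (k * (k / c x ^ 2)) x :=
      (hsc x).const_mul k
    have h2 : HasDerivAt (fun y => u y ^ 2) (2 * u x * deriv u x) x := hasDerivAt_sq hu x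
    exact h1.mul h2
  have hcC : Continuous c := Real.continuous_cosh.comp (continuous_const.mul continuous_id)
  have hsC : Continuous s := Real.continuous_sinh.comp (continuous_const.mul continuous_id)
  have hg'C : Continuous g' := by
    apply Continuous.add
    · exact ((continuous_const.mul (continuous_const.div (hcC.pow 2) (fun x => pow_ne_zero 2 (hcne x)))).mul ((hu.continuous).pow 2))
    · exact ((continuous_const.mul (hsC.div hcC hcne)).mul
        ((continuous_const.mul (hu.continuous)).mul (hu.continuous_deriv le_rfl)))
  have hftc : ∫ x in (-R)..R, g' x = g R - g (-R) :=
    intervalIntegral.integral_eq_sub_of_hasDerivAt (fun x _ => hdg x)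
      (hg'C.intervalIntegrable _ _)
  -- pointwise nonnegativity
  have hpt : ∀ x, 0 ≤ (deriv u x) ^ 2 + k ^ 2 * u x ^ 2 - g' x := by
    intro x
    have hid : c x ^ 2 - s x ^ 2 = 1 := Real.cosh_sq_sub_sinh_sq (k * x)
    have hsqr : (deriv u x) ^ 2 + k ^ 2 * u x ^ 2 - g' x
        = (deriv u x - k * (s x / c x) * u x) ^ 2 := by
      simp only [hg'def]
      have hcc : c x * (c x)⁻¹ = 1 := mul_inv_cancel₀ (hcne x)
      linear_combination (k ^ 2 * u x ^ 2 / c x ^ 2) * hid - (k ^ 2 * u x ^ 2 * (c x * (c x)⁻¹ + 1)) * hcc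
    rw [hsqr]; exact sq_nonneg _
  have hint : 0 ≤ ∫ x in (-R)..R, ((deriv u x) ^ 2 + k ^ 2 * u x ^ 2 - g' x) :=
    intervalIntegral.integral_nonneg hRR (fun x _ => hpt x)
  have hIdC : Continuous (fun x => (deriv u x) ^ 2) := (hu.continuous_deriv le_rfl).pow 2
  have hI2C : Continuous (fun x => u x ^ 2) := (hu.continuous).pow 2
  have hsplit : ∫ x in (-R)..R, ((deriv u x) ^ 2 + k ^ 2 * u x ^ 2 - g' x)
      = (∫ x in (-R)..R, (deriv u x) ^ 2) + k ^ 2 * (∫ x in (-R)..R, u x ^ 2)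
        - ∫ x in (-R)..R, g' x := by
    rw [intervalIntegral.integral_sub (f := fun x => deriv u x ^ 2 + k ^ 2 * u x ^ 2) (g := g') (((hIdC.add (continuous_const.mul hI2C))).intervalIntegrable _ _)
      (hg'C.intervalIntegrable _ _),
      intervalIntegral.integral_add (f := fun x => deriv u x ^ 2) (g := fun x => k ^ 2 * u x ^ 2) (hIdC.intervalIntegrable _ _)
      ((continuous_const.mul hI2C).intervalIntegrable _ _),
      intervalIntegral.integral_const_mul]
  -- boundary values
  have hgR : g R - g (-R) = k * (s R / c R) * (u (-R) ^ 2 + u R ^ 2) := by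
    have h1 : s (-R) = -s R := by simp [hs, mul_neg]
    have h2 : c (-R) = c R := by simp [hc, mul_neg]
    simp only [hgdef]
    rw [h1, h2]; ring
  have hbd' : -α ≤ k * (s R / c R) := by
    rw [mul_div_assoc', le_div_iff₀ (hcpos R)]
    linarith [hbd]
  rw [hsplit, hftc, hgR] at hint
  have hsum : (0:ℝ) ≤ u (-R) ^ 2 + u R ^ 2 := by positivity
  have hmul := mul_le_mul_of_nonneg_right hbd' hsum
  linarith [hint, hmul]

lemma hasDerivAt_linear (k x : ℝ) : HasDerivAt (fun y : ℝ => k * y) k x := by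
  simpa using (hasDerivAt_id x).const_mul k

lemma integral_cosh_sq {k : ℝ} (hk : k ≠ 0) (R : ℝ) :
    ∫ x in (-R)..R, Real.cosh (k * x) ^ 2 = Real.sinh (2 * k * R) / (2 * k) + R := by
  have h : ∀ x ∈ Set.uIcc (-R) R, HasDerivAt (fun y => Real.sinh (2 * k * y) / (4 * k) + y / 2)
      (Real.cosh (k * x) ^ 2) x := by
    intro x _
    have h2 : HasDerivAt (fun y => Real.sinh (2 * k * y)) (Real.cosh (2 * k * x) * (2 * k)) x :=
      (Real.hasDerivAt_sinh _).comp x (hasDerivAt_linear (2 * k) x)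
    have h3 := (h2.div_const (4 * k)).add ((hasDerivAt_id x).div_const 2)
    have he : Real.cosh (2 * k * x) * (2 * k) / (4 * k) + 1 / 2 = Real.cosh (k * x) ^ 2 := by
      have harg : (2:ℝ) * k * x = 2 * (k * x) := by ring
      have hc2 : Real.cosh (2 * (k * x)) = Real.cosh (k * x) ^ 2 + Real.sinh (k * x) ^ 2 :=
        Real.cosh_two_mul _
      have hs2 : Real.sinh (k * x) ^ 2 = Real.cosh (k * x) ^ 2 - 1 := Real.sinh_sq _
      rw [harg, hc2, hs2]
      field_simp
      ring
    rw [← he]; exact h3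
  rw [intervalIntegral.integral_eq_sub_of_hasDerivAt h
    (((Real.continuous_cosh.comp (continuous_const.mul continuous_id)).pow 2).intervalIntegrable _ _)]
  have hneg : Real.sinh (2 * k * (-R)) = - Real.sinh (2 * k * R) := by
    rw [mul_neg, Real.sinh_neg]
  rw [hneg]
  field_simp
  ring

lemma integral_sinh_sq {k : ℝ} (hk : k ≠ 0) (R : ℝ) :
    ∫ x in (-R)..R, (k * Real.sinh (k * x)) ^ 2
      = k * Real.sinh (2 * k * R) / 2 - k ^ 2 * R := by
  have h : ∀ x ∈ Set.uIcc (-R) R,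
      HasDerivAt (fun y => k * Real.sinh (2 * k * y) / 4 - k ^ 2 * y / 2)
      ((k * Real.sinh (k * x)) ^ 2) x := by
    intro x _
    have h2 : HasDerivAt (fun y => Real.sinh (2 * k * y)) (Real.cosh (2 * k * x) * (2 * k)) x :=
      (Real.hasDerivAt_sinh _).comp x (hasDerivAt_linear (2 * k) x)
    have h3 := ((h2.const_mul k).div_const 4).sub (((hasDerivAt_id x).const_mul (k ^ 2)).div_const 2)
    have he : k * (Real.cosh (2 * k * x) * (2 * k)) / 4 - k ^ 2 * 1 / 2
        = (k * Real.sinh (k * x)) ^ 2 := by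
      have harg : (2:ℝ) * k * x = 2 * (k * x) := by ring
      have hc2 : Real.cosh (2 * (k * x)) = Real.cosh (k * x) ^ 2 + Real.sinh (k * x) ^ 2 :=
        Real.cosh_two_mul _
      have hs2 : Real.sinh (k * x) ^ 2 = Real.cosh (k * x) ^ 2 - 1 := Real.sinh_sq _
      rw [harg, hc2]
      nlinarith [hs2]
    rw [← he]; exact h3
  rw [intervalIntegral.integral_eq_sub_of_hasDerivAt h
    (((continuous_const.mul (Real.continuous_sinh.comp (continuous_const.mul continuous_id))).pow 2).intervalIntegrable _ _)]
  have hneg : Real.sinh (2 * k * (-R)) = - Real.sinh (2 * k * R) := by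
    rw [mul_neg, Real.sinh_neg]
  rw [hneg]
  field_simp
  ring

lemma bddBelow_S {α R : ℝ} (hα : α < 0) (hR : 0 < R) :
    BddBelow { q : ℝ | ∃ u : ℝ → ℝ, ContDiff ℝ 1 u ∧ (∫ x in (-R)..R, (u x) ^ 2) ≠ 0 ∧
      q = ((∫ x in (-R)..R, (deriv u x) ^ 2) + α * ((u (-R)) ^ 2 + (u R) ^ 2)) /
        (∫ x in (-R)..R, (u x) ^ 2) } := by
  refine ⟨α / R - 4 * α ^ 2, ?_⟩
  rintro q ⟨u, hu, hne, rfl⟩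
  have hD := sq_integral_pos hu.continuous hR hne
  rw [le_div_iff₀ hD]
  exact lower_small hα hR hu

lemma const_mem {α R : ℝ} (hR : 0 < R) :
    (α / R) ∈ { q : ℝ | ∃ u : ℝ → ℝ, ContDiff ℝ 1 u ∧ (∫ x in (-R)..R, (u x) ^ 2) ≠ 0 ∧
      q = ((∫ x in (-R)..R, (deriv u x) ^ 2) + α * ((u (-R)) ^ 2 + (u R) ^ 2)) /
        (∫ x in (-R)..R, (u x) ^ 2) } := by
  refine ⟨fun _ => (1:ℝ), contDiff_const, ?_, ?_⟩
  · simp only [one_pow, intervalIntegral.integral_const, smul_eq_mul, mul_one]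
    intro h
    have : R - -R = 2 * R := by ring
    rw [this] at h
    linarith [h]
  · have hd : deriv (fun _ : ℝ => (1:ℝ)) = fun _ => (0:ℝ) := by
      funext x; simp
    rw [hd]
    simp only [one_pow, intervalIntegral.integral_const, smul_eq_mul, mul_one, mul_zero]
    have hRne : R ≠ 0 := ne_of_gt hR
    have h2R : R - -R = 2 * R := by ring
    rw [h2R]
    field_simp
    ring

lemma lam1_le_const {α R : ℝ} (hα : α < 0) (hR : 0 < R) : lam1Int α (-R) R ≤ α / R :=
  csInf_le (bddBelow_S hα hR) (const_mem hR)

lemma lam1_ge {α R L : ℝ} (hR : 0 < R)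
    (h : ∀ u : ℝ → ℝ, ContDiff ℝ 1 u → L * (∫ x in (-R)..R, u x ^ 2) ≤
      (∫ x in (-R)..R, (deriv u x) ^ 2) + α * (u (-R) ^ 2 + u R ^ 2)) :
    L ≤ lam1Int α (-R) R := by
  apply le_csInf
  · exact ⟨_, const_mem (α := α) hR⟩
  · rintro q ⟨u, hu, hne, rfl⟩
    rw [le_div_iff₀ (sq_integral_pos hu.continuous hR hne)]
    exact h u hu

lemma sinh_atTop : Filter.Tendsto Real.sinh Filter.atTop Filter.atTop := by
  have he : Real.sinh = fun x => (Real.exp x + -Real.exp (-x)) / 2 := by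
    funext x; rw [Real.sinh_eq]; ring
  rw [he]
  apply Filter.Tendsto.atTop_div_const (by norm_num : (0:ℝ) < 2)
  apply Filter.Tendsto.atTop_add Real.tendsto_exp_atTop
  have : Filter.Tendsto (fun x : ℝ => Real.exp (-x)) Filter.atTop (𝓝 0) :=
    Real.tendsto_exp_atBot.comp tendsto_neg_atTop_atBot
  simpa using this.neg

lemma lam1_le_cosh {α R k : ℝ} (hk : 0 < k) (hkα : α = -k) (hR : 0 < R) :
    lam1Int α (-R) R ≤ -k ^ 2 - 2 * k ^ 2 * (Real.exp (-(2 * k * R)) + 1)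
      / (Real.sinh (2 * k * R) + 2 * k * R) := by
  have hα : α < 0 := by rw [hkα]; linarith
  have hkne : k ≠ 0 := ne_of_gt hk
  set u : ℝ → ℝ := fun x => Real.cosh (k * x) with hu
  have huC : ContDiff ℝ 1 u := Real.contDiff_cosh.comp (contDiff_const.mul contDiff_id)
  have hS2pos : 0 < Real.sinh (2 * k * R) := by
    have := Real.sinh_strictMono (show (0:ℝ) < 2 * k * R by positivity)
    simpa using this
  have hD : (∫ x in (-R)..R, u x ^ 2) = Real.sinh (2 * k * R) / (2 * k) + R :=
    integral_cosh_sq hkne R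
  have hDpos : 0 < Real.sinh (2 * k * R) / (2 * k) + R := by positivity
  have hne : (∫ x in (-R)..R, u x ^ 2) ≠ 0 := by rw [hD]; exact ne_of_gt hDpos
  have hd : deriv u = fun x => k * Real.sinh (k * x) := by
    funext x
    have h := (Real.hasDerivAt_cosh (k * x)).comp x (hasDerivAt_linear k x)
    exact h.deriv.trans (mul_comm _ _)
  have hN : (∫ x in (-R)..R, (deriv u x) ^ 2) = k * Real.sinh (2 * k * R) / 2 - k ^ 2 * R := by
    rw [hd]; exact integral_sinh_sq hkne R
  have hmem : (((∫ x in (-R)..R, (deriv u x) ^ 2) + α * ((u (-R)) ^ 2 + (u R) ^ 2))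
      / (∫ x in (-R)..R, u x ^ 2)) ∈
      { q : ℝ | ∃ v : ℝ → ℝ, ContDiff ℝ 1 v ∧ (∫ x in (-R)..R, (v x) ^ 2) ≠ 0 ∧
        q = ((∫ x in (-R)..R, (deriv v x) ^ 2) + α * ((v (-R)) ^ 2 + (v R) ^ 2)) /
        (∫ x in (-R)..R, (v x) ^ 2) } := ⟨u, huC, hne, rfl⟩
  have hle := csInf_le (bddBelow_S hα hR) hmem
  refine le_trans hle (le_of_eq ?_)
  have huR : u R = Real.cosh (k * R) := rfl
  have humR : u (-R) = Real.cosh (k * R) := by simp [hu, mul_neg]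
  rw [hN, hD, huR, humR, hkα]
  have harg : (2:ℝ) * k * R = 2 * (k * R) := by ring
  have hcsq : Real.cosh (k * R) ^ 2 = (Real.cosh (2 * k * R) + 1) / 2 := by
    rw [harg, Real.cosh_two_mul]
    nlinarith [Real.sinh_sq (k * R)]
  have hE : Real.exp (-(2 * k * R)) = Real.cosh (2 * k * R) - Real.sinh (2 * k * R) :=
    (Real.cosh_sub_sinh _).symm
  have hden2 : (0:ℝ) < Real.sinh (2 * k * R) + 2 * k * R := by positivity
  rw [hcsq, hE]
  field_simp
  ring

lemma lam1_ge_hyp {α R : ℝ} (hα : α < 0) (hR : 0 < R) :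
    -(-α * (Real.cosh (-α * R) / Real.sinh (-α * R))) ^ 2 ≤ lam1Int α (-R) R := by
  set A : ℝ := -α * R with hA
  have hApos : 0 < A := mul_pos (by linarith) hR
  have hsA : 0 < Real.sinh A := by
    have := Real.sinh_strictMono hApos; simpa using this
  have hcA : 0 < Real.cosh A := Real.cosh_pos A
  set k : ℝ := -α * (Real.cosh A / Real.sinh A) with hk
  have hkpos : 0 < k := mul_pos (by linarith) (div_pos hcA hsA)
  apply lam1_ge hR
  intro u hu
  apply lower_hyp hR hkpos ?_ hu
  have hkge : -α ≤ k := by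
    have h1 : 1 ≤ Real.cosh A / Real.sinh A :=
      (one_le_div hsA).mpr (by nlinarith [Real.cosh_sub_sinh A, Real.exp_pos (-A)])
    nlinarith [h1]
  have hkRA : A ≤ k * R := by nlinarith [hkge]
  have hs_sub : 0 ≤ Real.sinh (k * R - A) := sinh_nonneg (by linarith)
  have hid : k * Real.sinh (k * R) + α * Real.cosh (k * R)
      = (-α) * (Real.sinh (k * R) * Real.cosh A - Real.cosh (k * R) * Real.sinh A)
        / Real.sinh A := by
    rw [hk]; field_simp; ring
  rw [hid, ← Real.sinh_sub]
  exact div_nonneg (mul_nonneg (by linarith) hs_sub) hsA.le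

end Lam1Aux



/-- For `α < 0`: `λ₁^α((−R,R)) = α/R + o(1/R)` as `R → 0+`, and
`λ₁^α((−R,R)) = −α² + o(1)` as `R → ∞`. -/
theorem lam1Int_asymptotics (α : ℝ) (hα : α < 0) :
    (fun R : ℝ => lam1Int α (-R) R - α / R) =o[𝓝[>] 0] (fun R : ℝ => 1 / R) ∧
    Tendsto (fun R : ℝ => lam1Int α (-R) R) atTop (𝓝 (-α ^ 2)) := by
  have hα0 : α ≠ 0 := ne_of_lt hα
  constructor
  · rw [isLittleO_iff]
    intro c hc
    have h4 : (0:ℝ) < 4 * α ^ 2 := by positivity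
    have hε : (0:ℝ) < c / (4 * α ^ 2) := div_pos hc h4
    filter_upwards [Ioo_mem_nhdsGT_of_mem (Set.mem_Ico.mpr ⟨le_refl 0, hε⟩)] with R hR
    obtain ⟨hR0, hRε⟩ := hR
    have hub : lam1Int α (-R) R ≤ α / R := Lam1Aux.lam1_le_const hα hR0
    have hlb : α / R - 4 * α ^ 2 ≤ lam1Int α (-R) R :=
      Lam1Aux.lam1_ge hR0 (fun u hu => Lam1Aux.lower_small hα hR0 hu)
    rw [Real.norm_eq_abs, Real.norm_eq_abs]
    have habs : |lam1Int α (-R) R - α / R| ≤ 4 * α ^ 2 := by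
      rw [abs_le]; constructor <;> linarith
    have h1R : |1 / R| = 1 / R := abs_of_pos (by positivity)
    rw [h1R]
    have hcR : 4 * α ^ 2 ≤ c * (1 / R) := by
      rw [mul_one_div, le_div_iff₀ hR0]
      have h' : R * (4 * α ^ 2) < c := (lt_div_iff₀ h4).mp hRε
      nlinarith
    linarith
  · set k : ℝ := -α with hkdef
    have hk : 0 < k := by rw [hkdef]; linarith
    have hlow : Tendsto (fun R : ℝ => -(-α * (Real.cosh (-α * R) / Real.sinh (-α * R))) ^ 2)
        atTop (𝓝 (-α ^ 2)) := by
      have hA : Tendsto (fun R : ℝ => -α * R) atTop atTop :=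
        tendsto_id.const_mul_atTop (by linarith)
      have hratio : Tendsto (fun x : ℝ => Real.cosh x / Real.sinh x) atTop (𝓝 1) := by
        have hfrac : Tendsto (fun x : ℝ => Real.exp (-x) / Real.sinh x) atTop (𝓝 0) := by
          have h0 : Tendsto (fun x : ℝ => Real.exp (-x)) atTop (𝓝 0) :=
            Real.tendsto_exp_atBot.comp tendsto_neg_atTop_atBot
          exact h0.div_atTop Lam1Aux.sinh_atTop
        have heq : ∀ᶠ x : ℝ in atTop, 1 + Real.exp (-x) / Real.sinh x
            = Real.cosh x / Real.sinh x := by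
          filter_upwards [eventually_gt_atTop 0] with x hx
          have hs : 0 < Real.sinh x := by
            have := Real.sinh_strictMono hx; simpa using this
          have hcs : Real.cosh x = Real.sinh x + Real.exp (-x) := by
            have := Real.cosh_sub_sinh x; linarith
          rw [hcs]; field_simp
        have hadd : Tendsto (fun x : ℝ => 1 + Real.exp (-x) / Real.sinh x) atTop (𝓝 (1 + 0)) :=
          tendsto_const_nhds.add hfrac
        simp only [add_zero] at hadd
        exact Tendsto.congr' heq hadd
      have hcomp : Tendsto (fun R : ℝ => Real.cosh (-α * R) / Real.sinh (-α * R)) atTop (𝓝 1) :=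
        hratio.comp hA
      have hfin := ((hcomp.const_mul (-α)).pow 2).neg
      simpa [neg_sq] using hfin
    have hup : Tendsto (fun R : ℝ => -k ^ 2 - 2 * k ^ 2 * (Real.exp (-(2 * k * R)) + 1)
        / (Real.sinh (2 * k * R) + 2 * k * R)) atTop (𝓝 (-α ^ 2)) := by
      have h2k : Tendsto (fun R : ℝ => 2 * k * R) atTop atTop :=
        tendsto_id.const_mul_atTop (by positivity)
      have hexp : Tendsto (fun R : ℝ => Real.exp (-(2 * k * R))) atTop (𝓝 0) :=
        (Real.tendsto_exp_atBot.comp tendsto_neg_atTop_atBot).comp h2k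
      have hnum : Tendsto (fun R : ℝ => 2 * k ^ 2 * (Real.exp (-(2 * k * R)) + 1)) atTop
          (𝓝 (2 * k ^ 2)) := by
        have h' : Tendsto (fun R : ℝ => 2 * k ^ 2 * (Real.exp (-(2 * k * R)) + 1)) atTop
            (𝓝 (2 * k ^ 2 * (0 + 1))) :=
          (hexp.add tendsto_const_nhds).const_mul (2 * k ^ 2)
        simpa using h'
      have hden : Tendsto (fun R : ℝ => Real.sinh (2 * k * R) + 2 * k * R) atTop atTop :=
        Tendsto.atTop_add_atTop (Lam1Aux.sinh_atTop.comp h2k) h2k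
      have hfrac := hnum.div_atTop hden
      have hsub : Tendsto (fun R : ℝ => -k ^ 2 - 2 * k ^ 2 * (Real.exp (-(2 * k * R)) + 1)
          / (Real.sinh (2 * k * R) + 2 * k * R)) atTop (𝓝 (-k ^ 2 - 0)) :=
        tendsto_const_nhds.sub hfrac
      have hkk : -k ^ 2 = -α ^ 2 := by rw [hkdef]; ring
      simpa [hkk] using hsub
    apply tendsto_of_tendsto_of_tendsto_of_le_of_le' hlow hup
    · filter_upwards [eventually_gt_atTop 0] with R hR0
      exact Lam1Aux.lam1_ge_hyp hα hR0
    · filter_upwards [eventually_gt_atTop 0] with R hR0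
      exact Lam1Aux.lam1_le_cosh hk (by rw [hkdef]; ring) hR0
end
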